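/- arXiv:1108.2974 — 12 statements merged into one kernel-verified Lean document; each statement's English description precedes it below -/
import Mathlib

section
/- Let F be the synchronous bi-threshold map on {0,1}^n determined by a real symmetric n×n matrix A and up- /down-threshold sequences (k↑_i), (k↓_i). Then for every x ∈ {0,1}^n there exists a natural number s such that F^{s+2}(x) = F^{s}(x). -/
namespace BiThresh

variable {n : ℕ}

noncomputable def Xb (b : Bool) : ℝ := if b = true then 1 else 0

noncomputable def SS (A : Fin n → Fin n → ℝ) (v : Fin n → Bool) (i : Fin n) : ℝ :=
  ∑ j, A i j * Xb (v j)

noncomputable def th (kup kdown : Fin n → ℝ) (i : Fin n) (b : Bool) : ℝ :=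
  if b = true then kdown i else kup i

noncomputable def hh (kup : Fin n → ℝ) (i : Fin n) (b : Bool) : ℝ :=
  if b = true then kup i else 0

noncomputable def En (A : Fin n → Fin n → ℝ) (kup kdown : Fin n → ℝ)
    (u v : Fin n → Bool) : ℝ :=
  ∑ i, (-(Xb (v i) * SS A u i) + (Xb (v i) * th kup kdown i (u i) + hh kup i (u i)))

lemma swap {A : Fin n → Fin n → ℝ} (hA : ∀ i j, A i j = A j i) (u v : Fin n → Bool) :
    ∑ i, Xb (v i) * SS A u i = ∑ i, Xb (u i) * SS A v i := by
  unfold SS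
  simp only [Finset.mul_sum]
  rw [Finset.sum_comm]
  refine Finset.sum_congr rfl fun i _ => Finset.sum_congr rfl fun j _ => ?_
  rw [hA]; ring

lemma En_eq {A : Fin n → Fin n → ℝ} (hA : ∀ i j, A i j = A j i) (kup kdown : Fin n → ℝ)
    (u v : Fin n → Bool) :
    En A kup kdown u v =
      ∑ i, (-(Xb (u i) * SS A v i) + (Xb (v i) * th kup kdown i (u i) + hh kup i (u i))) := by
  unfold En
  simp only [Finset.sum_add_distrib, Finset.sum_neg_distrib]
  rw [swap hA]

lemma diff {A : Fin n → Fin n → ℝ} (hA : ∀ i j, A i j = A j i) (kup kdown : Fin n → ℝ)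
    (u v w : Fin n → Bool) :
    En A kup kdown u v - En A kup kdown v w
      = ∑ i, (Xb (w i) - Xb (u i)) * (SS A v i - th kup kdown i (v i)) := by
  rw [En_eq hA kup kdown u v]
  unfold En
  rw [← Finset.sum_sub_distrib]
  refine Finset.sum_congr rfl fun i _ => ?_
  cases hu : u i <;> cases hv : v i <;> cases hw : w i <;> simp [Xb, th, hh] <;> ring

end BiThresh
/-- the synchronous bi-threshold map determined by a real symmetric matrix `A`
and up and down threshold sequences `kup`, `kdown`; every state eventually satisfies
`F^[s+2] x = F^[s] x`. The map `F` is characterized by: the new state of coordinate `i`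
is `1` iff (`x i = 0` and the weighted sum is `≥ kup i`) or (`x i = 1` and the weighted
sum is `≥ kdown i`). -/
theorem bithreshold_sync_two_periodic
    (n : ℕ) (A : Fin n → Fin n → ℝ) (hA : ∀ i j, A i j = A j i)
    (kup kdown : Fin n → ℝ)
    (F : (Fin n → Bool) → Fin n → Bool)
    (hF : ∀ (x : Fin n → Bool) (i : Fin n), F x i = true ↔
      ((x i = false ∧ kup i ≤ ∑ j, A i j * (if x j = true then (1 : ℝ) else 0)) ∨
       (x i = true ∧ kdown i ≤ ∑ j, A i j * (if x j = true then (1 : ℝ) else 0)))) :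
    ∀ x : Fin n → Bool, ∃ s : ℕ, F^[s + 2] x = F^[s] x := by
  classical
  intro x
  open BiThresh in
  -- threshold characterization of F
  have hFiff : ∀ (v : Fin n → Bool) (i : Fin n),
      F v i = true ↔ BiThresh.th kup kdown i (v i) ≤ BiThresh.SS A v i := by
    intro v i
    rw [hF]
    cases hv : v i <;> simp [BiThresh.th, BiThresh.SS, BiThresh.Xb, hv]
  -- key energy step
  have hterm : ∀ (u : Fin n → Bool) (i : Fin n),
      0 ≤ (BiThresh.Xb (F (F u) i) - BiThresh.Xb (u i)) *
        (BiThresh.SS A (F u) i - BiThresh.th kup kdown i (F u i)) := by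
    intro u i
    cases hw : F (F u) i
    · have hS : BiThresh.SS A (F u) i < BiThresh.th kup kdown i (F u i) := by
        have := (hFiff (F u) i)
        rw [hw] at this
        have h2 : ¬ (BiThresh.th kup kdown i (F u i) ≤ BiThresh.SS A (F u) i) := by
          intro h; exact absurd (this.mpr h) (by simp)
        exact not_le.mp h2
      cases hu : u i <;> simp [BiThresh.Xb] <;> nlinarith
    · have hS : BiThresh.th kup kdown i (F u i) ≤ BiThresh.SS A (F u) i :=
        (hFiff (F u) i).mp hw
      cases hu : u i <;> simp [BiThresh.Xb] <;> nlinarith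
  have hstep : ∀ u : Fin n → Bool,
      BiThresh.En A kup kdown (F u) (F (F u)) ≤ BiThresh.En A kup kdown u (F u) := by
    intro u
    have hd := BiThresh.diff hA kup kdown u (F u) (F (F u))
    have h0 : 0 ≤ BiThresh.En A kup kdown u (F u) -
        BiThresh.En A kup kdown (F u) (F (F u)) := by
      rw [hd]; exact Finset.sum_nonneg fun i _ => hterm u i
    linarith
  have hgrow0 : ∀ u : Fin n → Bool,
      BiThresh.En A kup kdown u (F u) ≤ BiThresh.En A kup kdown (F u) (F (F u)) →
      ∀ i, u i = true → F (F u) i = true := by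
    intro u heq i hui
    by_contra hwi
    have hwf : F (F u) i = false := by simpa using hwi
    have hS : BiThresh.SS A (F u) i < BiThresh.th kup kdown i (F u i) := by
      have := (hFiff (F u) i)
      rw [hwf] at this
      have h2 : ¬ (BiThresh.th kup kdown i (F u i) ≤ BiThresh.SS A (F u) i) := by
        intro h; exact absurd (this.mpr h) (by simp)
      exact not_le.mp h2
    have hpos : 0 < (BiThresh.Xb (F (F u) i) - BiThresh.Xb (u i)) *
        (BiThresh.SS A (F u) i - BiThresh.th kup kdown i (F u i)) := by
      simp [BiThresh.Xb, hwf, hui]; nlinarith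
    have hd := BiThresh.diff hA kup kdown u (F u) (F (F u))
    have hsum : 0 < BiThresh.En A kup kdown u (F u) -
        BiThresh.En A kup kdown (F u) (F (F u)) := by
      rw [hd]
      exact Finset.sum_pos' (fun j _ => hterm u j) ⟨i, Finset.mem_univ i, hpos⟩
    linarith
  -- dynamics
  set y : ℕ → (Fin n → Bool) := fun t => F^[t] x with hy
  have hy1 : ∀ t, y (t + 1) = F (y t) := by
    intro t; simp [hy, Function.iterate_succ_apply']
  have hy2 : ∀ t, y (t + 2) = F (F (y t)) := by
    intro t
    have : t + 2 = (t + 1) + 1 := rfl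
    rw [this, hy1, hy1]
  have hyadd : ∀ a k, y (a + k) = F^[k] (y a) := by
    intro a k
    simp [hy, Nat.add_comm a k, Function.iterate_add_apply]
  set e : ℕ → ℝ := fun t => BiThresh.En A kup kdown (y t) (y (t + 1)) with he
  have emono : ∀ t, e (t + 1) ≤ e t := by
    intro t
    have := hstep (y t)
    simp only [he]
    rw [hy2, hy1]
    exact this
  have eanti : ∀ s t, s ≤ t → e t ≤ e s := by
    intro s t hst
    induction t with
    | zero => simp_all
    | succ t ih =>
      rcases Nat.lt_or_ge s (t + 1) with h | h
      · exact le_trans (emono t) (ih (Nat.lt_succ_iff.mp h))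
      · have : s = t + 1 := le_antisymm hst h
        simp [this]
  -- e has finite range, so attains its minimum
  have hfin : (Set.range e).Finite := by
    have h1 : Set.range e ⊆ Set.range
        (fun p : (Fin n → Bool) × (Fin n → Bool) => BiThresh.En A kup kdown p.1 p.2) := by
      rintro _ ⟨t, rfl⟩
      exact ⟨(y t, y (t + 1)), rfl⟩
    exact (Set.finite_range _).subset h1
  obtain ⟨m, hm_mem, hmin⟩ := Set.exists_min_image (Set.range e) id hfin ⟨e 0, ⟨0, rfl⟩⟩
  obtain ⟨s0, hs0⟩ := hm_mem
  have hconst : ∀ t, s0 ≤ t → e t = e s0 := by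
    intro t ht
    have h1 : e t ≤ e s0 := eanti s0 t ht
    have h2 : e s0 ≤ e t := by
      have := hmin (e t) ⟨t, rfl⟩
      simp only [id] at this
      rw [hs0]; exact this
    linarith
  -- from s0 on, states grow along steps of 2
  have hgrow : ∀ t, s0 ≤ t → ∀ i, y t i = true → y (t + 2) i = true := by
    intro t ht i hti
    have heq : e t ≤ e (t + 1) := by
      rw [hconst t ht, hconst (t + 1) (le_trans ht (Nat.le_succ t))]
    have heq' : BiThresh.En A kup kdown (y t) (F (y t)) ≤
        BiThresh.En A kup kdown (F (y t)) (F (F (y t))) := by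
      simpa only [he, hy1, hy2] using heq
    have := hgrow0 (y t) heq' i hti
    rw [hy2]; exact this
  have hchain : ∀ t, s0 ≤ t → ∀ m i, y t i = true → y (t + 2 * m) i = true := by
    intro t ht m
    induction m with
    | zero => intro i h; simpa using h
    | succ m ih =>
      intro i h
      have h1 := ih i h
      have h2 := hgrow (t + 2 * m) (le_trans ht (Nat.le_add_right t (2 * m))) i h1
      have : t + 2 * (m + 1) = t + 2 * m + 2 := by ring
      rw [this]; exact h2
  -- eventual periodicity by pigeonhole
  obtain ⟨a, b, hne, hab⟩ := Finite.exists_ne_map_eq_of_infinite y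
  wlog hlt : a < b generalizing a b
  · exact this b a hne.symm hab.symm (by omega)
  set p : ℕ := b - a with hp
  have hp1 : 1 ≤ p := by omega
  have hapb : a + p = b := by omega
  have hperiod : ∀ t, a ≤ t → y (t + p) = y t := by
    intro t hat
    obtain ⟨k, rfl⟩ := Nat.exists_eq_add_of_le hat
    have h1 : a + k + p = a + (k + p) := by ring
    rw [h1, hyadd a (k + p), Function.iterate_add_apply]
    have h2 : F^[p] (y a) = y (a + p) := (hyadd a p).symm
    rw [h2, hapb, ← hab, ← hyadd a k]
  set s : ℕ := max s0 a with hs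
  have hsa : a ≤ s := le_max_right _ _
  have hss0 : s0 ≤ s := le_max_left _ _
  have h2p : y (s + 2 * p) = y s := by
    have e1 : s + 2 * p = (s + p) + p := by ring
    rw [e1, hperiod (s + p) (by omega), hperiod s hsa]
  refine ⟨s, ?_⟩
  have goal : y (s + 2) = y s := by
    funext i
    cases hsi : y s i
    · cases h2i : y (s + 2) i
      · rfl
      · exfalso
        have h3 := hchain (s + 2) (by omega) (p - 1) i h2i
        have e2 : s + 2 + 2 * (p - 1) = s + 2 * p := by omega
        rw [e2, h2p, hsi] at h3
        exact Bool.noConfusion h3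
    · exact hgrow s hss0 i hsi
  exact goal
end

section
/- Let X be a finite undirected simple graph on vertex set {1,…,n} with bi-threshold vertex functions (with arbitrary per-vertex up- and down-thresholds), and let F : {0,1}^n → {0,1}^n be the synchronous map F(x)_v = f_v(x[v]) applying all vertex functions simultaneously. Then every periodic point of F has period 1 or 2; that is, F may only have fixed points and 2-cycles as limit sets. -/
/-- `σ(x[v])`: the number of vertices in state `1` among `v` and its neighbors. -/
noncomputable def sigmaLoc {n : ℕ} (G : SimpleGraph (Fin n)) (x : Fin n → Bool) (v : Fin n) : ℕ :=
  {u : Fin n | G.Adj v u ∧ x u = true}.ncard + (if x v = true then 1 else 0)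

/-- The `X`-local bi-threshold function `F_v`: updates coordinate `v` of `x` by the
bi-threshold rule with up-threshold `kup v` and down-threshold `kdown v`, leaving all other
coordinates unchanged. -/
noncomputable def localStep {n : ℕ} (G : SimpleGraph (Fin n)) (kup kdown : Fin n → ℕ)
    (x : Fin n → Bool) (v : Fin n) : Fin n → Bool :=
  Function.update x v
    (if x v = true then (if sigmaLoc G x v < kdown v then false else true)
     else (if kup v ≤ sigmaLoc G x v then true else false))

/-- The sequential dynamical system map for the update sequence `l`:
apply the local functions `F_v` in the order given by `l`. -/
noncomputable def sdsMap {n : ℕ} (G : SimpleGraph (Fin n)) (kup kdown : Fin n → ℕ)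
    (l : List (Fin n)) (x : Fin n → Bool) : Fin n → Bool :=
  l.foldl (localStep G kup kdown) x

/-- The synchronous bi-threshold map over the graph `G`: all vertex functions are applied
simultaneously. -/
noncomputable def syncMap {n : ℕ} (G : SimpleGraph (Fin n)) (kup kdown : Fin n → ℕ)
    (x : Fin n → Bool) : Fin n → Bool := fun v =>
  if x v = true then (if sigmaLoc G x v < kdown v then false else true)
  else (if kup v ≤ sigmaLoc G x v then true else false)

namespace BTAux

open Finset

/-- Integer indicator of a Boolean. -/
def ι (b : Bool) : ℤ := if b then 1 else 0

open Classical in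
/-- Symmetric weight matrix: adjacency plus diagonal self-weight `kup v - kdown v + 1`. -/
noncomputable def w {n : ℕ} (G : SimpleGraph (Fin n)) (kup kdown : Fin n → ℕ)
    (v u : Fin n) : ℤ :=
  (if G.Adj v u then 1 else 0) + (if v = u then (kup v : ℤ) - kdown v + 1 else 0)

/-- The weighted local field. -/
noncomputable def Sval {n : ℕ} (G : SimpleGraph (Fin n)) (kup kdown : Fin n → ℕ)
    (x : Fin n → Bool) (v : Fin n) : ℤ :=
  ∑ u, w G kup kdown v u * ι (x u)

lemma w_symm {n : ℕ} (G : SimpleGraph (Fin n)) (kup kdown : Fin n → ℕ) (v u : Fin n) :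
    w G kup kdown v u = w G kup kdown u v := by
  classical
  unfold w
  by_cases h : v = u
  · subst h; rfl
  · rw [if_neg h, if_neg (Ne.symm h), G.adj_comm]

open Classical in
lemma sum_adj {n : ℕ} (G : SimpleGraph (Fin n)) (x : Fin n → Bool) (v : Fin n) :
    ∑ u, (if G.Adj v u then ι (x u) else 0)
      = ({u : Fin n | G.Adj v u ∧ x u = true}.ncard : ℤ) := by
  classical
  rw [Set.ncard_eq_toFinset_card', Set.toFinset_setOf, Finset.card_filter]
  push_cast
  refine Finset.sum_congr rfl fun u _ => ?_
  by_cases h : G.Adj v u <;> by_cases hx : x u <;> simp [ι, h, hx]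

lemma Sval_eq {n : ℕ} (G : SimpleGraph (Fin n)) (kup kdown : Fin n → ℕ)
    (x : Fin n → Bool) (v : Fin n) :
    Sval G kup kdown x v
      = ({u : Fin n | G.Adj v u ∧ x u = true}.ncard : ℤ)
        + (if x v = true then (kup v : ℤ) - kdown v + 1 else 0) := by
  classical
  unfold Sval w
  rw [show (∑ u, ((if G.Adj v u then (1:ℤ) else 0)
        + (if v = u then (kup v : ℤ) - kdown v + 1 else 0)) * ι (x u))
      = ∑ u, ((if G.Adj v u then ι (x u) else 0)
        + (if v = u then ((kup v : ℤ) - kdown v + 1) * ι (x u) else 0)) from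
    Finset.sum_congr rfl fun u _ => by
      by_cases h : G.Adj v u <;> by_cases h' : v = u <;> simp [h, h'] <;> ring]
  rw [Finset.sum_add_distrib, sum_adj, Finset.sum_ite_eq]
  simp only [Finset.mem_univ, if_true]
  congr 1
  by_cases hx : x v = true <;> simp [ι, hx]

lemma sync_iff {n : ℕ} (G : SimpleGraph (Fin n)) (kup kdown : Fin n → ℕ)
    (x : Fin n → Bool) (v : Fin n) :
    syncMap G kup kdown x v = true ↔ (kup v : ℤ) ≤ Sval G kup kdown x v := by
  classical
  rw [Sval_eq]
  unfold syncMap sigmaLoc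
  set s := ({u : Fin n | G.Adj v u ∧ x u = true}.ncard) with hs
  cases hxv : x v with
  | false =>
    simp only [hxv, Bool.false_eq_true, if_false, add_zero]
    split_ifs with h
    · simp only [true_iff]; exact_mod_cast h
    · simp only [Bool.false_eq_true, false_iff]
      push_cast
      omega
  | true =>
    simp only [hxv, if_true]
    split_ifs with h
    · simp only [Bool.false_eq_true, false_iff]
      push_cast
      omega
    · simp only [true_iff]
      push_cast
      omega

/-- The energy functional. -/
noncomputable def E {n : ℕ} (G : SimpleGraph (Fin n)) (kup kdown : Fin n → ℕ)
    (x y : Fin n → Bool) : ℤ :=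
  ∑ v, (-2 * ι (x v) * Sval G kup kdown y v
        + (2 * (kup v : ℤ) - 1) * (ι (x v) + ι (y v)))

lemma field_symm {n : ℕ} (G : SimpleGraph (Fin n)) (kup kdown : Fin n → ℕ)
    (x y : Fin n → Bool) :
    ∑ v, ι (x v) * Sval G kup kdown y v = ∑ v, ι (y v) * Sval G kup kdown x v := by
  simp only [Sval, Finset.mul_sum]
  rw [Finset.sum_comm]
  refine Finset.sum_congr rfl fun v _ => Finset.sum_congr rfl fun u _ => ?_
  rw [w_symm G kup kdown u v]
  ring

lemma E_diff {n : ℕ} (G : SimpleGraph (Fin n)) (kup kdown : Fin n → ℕ)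
    (x y z : Fin n → Bool) :
    E G kup kdown y x - E G kup kdown z y
      = ∑ v, (ι (z v) - ι (x v)) * (2 * Sval G kup kdown y v - (2 * (kup v : ℤ) - 1)) := by
  have hsplit : ∀ (a c : Fin n → Bool), (∑ v, (-2 * ι (a v) * Sval G kup kdown c v
        + (2 * (kup v : ℤ) - 1) * (ι (a v) + ι (c v))))
      = -2 * (∑ v, ι (a v) * Sval G kup kdown c v)
        + ∑ v, (2 * (kup v : ℤ) - 1) * (ι (a v) + ι (c v)) := by
    intro a c
    rw [Finset.mul_sum, ← Finset.sum_add_distrib]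
    exact Finset.sum_congr rfl fun v _ => by ring
  unfold E
  rw [hsplit y x, hsplit z y, field_symm G kup kdown y x]
  rw [show (∑ v, (ι (z v) - ι (x v)) * (2 * Sval G kup kdown y v - (2 * (kup v : ℤ) - 1)))
      = (∑ v, ((2 * (ι (z v) * Sval G kup kdown y v) - 2 * (ι (x v) * Sval G kup kdown y v))
          + ((2 * (kup v : ℤ) - 1) * (ι (y v) + ι (x v))
            - (2 * (kup v : ℤ) - 1) * (ι (z v) + ι (y v))))) from
    Finset.sum_congr rfl fun v _ => by ring]
  rw [Finset.sum_add_distrib, Finset.sum_sub_distrib, Finset.sum_sub_distrib,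
    ← Finset.mul_sum, ← Finset.mul_sum]
  ring

lemma term_nonneg {n : ℕ} (G : SimpleGraph (Fin n)) (kup kdown : Fin n → ℕ)
    (x y : Fin n → Bool) (v : Fin n) :
    0 ≤ (ι (syncMap G kup kdown y v) - ι (x v))
        * (2 * Sval G kup kdown y v - (2 * (kup v : ℤ) - 1))
    ∧ (syncMap G kup kdown y v ≠ x v →
      1 ≤ (ι (syncMap G kup kdown y v) - ι (x v))
        * (2 * Sval G kup kdown y v - (2 * (kup v : ℤ) - 1))) := by
  cases hF : syncMap G kup kdown y v with
  | true =>
    have h := (sync_iff G kup kdown y v).mp hF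
    cases hx : x v <;> simp [ι, hF, hx] <;> omega
  | false =>
    have h : ¬ ((kup v : ℤ) ≤ Sval G kup kdown y v) := fun hle => by
      rw [(sync_iff G kup kdown y v).mpr hle] at hF; exact Bool.noConfusion hF
    cases hx : x v <;> simp [ι, hF, hx] <;> omega

lemma E_step {n : ℕ} (G : SimpleGraph (Fin n)) (kup kdown : Fin n → ℕ)
    (x y : Fin n → Bool) :
    E G kup kdown (syncMap G kup kdown y) y ≤ E G kup kdown y x
    ∧ (syncMap G kup kdown y ≠ x →
        E G kup kdown (syncMap G kup kdown y) y < E G kup kdown y x) := by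
  have hd := E_diff G kup kdown x y (syncMap G kup kdown y)
  constructor
  · have h0 : (0:ℤ) ≤ ∑ v, (ι (syncMap G kup kdown y v) - ι (x v))
        * (2 * Sval G kup kdown y v - (2 * (kup v : ℤ) - 1)) :=
      Finset.sum_nonneg fun v _ => (term_nonneg G kup kdown x y v).1
    linarith
  · intro hne
    obtain ⟨v, hv⟩ := Function.ne_iff.mp hne
    have hlt : (0:ℤ) < ∑ v, (ι (syncMap G kup kdown y v) - ι (x v))
        * (2 * Sval G kup kdown y v - (2 * (kup v : ℤ) - 1)) := by
      have h := Finset.sum_lt_sum (f := fun _ : Fin n => (0:ℤ))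
        (g := fun v => (ι (syncMap G kup kdown y v) - ι (x v))
          * (2 * Sval G kup kdown y v - (2 * (kup v : ℤ) - 1)))
        (fun i _ => (term_nonneg G kup kdown x y i).1)
        ⟨v, Finset.mem_univ v,
          show (0:ℤ) < (ι (syncMap G kup kdown y v) - ι (x v))
            * (2 * Sval G kup kdown y v - (2 * (kup v : ℤ) - 1)) from by
          have := (term_nonneg G kup kdown x y v).2 hv; omega⟩
      simpa using h
    linarith

lemma two_cycle {n : ℕ} (G : SimpleGraph (Fin n)) (kup kdown : Fin n → ℕ)
    (x : Fin n → Bool) (p : ℕ) (hp : 0 < p)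
    (hper : (syncMap G kup kdown)^[p] x = x) :
    syncMap G kup kdown (syncMap G kup kdown x) = x := by
  by_contra hne
  set f := syncMap G kup kdown with hf
  set e : ℕ → ℤ := fun t => E G kup kdown (f^[t+1] x) (f^[t] x) with he
  have hstep : ∀ t, e (t+1) ≤ e t := by
    intro t
    have h1 : f^[t+1+1] x = f (f^[t+1] x) := Function.iterate_succ_apply' f (t+1) x
    have h := (E_step G kup kdown (f^[t] x) (f^[t+1] x)).1
    rw [← hf] at h
    show E G kup kdown (f^[t+1+1] x) (f^[t+1] x) ≤ E G kup kdown (f^[t+1] x) (f^[t] x)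
    rw [h1]; exact h
  have hanti : Antitone e := antitone_nat_of_succ_le hstep
  have hep : e p = e 0 := by
    show E G kup kdown (f^[p+1] x) (f^[p] x) = E G kup kdown (f^[0+1] x) (f^[0] x)
    rw [Function.iterate_succ_apply' f p x, hper]
    simp
  have h1le : e 1 ≤ e 0 := hanti (Nat.zero_le 1)
  have hple : e p ≤ e 1 := hanti hp
  have h10 : e 1 = e 0 := le_antisymm h1le (by omega)
  have hlt := (E_step G kup kdown x (syncMap G kup kdown x)).2 hne
  rw [← hf] at hlt
  have e1 : e 1 = E G kup kdown (f (f x)) (f x) := by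
    show E G kup kdown (f^[1+1] x) (f^[1] x) = _
    rw [Function.iterate_succ_apply' f 1 x, Function.iterate_one]
  have e0 : e 0 = E G kup kdown (f x) x := by
    show E G kup kdown (f^[0+1] x) (f^[0] x) = _
    simp
  rw [← e1, ← e0] at hlt
  omega

end BTAux

/-- every periodic point of the synchronous bi-threshold map over a finite
graph has (least) period 1 or 2: fixed points and 2-cycles are the only limit sets. -/
theorem bithreshold_sync_period_one_or_two
    (n : ℕ) (G : SimpleGraph (Fin n)) (kup kdown : Fin n → ℕ)
    (x : Fin n → Bool) (p : ℕ) (hp : 0 < p)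
    (hper : (syncMap G kup kdown)^[p] x = x)
    (hmin : ∀ q : ℕ, 0 < q → (syncMap G kup kdown)^[q] x = x → p ≤ q) :
    p = 1 ∨ p = 2 := by
  have hFF := BTAux.two_cycle G kup kdown x p hp hper
  have h2 : (syncMap G kup kdown)^[2] x = x := by
    rw [show (2:ℕ) = 1 + 1 from rfl, Function.iterate_succ_apply',
      Function.iterate_one]
    exact hFF
  have := hmin 2 (by norm_num) h2
  omega
end

section
/- Let T ≥ 1 and let z : ℤ/Tℤ → {0,1} have least period at least 3. Let B be a band of z. Then either B contains (as subsets of indices) no block of type (0,1) and no block of type (1,0), or B contains exactly one block of type (0,1) and exactly one block of type (1,0). -/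
/-- `isBlock z l q` : the block of `z` starting at `l` has "half-length" `q`, i.e.
`z l = 1`, `z (l-2) = 0`, `q` is the least natural number with `z (l + 2q + 2) = 0`.
The block at `l` is then the index set `{l, l+2, …, l+2q}`. -/
def isBlock {T : ℕ} (z : ZMod T → Bool) (l : ZMod T) (q : ℕ) : Prop :=
  z l = true ∧ z (l - 2) = false ∧ z (l + ((2 * q + 2 : ℕ) : ZMod T)) = false ∧
    ∀ q' < q, z (l + ((2 * q' + 2 : ℕ) : ZMod T)) = true

/-- The set of indices `{l, l+2, …, l+2q}` of the block starting at `l`. -/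
def blockSet {T : ℕ} (l : ZMod T) (q : ℕ) : Set (ZMod T) :=
  {w | ∃ s ≤ q, w = l + ((2 * s : ℕ) : ZMod T)}

/-- The type of the block at `l` (with least `q`): the pair `(z (l-1), z (l+2q+1))`. -/
def blockType {T : ℕ} (z : ZMod T → Bool) (l : ZMod T) (q : ℕ) : Bool × Bool :=
  (z (l - 1), z (l + ((2 * q + 1 : ℕ) : ZMod T)))

/-- `isBand z a m` : the cyclic interval `{a, a+1, …, a+m}` is a band of `z`:
its endpoints are in state `1`, no two cyclically consecutive indices inside it are both
in state `0`, and the two indices on either side of it are in state `0`. -/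
def isBand {T : ℕ} (z : ZMod T → Bool) (a : ZMod T) (m : ℕ) : Prop :=
  z a = true ∧ z (a + ((m : ℕ) : ZMod T)) = true ∧
  (∀ i < m, ¬ (z (a + ((i : ℕ) : ZMod T)) = false ∧ z (a + ((i + 1 : ℕ) : ZMod T)) = false)) ∧
  z (a - 1) = false ∧ z (a - 2) = false ∧
  z (a + ((m + 1 : ℕ) : ZMod T)) = false ∧ z (a + ((m + 2 : ℕ) : ZMod T)) = false

/-- The set of indices `{a, a+1, …, a+m}` of the band. -/
def bandSet {T : ℕ} (a : ZMod T) (m : ℕ) : Set (ZMod T) :=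
  {w | ∃ i ≤ m, w = a + ((i : ℕ) : ZMod T)}

namespace BandBlockAux

lemma tf {C : Prop} {b : Bool} (h1 : b = true) (h2 : b = false) : C := by
  rw [h1] at h2; exact absurd h2 (by simp)

lemma bool_ne_false {b : Bool} (h : ¬ b = false) : b = true := by
  cases b
  · exact absurd rfl h
  · rfl

lemma cast_inj {T : ℕ} {i j : ℕ} (hi : i < T) (hj : j < T)
    (h : (i : ZMod T) = (j : ZMod T)) : i = j := by
  have : NeZero T := ⟨by omega⟩
  have h2 := congrArg ZMod.val h
  rwa [ZMod.val_cast_of_lt hi, ZMod.val_cast_of_lt hj] at h2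

lemma add_cast_inj {T : ℕ} {a : ZMod T} {i j : ℕ} (hi : i < T) (hj : j < T)
    (h : a + (i : ZMod T) = a + (j : ZMod T)) : i = j :=
  cast_inj hi hj (by exact add_left_cancel h)

lemma shift {T : ℕ} (a : ZMod T) (i k : ℕ) :
    a + ((i : ℕ) : ZMod T) + ((k : ℕ) : ZMod T) = a + ((i + k : ℕ) : ZMod T) := by
  push_cast; ring

lemma sub1 {T : ℕ} (a : ZMod T) {i : ℕ} (h : 1 ≤ i) :
    a + ((i : ℕ) : ZMod T) - 1 = a + ((i - 1 : ℕ) : ZMod T) := by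
  rw [Nat.cast_sub h]; push_cast; ring

lemma sub2 {T : ℕ} (a : ZMod T) {i : ℕ} (h : 2 ≤ i) :
    a + ((i : ℕ) : ZMod T) - 2 = a + ((i - 2 : ℕ) : ZMod T) := by
  rw [Nat.cast_sub h]; push_cast; ring

variable {T : ℕ} [NeZero T] {z : ZMod T → Bool} {a : ZMod T} {m : ℕ}

lemma band_T (hband : isBand z a m) : m + 3 ≤ T := by
  obtain ⟨h1, h2, h3, h4, h5, h6, h7⟩ := hband
  have hT1 : T ≠ 0 := NeZero.ne T
  have hT3 : 3 ≤ T := by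
    by_contra hc
    have hsub : a - 2 = a := by
      interval_cases T
      · omega
      · exact sub_eq_self.mpr (by decide)
      · exact sub_eq_self.mpr (by decide)
    rw [hsub] at h5
    exact tf h1 h5
  have hmT : m + 1 ≤ T := by
    by_contra hc
    push_neg at hc
    apply h3 (T - 2) (by omega)
    have e2 : a + ((T - 2 : ℕ) : ZMod T) = a - 2 := by
      rw [Nat.cast_sub (by omega : 2 ≤ T), ZMod.natCast_self]; push_cast; ring
    have e1 : a + ((T - 2 + 1 : ℕ) : ZMod T) = a - 1 := by
      rw [show T - 2 + 1 = T - 1 from by omega,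
        Nat.cast_sub (by omega : 1 ≤ T), ZMod.natCast_self]; push_cast; ring
    exact ⟨by rw [e2]; exact h5, by rw [e1]; exact h4⟩
  have hm2 : T ≠ m + 1 := by
    intro h
    rw [show ((m + 1 : ℕ) : ZMod T) = 0 from by rw [← h]; exact ZMod.natCast_self T,
      add_zero] at h6
    exact tf h1 h6
  have hm3 : T ≠ m + 2 := by
    intro h
    rw [show ((m + 2 : ℕ) : ZMod T) = 0 from by rw [← h]; exact ZMod.natCast_self T,
      add_zero] at h7
    exact tf h1 h7
  omega

lemma no2 (hband : isBand z a m) {i : ℕ} (hi : i < m)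
    (h0 : z (a + ((i : ℕ) : ZMod T)) = false) : z (a + ((i + 1 : ℕ) : ZMod T)) = true := by
  apply bool_ne_false
  intro hv
  exact hband.2.2.1 i hi ⟨h0, hv⟩

lemma block_in_band (hT : m + 3 ≤ T) {l : ZMod T} {q : ℕ} (hb : isBlock z l q)
    (hsub : blockSet l q ⊆ bandSet a m) :
    ∃ i : ℕ, l = a + (i : ZMod T) ∧ i + 2 * q ≤ m := by
  obtain ⟨i, hi, hil⟩ := hsub (show l ∈ blockSet l q from ⟨0, Nat.zero_le q, by simp⟩)
  refine ⟨i, hil, ?_⟩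
  have key : ∀ s, s ≤ q → i + 2 * s ≤ m := by
    intro s
    induction s with
    | zero => intro _; simpa using hi
    | succ t ih =>
      intro hs
      have ht : i + 2 * t ≤ m := ih (by omega)
      obtain ⟨u, hu, huw⟩ := hsub ⟨t + 1, hs, rfl⟩
      rw [hil, shift] at huw
      have : i + 2 * (t + 1) = u := by
        apply add_cast_inj (by omega) (by omega) huw
      omega
  exact key q le_rfl

lemma sub_band {i q : ℕ} (h : i + 2 * q ≤ m) :
    blockSet (a + (i : ZMod T)) q ⊆ bandSet a m := by
  rintro w ⟨s, hs, rfl⟩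
  exact ⟨i + 2 * s, by omega, by rw [shift]⟩

lemma start_eq (hband : isBand z a m) {i q : ℕ} (hiq : i + 2 * q ≤ m)
    (hb : isBlock z (a + (i : ZMod T)) q)
    (h01 : z (a + (i : ZMod T) - 1) = false) : i = 0 := by
  by_contra hne
  rcases Nat.lt_or_ge i 2 with h2 | h2
  · have hi1 : i = 1 := by omega
    subst hi1
    rw [sub1 a le_rfl] at h01
    simp only [Nat.sub_self, Nat.cast_zero, add_zero] at h01
    exact tf hband.1 h01
  · apply hband.2.2.1 (i - 2) (by omega)
    constructor
    · rw [← sub2 a h2]; exact hb.2.1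
    · rw [show i - 2 + 1 = i - 1 from by omega, ← sub1 a (by omega)]; exact h01

lemma end_eq (hband : isBand z a m) {i q : ℕ} (hiq : i + 2 * q ≤ m)
    (hb : isBlock z (a + (i : ZMod T)) q)
    (h10 : z (a + (i : ZMod T) + ((2 * q + 1 : ℕ) : ZMod T)) = false) : i + 2 * q = m := by
  by_contra hne
  have hlt : i + 2 * q < m := lt_of_le_of_ne hiq hne
  rw [shift] at h10
  have hb2 := hb.2.2.1
  rw [shift] at hb2
  rcases Nat.lt_or_ge (i + (2 * q + 1)) m with hlt2 | hge
  · apply hband.2.2.1 (i + (2 * q + 1)) hlt2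
    refine ⟨h10, ?_⟩
    rw [show i + (2 * q + 1) + 1 = i + (2 * q + 2) from by omega]
    exact hb2
  · have : i + (2 * q + 1) = m := by omega
    rw [this] at h10
    exact tf hband.2.1 h10

lemma q_unique {l : ZMod T} {q q' : ℕ} (h : isBlock z l q) (h' : isBlock z l q') : q = q' := by
  by_contra hne
  rcases Nat.lt_or_ge q q' with hlt | hge
  · exact tf (h'.2.2.2 q hlt) h.2.2.1
  · exact tf (h.2.2.2 q' (by omega)) h'.2.2.1

lemma end_unique_aux (hT : m + 3 ≤ T) {i i' q q' : ℕ}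
    (hb : isBlock z (a + (i : ZMod T)) q) (hb' : isBlock z (a + (i' : ZMod T)) q')
    (he : i + 2 * q = m) (he' : i' + 2 * q' = m) (hlt : q < q') : False := by
  have hi2 : 2 ≤ i := by omega
  have hfalse : z (a + ((i - 2 : ℕ) : ZMod T)) = false := by
    rw [← sub2 a hi2]; exact hb.2.1
  rcases Nat.lt_or_ge (q' - q) 2 with h1 | h2
  · -- q' = q + 1, i - 2 = i'
    have : i - 2 = i' := by omega
    rw [this] at hfalse
    exact tf hb'.1 hfalse
  · have ht := hb'.2.2.2 (q' - q - 2) (by omega)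
    rw [shift, show i' + (2 * (q' - q - 2) + 2) = i - 2 from by omega] at ht
    exact tf ht hfalse

lemma end_unique (hT : m + 3 ≤ T) {i i' q q' : ℕ}
    (hb : isBlock z (a + (i : ZMod T)) q) (hb' : isBlock z (a + (i' : ZMod T)) q')
    (he : i + 2 * q = m) (he' : i' + 2 * q' = m) : i = i' ∧ q = q' := by
  rcases Nat.lt_trichotomy q q' with h | h | h
  · exact (end_unique_aux hT hb hb' he he' h).elim
  · exact ⟨by omega, h⟩
  · exact (end_unique_aux hT hb' hb he' he h).elim

lemma first_block (hband : isBand z a m) : ∃ q, isBlock z a q ∧ 2 * q ≤ m := by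
  have hwit : ∃ k, z (a + ((2 * k + 2 : ℕ) : ZMod T)) = false ∧ 2 * k ≤ m := by
    rcases Nat.even_or_odd m with he | ho
    · have hm2 := Nat.even_iff.mp he
      refine ⟨m / 2, ?_, by omega⟩
      rw [show 2 * (m / 2) + 2 = m + 2 from by omega]
      exact hband.2.2.2.2.2.2
    · have hm2 := Nat.odd_iff.mp ho
      refine ⟨(m - 1) / 2, ?_, by omega⟩
      rw [show 2 * ((m - 1) / 2) + 2 = m + 1 from by omega]
      exact hband.2.2.2.2.2.1
  obtain ⟨k0, hk0, hk0m⟩ := hwit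
  have hex : ∃ k, z (a + ((2 * k + 2 : ℕ) : ZMod T)) = false := ⟨k0, hk0⟩
  refine ⟨Nat.find hex, ⟨hband.1, hband.2.2.2.2.1, Nat.find_spec hex, ?_⟩, ?_⟩
  · intro q' hq'
    exact bool_ne_false (Nat.find_min hex hq')
  · have := Nat.find_min' hex hk0
    omega

lemma last_block (hband : isBand z a m) :
    ∃ j r, j + 2 * r = m ∧ isBlock z (a + (j : ZMod T)) r ∧
      (j = 0 ∨ z (a + (j : ZMod T) - 1) = true) := by
  have hex : ∃ r, m < 2 * r + 2 ∨ z (a + ((m - (2 * r + 2) : ℕ) : ZMod T)) = false :=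
    ⟨m, Or.inl (by omega)⟩
  set r := Nat.find hex with hrdef
  have hspec := Nat.find_spec hex
  have hmin : ∀ r' < r, ¬(m < 2 * r' + 2 ∨ z (a + ((m - (2 * r' + 2) : ℕ) : ZMod T)) = false) :=
    fun r' h => Nat.find_min hex h
  have h2r : 2 * r ≤ m := by
    rcases Nat.eq_zero_or_pos r with h0 | hpos
    · omega
    · have hp := hmin (r - 1) (by omega)
      push_neg at hp
      omega
  set j := m - 2 * r with hjdef
  have hjm : j + 2 * r = m := by omega
  have hgj : z (a + ((j : ℕ) : ZMod T)) = true := by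
    rcases Nat.eq_zero_or_pos r with h0 | hpos
    · rw [show j = m from by omega]
      exact hband.2.1
    · have hp := hmin (r - 1) (by omega)
      push_neg at hp
      have := bool_ne_false hp.2
      rwa [show m - (2 * (r - 1) + 2) = j from by omega] at this
  have hjsub2 : 2 ≤ j → z (a + ((j - 2 : ℕ) : ZMod T)) = false := by
    intro hj2
    rcases hspec with hc | hc
    · omega
    · rwa [show m - (2 * r + 2) = j - 2 from by omega] at hc
  have hblock : isBlock z (a + ((j : ℕ) : ZMod T)) r := by
    refine ⟨hgj, ?_, ?_, ?_⟩
    · rcases Nat.lt_or_ge j 2 with hj2 | hj2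
      · interval_cases j
        · simp only [Nat.cast_zero, add_zero]
          exact hband.2.2.2.2.1
        · rw [show a + ((1 : ℕ) : ZMod T) - 2 = a - 1 from by push_cast; ring]
          exact hband.2.2.2.1
      · rw [sub2 a hj2]
        exact hjsub2 hj2
    · rw [shift, show j + (2 * r + 2) = m + 2 from by omega]
      exact hband.2.2.2.2.2.2
    · intro q' hq'
      rw [shift]
      rcases Nat.eq_or_lt_of_le (Nat.succ_le_of_lt hq') with heq | hlt
      · rw [show j + (2 * q' + 2) = m from by omega]
        exact hband.2.1
      · have hp := hmin (r - q' - 2) (by omega)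
        push_neg at hp
        have := bool_ne_false hp.2
        rwa [show m - (2 * (r - q' - 2) + 2) = j + (2 * q' + 2) from by omega] at this
  refine ⟨j, r, hjm, hblock, ?_⟩
  rcases Nat.lt_or_ge j 2 with hj2 | hj2
  · rcases Nat.eq_zero_or_pos j with h0 | hpos
    · exact Or.inl h0
    · right
      rw [show j = 1 from by omega]
      rw [show a + ((1 : ℕ) : ZMod T) - 1 = a from by push_cast; ring]
      exact hband.1
  · right
    have hf := hjsub2 hj2
    have := no2 hband (i := j - 2) (by omega) hf
    rw [show j - 2 + 1 = j - 1 from by omega] at this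
    rwa [sub1 a (by omega)]

end BandBlockAux

open BandBlockAux

/-- if `z : ℤ/Tℤ → {0,1}` has least period at least 3, then a band of `z`
either contains no block of type `(0,1)` and no block of type `(1,0)`, or contains exactly
one block of type `(0,1)` and exactly one block of type `(1,0)`. -/
theorem band_block_dichotomy
    (T : ℕ) [NeZero T] (z : ZMod T → Bool)
    (hz : ¬ ∀ l : ZMod T, z (l + 2) = z l)
    (a : ZMod T) (m : ℕ) (hband : isBand z a m) :
    (¬ ∃ (l : ZMod T) (q : ℕ), isBlock z l q ∧ blockSet l q ⊆ bandSet a m ∧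
        (blockType z l q = (false, true) ∨ blockType z l q = (true, false)))
    ∨ ((∃! l : ZMod T, ∃ q : ℕ,
          isBlock z l q ∧ blockSet l q ⊆ bandSet a m ∧ blockType z l q = (false, true))
       ∧ (∃! l : ZMod T, ∃ q : ℕ,
          isBlock z l q ∧ blockSet l q ⊆ bandSet a m ∧ blockType z l q = (true, false))) := by
  have hT : m + 3 ≤ T := band_T hband
  obtain ⟨j, r, hjr, hbj, hj01⟩ := last_block hband
  rcases Nat.eq_zero_or_pos j with hj0 | hjpos
  · -- degenerate case : the band is a single block, left disjunct
    left
    rintro ⟨l, q, hb, hsub, hty⟩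
    obtain ⟨i, rfl, hiq⟩ := block_in_band hT hb hsub
    subst hj0
    rcases hty with hty | hty
    · -- type (0,1) : block starts at a, so equals the (j = 0) block, whose type is (_, 0)
      simp only [blockType, Prod.mk.injEq] at hty
      have hi0 : i = 0 := start_eq hband hiq hb hty.1
      subst hi0
      have hq : q = r := q_unique hb hbj
      subst hq
      have := hty.2
      rw [shift, show 0 + (2 * q + 1) = m + 1 from by omega] at this
      exact tf this hband.2.2.2.2.2.1
    · -- type (1,0) : block ends at a + m, so equals the (j = 0) block, whose type is (0, _)
      simp only [blockType, Prod.mk.injEq] at hty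
      have hend : i + 2 * q = m := end_eq hband hiq hb hty.2
      obtain ⟨hi0, hq⟩ := end_unique hT hb hbj hend (by omega)
      subst hi0
      have := hty.1
      rw [show ((0 : ℕ) : ZMod T) = 0 from by norm_num, add_zero] at this
      exact tf this hband.2.2.2.1
  · -- main case : right disjunct
    right
    obtain ⟨qa, hba, h2qa⟩ := first_block hband
    have ha0 : a = a + ((0 : ℕ) : ZMod T) := by norm_num
    have hba' : isBlock z (a + ((0 : ℕ) : ZMod T)) qa := by rwa [← ha0]
    constructor
    · -- unique block of type (0,1)
      refine ⟨a, ⟨qa, hba, ?_, ?_⟩, ?_⟩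
      · have hs := sub_band (a := a) (m := m) (i := 0) (q := qa) (by omega)
        rwa [← ha0] at hs
      · -- blockType z a qa = (false, true)
        simp only [blockType, Prod.mk.injEq]
        refine ⟨hband.2.2.2.1, ?_⟩
        apply bool_ne_false
        intro hf
        have hf' : z (a + ((0 : ℕ) : ZMod T) + ((2 * qa + 1 : ℕ) : ZMod T)) = false := by
          rwa [← ha0]
        have hend : 0 + 2 * qa = m := end_eq hband (by omega) hba' hf'
        obtain ⟨hj', _⟩ := end_unique hT hba' hbj hend hjr
        omega
      · rintro l' ⟨q', hb', hsub', hty'⟩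
        simp only [blockType, Prod.mk.injEq] at hty'
        obtain ⟨i', rfl, hiq'⟩ := block_in_band hT hb' hsub'
        have hi0 : i' = 0 := start_eq hband hiq' hb' hty'.1
        subst hi0
        exact (ha0).symm
    · -- unique block of type (1,0)
      refine ⟨a + ((j : ℕ) : ZMod T), ⟨r, hbj, sub_band (by omega), ?_⟩, ?_⟩
      · simp only [blockType, Prod.mk.injEq]
        constructor
        · rcases hj01 with h0 | h1
          · omega
          · exact h1
        · rw [shift, show j + (2 * r + 1) = m + 1 from by omega]
          exact hband.2.2.2.2.2.1
      · rintro l' ⟨q', hb', hsub', hty'⟩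
        simp only [blockType, Prod.mk.injEq] at hty'
        obtain ⟨i', rfl, hiq'⟩ := block_in_band hT hb' hsub'
        have hend : i' + 2 * q' = m := end_eq hband hiq' hb' hty'.2
        obtain ⟨hij, _⟩ := end_unique hT hb' hbj hend hjr
        rw [hij]
end

section
/- Let T ≥ 1 and let z : ℤ/Tℤ → {0,1} have least period at least 3. Then the number of blocks of z of type (0,1) equals the number of blocks of z of type (1,0). -/
section Aux

variable {T : ℕ} {z : ZMod T → Bool}

lemma aux_cast_helper (hT : 2 ≤ T) : ((2 * (T - 2) + 2 : ℕ) : ZMod T) = -2 := by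
  have h : 2 * (T - 2) + 2 = 2 * T - 2 := by omega
  rw [h, Nat.cast_sub (by omega), Nat.cast_mul, ZMod.natCast_self]
  simp

lemma aux_isBlock_unique {l : ZMod T} {q q' : ℕ} (h : isBlock z l q) (h' : isBlock z l q') :
    q = q' := by
  by_contra hne
  rcases Nat.lt_or_ge q q' with hlt | hge
  · have h1 := h'.2.2.2 q hlt
    rw [h.2.2.1] at h1
    exact absurd h1 (by simp)
  · have hlt : q' < q := lt_of_le_of_ne hge (Ne.symm hne)
    have h1 := h.2.2.2 q' hlt
    rw [h'.2.2.1] at h1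
    exact absurd h1 (by simp)

lemma aux_isBlock_find {l : ZMod T} (h1 : z l = true) (h0 : z (l - 2) = false)
    (hex : ∃ n, z (l + ((2 * n + 2 : ℕ) : ZMod T)) = false) :
    isBlock z l (Nat.find hex) := by
  refine ⟨h1, h0, Nat.find_spec hex, fun q' hq' => ?_⟩
  have := Nat.find_min hex hq'
  simpa using this

lemma aux_isBlock_exists (hT : 2 ≤ T) {l : ZMod T} (h1 : z l = true)
    (h0 : z (l - 2) = false) : ∃ q, isBlock z l q := by
  have hex : ∃ n, z (l + ((2 * n + 2 : ℕ) : ZMod T)) = false := by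
    refine ⟨T - 2, ?_⟩
    rw [aux_cast_helper hT]
    simpa [sub_eq_add_neg] using h0
  exact ⟨Nat.find hex, aux_isBlock_find h1 h0 hex⟩

lemma aux_isBlock_mem {l : ZMod T} {q j : ℕ} (h : isBlock z l q) (hj : j ≤ q) :
    z (l + ((2 * j : ℕ) : ZMod T)) = true := by
  cases j with
  | zero => simpa using h.1
  | succ k =>
    have hk := h.2.2.2 k (by omega)
    have : 2 * (k + 1) = 2 * k + 2 := by ring
    rw [this]
    exact hk

lemma aux_start_eq {l l' : ZMod T} {q q' : ℕ} (h : isBlock z l q) (h' : isBlock z l' q')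
    (hm : l + ((2 * q : ℕ) : ZMod T) = l' + ((2 * q' : ℕ) : ZMod T)) (hle : q ≤ q') :
    l = l' := by
  rcases eq_or_lt_of_le hle with heq | hlt
  · subst heq
    exact add_right_cancel hm
  · exfalso
    have hmem := aux_isBlock_mem h' (j := q' - q - 1) (by omega)
    have harg : l' + ((2 * (q' - q - 1) : ℕ) : ZMod T) = l - 2 := by
      have h2 : (2 * (q' - q - 1) : ℕ) = 2 * q' - (2 * q + 2) := by omega
      rw [h2, Nat.cast_sub (by omega)]
      push_cast at hm ⊢
      linear_combination hm.symm
    rw [harg, h.2.1] at hmem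
    exact absurd hmem (by simp)

lemma aux_exists_block_end (hT : 2 ≤ T) {m : ZMod T} (h1 : z m = true)
    (h2 : z (m + 2) = false) :
    ∃ l q, isBlock z l q ∧ l + ((2 * q : ℕ) : ZMod T) = m := by
  have hex : ∃ n, z (m - ((2 * n + 2 : ℕ) : ZMod T)) = false := by
    refine ⟨T - 2, ?_⟩
    rw [aux_cast_helper hT]
    simpa [sub_neg_eq_add] using h2
  set r := Nat.find hex with hr
  refine ⟨m - ((2 * r : ℕ) : ZMod T), r, ⟨?_, ?_, ?_, ?_⟩, ?_⟩
  · rcases Nat.eq_zero_or_pos r with h0 | hpos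
    · rw [h0]
      simpa using h1
    · have hmin := Nat.find_min hex (m := r - 1) (by omega)
      have harg : (2 * (r - 1) + 2 : ℕ) = 2 * r := by omega
      rw [harg] at hmin
      simpa using hmin
  · have hspec := Nat.find_spec hex
    have harg : m - ((2 * r : ℕ) : ZMod T) - 2 = m - ((2 * r + 2 : ℕ) : ZMod T) := by
      push_cast
      ring
    rw [harg]
    exact hspec
  · have harg : m - ((2 * r : ℕ) : ZMod T) + ((2 * r + 2 : ℕ) : ZMod T) = m + 2 := by
      push_cast
      ring
    rw [harg]
    exact h2
  · intro q' hq'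
    by_cases hq : q' + 1 = r
    · have harg : m - ((2 * r : ℕ) : ZMod T) + ((2 * q' + 2 : ℕ) : ZMod T) = m := by
        have h3 : (2 * q' + 2 : ℕ) = 2 * r := by omega
        rw [h3]
        ring
      rw [harg]
      exact h1
    · have hmin := Nat.find_min hex (m := r - q' - 2) (by omega)
      have harg : m - ((2 * r : ℕ) : ZMod T) + ((2 * q' + 2 : ℕ) : ZMod T)
          = m - ((2 * (r - q' - 2) + 2 : ℕ) : ZMod T) := by
        have h3 : (2 * (r - q' - 2) + 2 : ℕ) = 2 * r - (2 * q' + 2) := by omega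
        rw [h3, Nat.cast_sub (by omega)]
        push_cast
        ring
      rw [harg]
      simpa using hmin
  · push_cast
    ring

end Aux

open Classical in
/-- The end of the block starting at `l` (if any). -/
noncomputable def endMap {T : ℕ} (z : ZMod T → Bool) (l : ZMod T) : ZMod T :=
  if h : ∃ n, z (l + ((2 * n + 2 : ℕ) : ZMod T)) = false then
    l + ((2 * Nat.find h : ℕ) : ZMod T)
  else l

lemma endMap_eq {T : ℕ} {z : ZMod T → Bool} {l : ZMod T} {q : ℕ} (hB : isBlock z l q) :
    endMap z l = l + ((2 * q : ℕ) : ZMod T) := by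
  have hex : ∃ n, z (l + ((2 * n + 2 : ℕ) : ZMod T)) = false := ⟨q, hB.2.2.1⟩
  have hfind : Nat.find hex = q :=
    aux_isBlock_unique (aux_isBlock_find hB.1 hB.2.1 hex) hB
  rw [endMap, dif_pos hex, hfind]

lemma aux_sum_shift {T : ℕ} [NeZero T] (f : ZMod T → ℤ) (c : ZMod T) :
    ∑ l : ZMod T, f (l + c) = ∑ l : ZMod T, f l :=
  Fintype.sum_equiv (Equiv.addRight c) _ _ (fun _ => rfl)

lemma aux_pattern_card {T : ℕ} [NeZero T] (z : ZMod T → Bool) :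
    (Finset.univ.filter fun l : ZMod T =>
        z l = true ∧ z (l - 1) = false ∧ z (l - 2) = false).card
      = (Finset.univ.filter fun l : ZMod T =>
        z l = true ∧ z (l + 1) = false ∧ z (l + 2) = false).card := by
  classical
  set b : ZMod T → ℤ := fun l => if z l then 1 else 0 with hb
  have key : ∑ l : ZMod T, (if z l = true ∧ z (l - 1) = false ∧ z (l - 2) = false
        then (1 : ℤ) else 0)
      = ∑ l : ZMod T, (if z l = true ∧ z (l + 1) = false ∧ z (l + 2) = false
        then (1 : ℤ) else 0) := by
    have hpt1 : ∀ l : ZMod T, (if z l = true ∧ z (l - 1) = false ∧ z (l - 2) = false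
        then (1 : ℤ) else 0) = b l * (1 - b (l - 1)) * (1 - b (l - 2)) := by
      intro l
      cases h1 : z l <;> cases h2 : z (l - 1) <;> cases h3 : z (l - 2) <;>
        simp [hb, h1, h2, h3]
    have hpt2 : ∀ l : ZMod T, (if z l = true ∧ z (l + 1) = false ∧ z (l + 2) = false
        then (1 : ℤ) else 0) = b l * (1 - b (l + 1)) * (1 - b (l + 2)) := by
      intro l
      cases h1 : z l <;> cases h2 : z (l + 1) <;> cases h3 : z (l + 2) <;>
        simp [hb, h1, h2, h3]
    simp only [hpt1, hpt2]
    have hshift := aux_sum_shift (fun l => b (l + 2) * (1 - b (l + 1)) * (1 - b l)) (-2)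
    have e1 : ∀ l : ZMod T, l - 2 + 2 = l := fun l => by ring
    have e2 : ∀ l : ZMod T, l - 2 + 1 = l - 1 := fun l => by ring
    simp only [sub_eq_add_neg] at hshift
    simp only [← sub_eq_add_neg] at hshift
    simp only [e1, e2] at hshift
    rw [hshift]
    rw [← sub_eq_zero, ← Finset.sum_sub_distrib]
    have expand : ∀ l : ZMod T,
        b (l + 2) * (1 - b (l + 1)) * (1 - b l) - b l * (1 - b (l + 1)) * (1 - b (l + 2))
          = (b (l + 2) - b l) - (b (l + 1) * b (l + 2) - b l * b (l + 1)) :=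
      fun l => by ring
    simp only [expand]
    rw [Finset.sum_sub_distrib, Finset.sum_sub_distrib, Finset.sum_sub_distrib]
    have s1 : ∑ l : ZMod T, b (l + 2) = ∑ l : ZMod T, b l := aux_sum_shift b 2
    have s2 : ∑ l : ZMod T, b (l + 1) * b (l + 2) = ∑ l : ZMod T, b l * b (l + 1) := by
      have := aux_sum_shift (fun l => b l * b (l + 1)) 1
      have e4 : ∀ l : ZMod T, l + 1 + 1 = l + 2 := fun l => by ring
      simp only [e4] at this
      exact this
    rw [s1, s2]
    ring
  rw [Finset.card_filter, Finset.card_filter]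
  exact_mod_cast key

/-- if `z : ℤ/Tℤ → {0,1}` has least period at least 3, then the number of
blocks of `z` of type `(0,1)` equals the number of blocks of `z` of type `(1,0)`. -/
theorem blocks_type01_eq_type10
    (T : ℕ) [NeZero T] (z : ZMod T → Bool)
    (hz : ¬ ∀ l : ZMod T, z (l + 2) = z l) :
    {l : ZMod T | ∃ q : ℕ, isBlock z l q ∧ blockType z l q = (false, true)}.ncard
      = {l : ZMod T | ∃ q : ℕ, isBlock z l q ∧ blockType z l q = (true, false)}.ncard := by
  classical
  have hT : 2 ≤ T := by
    by_contra h
    push_neg at h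
    have hT1 : T = 1 := by have := NeZero.pos T; omega
    subst hT1
    exact hz fun l => congrArg z (Subsingleton.elim _ _)
  set A01 := {l : ZMod T | ∃ q : ℕ, isBlock z l q ∧ blockType z l q = (false, true)} with hA01
  set A10 := {l : ZMod T | ∃ q : ℕ, isBlock z l q ∧ blockType z l q = (true, false)} with hA10
  set A00 := {l : ZMod T | ∃ q : ℕ, isBlock z l q ∧ blockType z l q = (false, false)} with hA00
  set P001 := {l : ZMod T | z l = true ∧ z (l - 1) = false ∧ z (l - 2) = false} with hP001
  set P100 := {l : ZMod T | z l = true ∧ z (l + 1) = false ∧ z (l + 2) = false} with hP100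
  set E' := {l : ZMod T | ∃ q : ℕ, isBlock z l q ∧ z (l + ((2 * q + 1 : ℕ) : ZMod T)) = false}
    with hE'
  -- step 1 : A01 ∪ A00 = P001
  have hu1 : A01 ∪ A00 = P001 := by
    ext l
    simp only [hA01, hA00, hP001, Set.mem_union, Set.mem_setOf_eq, blockType,
      Prod.mk.injEq]
    constructor
    · rintro (⟨q, hB, h1, _⟩ | ⟨q, hB, h1, _⟩) <;> exact ⟨hB.1, h1, hB.2.1⟩
    · rintro ⟨h1, hm1, h0⟩
      obtain ⟨q, hB⟩ := aux_isBlock_exists hT h1 h0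
      cases hend : z (l + ((2 * q + 1 : ℕ) : ZMod T))
      · exact Or.inr ⟨q, hB, hm1, hend⟩
      · exact Or.inl ⟨q, hB, hm1, hend⟩
  -- step 2 : A10 ∪ A00 = E'
  have hu2 : A10 ∪ A00 = E' := by
    ext l
    simp only [hA10, hA00, hE', Set.mem_union, Set.mem_setOf_eq, blockType, Prod.mk.injEq]
    constructor
    · rintro (⟨q, hB, _, h1⟩ | ⟨q, hB, _, h1⟩) <;> exact ⟨q, hB, h1⟩
    · rintro ⟨q, hB, h1⟩
      cases hfst : z (l - 1)
      · exact Or.inr ⟨q, hB, rfl, h1⟩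
      · exact Or.inl ⟨q, hB, rfl, h1⟩
  -- disjointness
  have hd1 : Disjoint A01 A00 := by
    rw [Set.disjoint_left]
    rintro l ⟨q, hB, h1⟩ ⟨q', hB', h1'⟩
    have := aux_isBlock_unique hB hB'
    subst this
    rw [h1] at h1'
    simp at h1'
  have hd2 : Disjoint A10 A00 := by
    rw [Set.disjoint_left]
    rintro l ⟨q, hB, h1⟩ ⟨q', hB', h1'⟩
    have := aux_isBlock_unique hB hB'
    subst this
    rw [h1] at h1'
    simp at h1'
  -- image of E' under endMap is P100
  have himg : endMap z '' E' = P100 := by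
    ext m
    simp only [hE', hP100, Set.mem_image, Set.mem_setOf_eq]
    constructor
    · rintro ⟨l, ⟨q, hB, hq1⟩, rfl⟩
      rw [endMap_eq hB]
      refine ⟨aux_isBlock_mem hB le_rfl, ?_, ?_⟩
      · have harg : l + ((2 * q : ℕ) : ZMod T) + 1 = l + ((2 * q + 1 : ℕ) : ZMod T) := by
          push_cast; ring
        rw [harg]
        exact hq1
      · have harg : l + ((2 * q : ℕ) : ZMod T) + 2 = l + ((2 * q + 2 : ℕ) : ZMod T) := by
          push_cast; ring
        rw [harg]
        exact hB.2.2.1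
    · rintro ⟨h1, hm1, hm2⟩
      obtain ⟨l, q, hB, hlq⟩ := aux_exists_block_end hT h1 hm2
      refine ⟨l, ⟨q, hB, ?_⟩, ?_⟩
      · have harg : l + ((2 * q + 1 : ℕ) : ZMod T) = m + 1 := by
          push_cast at hlq ⊢
          linear_combination hlq
        rw [harg]
        exact hm1
      · rw [endMap_eq hB, hlq]
  have hinj : Set.InjOn (endMap z) E' := by
    rintro l ⟨q, hB, _⟩ l' ⟨q', hB', _⟩ heq
    rw [endMap_eq hB, endMap_eq hB'] at heq
    rcases le_total q q' with h | h
    · exact aux_start_eq hB hB' heq h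
    · exact (aux_start_eq hB' hB heq.symm h).symm
  -- cardinalities
  have hc1 : A01.ncard + A00.ncard = P001.ncard := by
    rw [← Set.ncard_union_eq hd1 (Set.toFinite _) (Set.toFinite _), hu1]
  have hc2 : A10.ncard + A00.ncard = P100.ncard := by
    rw [← Set.ncard_union_eq hd2 (Set.toFinite _) (Set.toFinite _), hu2, ← himg,
      Set.ncard_image_of_injOn hinj]
  have hc3 : P001.ncard = P100.ncard := by
    have hf1 : P001 = ↑(Finset.univ.filter fun l : ZMod T =>
        z l = true ∧ z (l - 1) = false ∧ z (l - 2) = false) := by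
      ext l; simp [hP001]
    have hf2 : P100 = ↑(Finset.univ.filter fun l : ZMod T =>
        z l = true ∧ z (l + 1) = false ∧ z (l + 2) = false) := by
      ext l; simp [hP100]
    rw [hf1, hf2, Set.ncard_coe_finset, Set.ncard_coe_finset]
    exact aux_pattern_card z
  omega
end

section
/- Let F = (f_1,…,f_n) be the synchronous bi-threshold map on {0,1}^n determined by a real symmetric matrix A = (a_ij) and thresholds (k↑_i), (k↓_i). Let T ≥ 1 and let z_1,…,z_n : ℤ/Tℤ → {0,1} satisfy z_j(l+1) = f_j(z_1(l),…,z_n(l)) for all j and all l ∈ ℤ/Tℤ (i.e., the columns form a periodic orbit of F of period dividing T). If z_i does not satisfy z_i(l+2) = z_i(l) for all l (its least period is at least 3), then Σ_{j=1}^n L(z_i, z_j) < 0. -/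
noncomputable def BTchi (t : Bool) : ℝ := if t = true then 1 else 0

lemma BTchi_nonneg (t : Bool) : 0 ≤ BTchi t := by cases t <;> simp [BTchi]

lemma BTshift (T : ℕ) [NeZero T] (g : ZMod T → ℝ) (c : ZMod T) :
    ∑ l : ZMod T, g (l + c) = ∑ l : ZMod T, g l :=
  Fintype.sum_equiv (Equiv.addRight c) _ _ (fun _ => rfl)



/-- let `F` be the synchronous bi-threshold map on `{0,1}^n` given by a real
symmetric matrix `A` and thresholds `kup`, `kdown` (new state of coordinate `j` is `1` iff
(`x j = 0` and `∑ k, A j k * x k ≥ kup j`) or (`x j = 1` and `∑ k, A j k * x k ≥ kdown j`)).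
If `z_1, …, z_n : ℤ/Tℤ → {0,1}` satisfy `z_j(l+1) = f_j(z_1(l), …, z_n(l))` for all `j, l`,
and `z_i` does not satisfy `z_i(l+2) = z_i(l)` for all `l`, then `∑_j L(z_i, z_j) < 0`,
where `L(z_i, z_j) = A i j * ∑_l (z_j(l+1) - z_j(l-1)) * z_i(l)`. -/
theorem bithreshold_orbit_L_sum_neg
    (n T : ℕ) [NeZero T] (A : Fin n → Fin n → ℝ) (hA : ∀ i j, A i j = A j i)
    (kup kdown : Fin n → ℝ)
    (z : Fin n → ZMod T → Bool)
    (horb : ∀ (j : Fin n) (l : ZMod T), z j (l + 1) = true ↔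
      ((z j l = false ∧ kup j ≤ ∑ k, A j k * (if z k l = true then (1 : ℝ) else 0)) ∨
       (z j l = true ∧ kdown j ≤ ∑ k, A j k * (if z k l = true then (1 : ℝ) else 0))))
    (i : Fin n)
    (hi : ¬ ∀ l : ZMod T, z i (l + 2) = z i l) :
    ∑ j, (A i j * ∑ l : ZMod T,
        ((if z j (l + 1) = true then (1 : ℝ) else 0) - (if z j (l - 1) = true then (1 : ℝ) else 0)) *
          (if z i l = true then (1 : ℝ) else 0)) < 0 := by
  classical
  -- notation
  set S : ZMod T → ℝ := fun l => ∑ k, A i k * BTchi (z k l) with hSdef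
  set K : Bool → ℝ := fun t => if t = true then kdown i else kup i with hKdef
  -- dynamics facts
  have hup : ∀ l : ZMod T, z i (l + 1) = true → K (z i l) ≤ S l := by
    intro l h
    rcases (horb i l).1 h with ⟨h0, hle⟩ | ⟨h1, hle⟩
    · simpa [hKdef, hSdef, h0, BTchi] using hle
    · simpa [hKdef, hSdef, h1, BTchi] using hle
  have hdown : ∀ l : ZMod T, z i (l + 1) = false → S l < K (z i l) := by
    intro l h
    by_contra hc
    push_neg at hc
    have ht : z i (l + 1) = true := by
      apply (horb i l).2
      cases hz : z i l
      · left
        refine ⟨rfl, ?_⟩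
        have h2 := hc
        simp only [hKdef, hSdef, hz] at h2
        simpa [BTchi] using h2
      · right
        refine ⟨rfl, ?_⟩
        have h2 := hc
        simp only [hKdef, hSdef, hz] at h2
        simpa [BTchi] using h2
    rw [ht] at h
    exact Bool.noConfusion h
  -- rewrite goal sum
  have step1 : ∑ j, (A i j * ∑ l : ZMod T,
        ((if z j (l + 1) = true then (1 : ℝ) else 0) - (if z j (l - 1) = true then (1 : ℝ) else 0)) *
          (if z i l = true then (1 : ℝ) else 0))
      = ∑ l : ZMod T, S l * (BTchi (z i (l - 1)) - BTchi (z i (l + 1))) := by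
    have swap : ∑ j, (A i j * ∑ l : ZMod T,
        ((if z j (l + 1) = true then (1 : ℝ) else 0) - (if z j (l - 1) = true then (1 : ℝ) else 0)) *
          (if z i l = true then (1 : ℝ) else 0))
        = ∑ l : ZMod T, (S (l + 1) - S (l - 1)) * BTchi (z i l) := by
      simp only [Finset.mul_sum]
      rw [Finset.sum_comm]
      refine Finset.sum_congr rfl fun l _ => ?_
      simp only [hSdef, BTchi]
      rw [sub_mul, Finset.sum_mul, Finset.sum_mul, ← Finset.sum_sub_distrib]
      refine Finset.sum_congr rfl fun k _ => by ring
    rw [swap]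
    have e1 : ∑ l : ZMod T, S (l + 1) * BTchi (z i l)
        = ∑ l : ZMod T, S l * BTchi (z i (l - 1)) := by
      have := BTshift T (fun l => S l * BTchi (z i (l - 1))) 1
      rw [← this]
      refine Finset.sum_congr rfl fun l _ => ?_
      simp
    have e2 : ∑ l : ZMod T, S (l - 1) * BTchi (z i l)
        = ∑ l : ZMod T, S l * BTchi (z i (l + 1)) := by
      have := BTshift T (fun l => S l * BTchi (z i (l + 1))) (-1)
      rw [← this]
      refine Finset.sum_congr rfl fun l _ => ?_
      simp [sub_eq_add_neg]
    calc ∑ l : ZMod T, (S (l + 1) - S (l - 1)) * BTchi (z i l)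
        = ∑ l : ZMod T, (S (l + 1) * BTchi (z i l) - S (l - 1) * BTchi (z i l)) := by
          refine Finset.sum_congr rfl fun l _ => by ring
      _ = (∑ l : ZMod T, S (l + 1) * BTchi (z i l)) - ∑ l : ZMod T, S (l - 1) * BTchi (z i l) := by
          rw [Finset.sum_sub_distrib]
      _ = (∑ l : ZMod T, S l * BTchi (z i (l - 1))) - ∑ l : ZMod T, S l * BTchi (z i (l + 1)) := by
          rw [e1, e2]
      _ = ∑ l : ZMod T, S l * (BTchi (z i (l - 1)) - BTchi (z i (l + 1))) := by
          rw [← Finset.sum_sub_distrib]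
          exact Finset.sum_congr rfl fun l _ => by ring
  rw [step1]
  -- the K-sum vanishes
  have hKexp : ∀ t : Bool, K t = kup i + (kdown i - kup i) * BTchi t := by
    intro t; cases t <;> simp [hKdef, BTchi] <;> ring
  have hzero : ∑ l : ZMod T, K (z i l) * (BTchi (z i (l - 1)) - BTchi (z i (l + 1))) = 0 := by
    have expand : ∀ l : ZMod T, K (z i l) * (BTchi (z i (l - 1)) - BTchi (z i (l + 1)))
        = kup i * (BTchi (z i (l - 1)) - BTchi (z i (l + 1)))
          + (kdown i - kup i) * (BTchi (z i l) * BTchi (z i (l - 1))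
              - BTchi (z i l) * BTchi (z i (l + 1))) := by
      intro l; rw [hKexp]; ring
    rw [Finset.sum_congr rfl fun l _ => expand l, Finset.sum_add_distrib]
    have s1 : ∑ l : ZMod T, kup i * (BTchi (z i (l - 1)) - BTchi (z i (l + 1))) = 0 := by
      rw [← Finset.mul_sum, Finset.sum_sub_distrib]
      have a1 : ∑ l : ZMod T, BTchi (z i (l - 1)) = ∑ l : ZMod T, BTchi (z i l) := by
        have := BTshift T (fun l => BTchi (z i l)) (-1)
        rw [← this]
        exact Finset.sum_congr rfl fun l _ => by simp [sub_eq_add_neg]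
      have a2 : ∑ l : ZMod T, BTchi (z i (l + 1)) = ∑ l : ZMod T, BTchi (z i l) :=
        BTshift T (fun l => BTchi (z i l)) 1
      rw [a1, a2, sub_self, mul_zero]
    have s2 : ∑ l : ZMod T, (kdown i - kup i) * (BTchi (z i l) * BTchi (z i (l - 1))
        - BTchi (z i l) * BTchi (z i (l + 1))) = 0 := by
      rw [← Finset.mul_sum, Finset.sum_sub_distrib]
      have a3 : ∑ l : ZMod T, BTchi (z i l) * BTchi (z i (l - 1))
          = ∑ l : ZMod T, BTchi (z i l) * BTchi (z i (l + 1)) := by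
        have := BTshift T (fun l => BTchi (z i l) * BTchi (z i (l + 1))) (-1)
        rw [← this]
        refine Finset.sum_congr rfl fun l _ => ?_
        simp [sub_eq_add_neg, mul_comm]
      rw [a3, sub_self, mul_zero]
    rw [s1, s2, add_zero]
  -- pointwise bounds
  have hle : ∀ l : ZMod T, S l * (BTchi (z i (l - 1)) - BTchi (z i (l + 1)))
      ≤ K (z i l) * (BTchi (z i (l - 1)) - BTchi (z i (l + 1))) := by
    intro l
    cases h1 : z i (l + 1)
    · have hd : 0 ≤ BTchi (z i (l - 1)) - BTchi false := by
        simpa [BTchi] using BTchi_nonneg (z i (l - 1))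
      exact mul_le_mul_of_nonneg_right (le_of_lt (hdown l h1)) hd
    · have hd : BTchi (z i (l - 1)) - BTchi true ≤ 0 := by
        cases z i (l - 1) <;> simp [BTchi]
      exact mul_le_mul_of_nonpos_right (hup l h1) hd
  -- existence of a strict term
  have hex : ∃ m : ZMod T, z i m = true ∧ z i (m + 2) = false := by
    push_neg at hi
    obtain ⟨l, hl⟩ := hi
    cases h0 : z i l
    · cases h2 : z i (l + 2)
      · rw [h0, h2] at hl; exact absurd rfl hl
      · -- climb up then fall
        have climb : ∀ m : ℕ, z i (l + ((2 * (m + 1) : ℕ) : ZMod T)) = true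
            ∨ ∃ m' : ZMod T, z i m' = true ∧ z i (m' + 2) = false := by
          intro m
          induction m with
          | zero =>
            left
            have : ((2 * (0 + 1) : ℕ) : ZMod T) = 2 := by norm_num
            rw [this]; exact h2
          | succ m ih =>
            rcases ih with ht | he
            · by_cases hc : z i (l + ((2 * (m + 2) : ℕ) : ZMod T)) = true
              · left; exact hc
              · right
                refine ⟨l + ((2 * (m + 1) : ℕ) : ZMod T), ht, ?_⟩
                have harith : l + ((2 * (m + 1) : ℕ) : ZMod T) + 2
                    = l + ((2 * (m + 2) : ℕ) : ZMod T) := by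
                  push_cast; ring
                rw [harith]
                exact Bool.not_eq_true _ |>.mp hc
            · right; exact he
        rcases climb (T - 1) with ht | he
        · exfalso
          have hT : T - 1 + 1 = T := Nat.succ_pred_eq_of_pos (Nat.pos_of_ne_zero (NeZero.ne T))
          rw [hT] at ht
          have : ((2 * T : ℕ) : ZMod T) = 0 := by
            push_cast [ZMod.natCast_self]; ring
          rw [this, add_zero, h0] at ht
          exact absurd ht (by simp)
        · exact he
    · cases h2 : z i (l + 2)
      · exact ⟨l, h0, h2⟩
      · rw [h0, h2] at hl; exact absurd rfl hl
  obtain ⟨m, hm1, hm2⟩ := hex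
  have hlt : S (m + 1) * (BTchi (z i (m + 1 - 1)) - BTchi (z i (m + 1 + 1)))
      < K (z i (m + 1)) * (BTchi (z i (m + 1 - 1)) - BTchi (z i (m + 1 + 1))) := by
    have e1 : m + 1 - 1 = m := by ring
    have e2 : m + 1 + 1 = m + 2 := by ring
    have hd : BTchi (z i (m + 1 - 1)) - BTchi (z i (m + 1 + 1)) = 1 := by
      rw [e1, e2, hm1, hm2]; simp [BTchi]
    rw [hd, mul_one, mul_one]
    apply hdown
    rw [e2]; exact hm2
  have : ∑ l : ZMod T, S l * (BTchi (z i (l - 1)) - BTchi (z i (l + 1)))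
      < ∑ l : ZMod T, K (z i l) * (BTchi (z i (l - 1)) - BTchi (z i (l + 1))) := by
    apply Finset.sum_lt_sum (fun l _ => hle l)
    exact ⟨m + 1, Finset.mem_univ _, hlt⟩
  calc ∑ l : ZMod T, S l * (BTchi (z i (l - 1)) - BTchi (z i (l + 1)))
      < ∑ l : ZMod T, K (z i l) * (BTchi (z i (l - 1)) - BTchi (z i (l + 1))) := this
    _ = 0 := hzero
end

section
/- Let X be a finite undirected simple graph on vertex set {1,…,n}, let π be a permutation of the vertices, and let each vertex v carry a bi-threshold function with thresholds satisfying k↓_v − k↑_v ≤ 1. Then every periodic point of the sequential dynamical system map F_π is a fixed point; equivalently, for every x ∈ {0,1}^n there exists s with F_π^{s+1}(x) = F_π^{s}(x). -/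
open scoped Classical


noncomputable def pot {n : ℕ} (G : SimpleGraph (Fin n)) (kdown : Fin n → ℕ)
    (x : Fin n → Bool) : ℤ :=
  (∑ v, (if x v = true then (1:ℤ) else 0) * (2*(kdown v : ℤ) - 3))
    - ∑ w, ∑ u, (if G.Adj w u then (1:ℤ) else 0) * (if x w = true then 1 else 0)
        * (if x u = true then 1 else 0)

lemma sigma_eq {n : ℕ} (G : SimpleGraph (Fin n)) (x : Fin n → Bool) (v : Fin n) :
    (sigmaLoc G x v : ℤ)
      = (∑ u, (if G.Adj v u then (1:ℤ) else 0) * (if x u = true then 1 else 0))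
        + (if x v = true then 1 else 0) := by
  unfold sigmaLoc
  have h1 : {u : Fin n | G.Adj v u ∧ x u = true}.ncard
      = (Finset.univ.filter (fun u => G.Adj v u ∧ x u = true)).card := by
    rw [Set.ncard_eq_toFinset_card']; simp
  rw [h1, Finset.card_filter]
  push_cast
  congr 1
  · refine Finset.sum_congr rfl fun u _ => ?_
    by_cases h : G.Adj v u <;> by_cases h2 : x u = true <;> simp [h, h2]

lemma pot_update {n : ℕ} (G : SimpleGraph (Fin n)) (kdown : Fin n → ℕ)
    (x : Fin n → Bool) (v : Fin n) (b : Bool) :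
    pot G kdown (Function.update x v b)
      = pot G kdown x
        + ((if b = true then (1:ℤ) else 0) - (if x v = true then 1 else 0))
          * ((2*(kdown v : ℤ) - 3)
             - 2 * ∑ u, (if G.Adj v u then (1:ℤ) else 0) * (if x u = true then 1 else 0)) := by
  classical
  set d : ℤ := (if b = true then (1:ℤ) else 0) - (if x v = true then 1 else 0) with hd
  have hδ : ∀ w, (if Function.update x v b w = true then (1:ℤ) else 0)
      = (if x w = true then (1:ℤ) else 0) + (if w = v then d else 0) := by
    intro w
    rcases eq_or_ne w v with rfl | h
    · simp [Function.update_self, hd]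
    · simp [Function.update_of_ne h, h]
  have hsymm : ∀ w, (if G.Adj w v then (1:ℤ) else 0) = (if G.Adj v w then 1 else 0) := by
    intro w; simp [G.adj_comm]
  have hb : ∑ w, ∑ u, (if G.Adj w u then (1:ℤ) else 0) * (if w = v then d else 0)
        * (if x u = true then 1 else 0)
      = d * ∑ u, (if G.Adj v u then (1:ℤ) else 0) * (if x u = true then 1 else 0) := by
    rw [Finset.sum_eq_single v]
    · rw [Finset.mul_sum]
      refine Finset.sum_congr rfl fun u _ => by simp
    · intro w _ hw
      refine Finset.sum_eq_zero fun u _ => by simp [hw]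
    · simp
  have hc : ∑ w, ∑ u, (if G.Adj w u then (1:ℤ) else 0) * (if x w = true then 1 else 0)
        * (if u = v then d else 0)
      = d * ∑ u, (if G.Adj v u then (1:ℤ) else 0) * (if x u = true then 1 else 0) := by
    have inner : ∀ w : Fin n, ∑ u, (if G.Adj w u then (1:ℤ) else 0) * (if x w = true then 1 else 0)
          * (if u = v then d else 0)
        = (if G.Adj v w then (1:ℤ) else 0) * (if x w = true then 1 else 0) * d := by
      intro w
      rw [Finset.sum_eq_single v]
      · rw [hsymm w]; simp
      · intro u _ hu; simp [hu]
      · simp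
    rw [Finset.sum_congr rfl fun w _ => inner w, Finset.mul_sum]
    refine Finset.sum_congr rfl fun w _ => by ring
  have hd2 : ∑ w, ∑ u, (if G.Adj w u then (1:ℤ) else 0) * (if w = v then d else 0)
        * (if u = v then d else 0) = 0 := by
    apply Finset.sum_eq_zero
    intro w _
    apply Finset.sum_eq_zero
    intro u _
    by_cases hw : w = v
    · subst hw
      by_cases hu : u = w
      · subst hu; simp
      · simp [hu]
    · simp [hw]
  have h1 : ∑ w, (if Function.update x v b w = true then (1:ℤ) else 0) * (2*(kdown w : ℤ) - 3)
      = (∑ w, (if x w = true then (1:ℤ) else 0) * (2*(kdown w : ℤ) - 3))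
        + d * (2*(kdown v : ℤ) - 3) := by
    simp only [hδ, add_mul, Finset.sum_add_distrib, ite_mul, zero_mul, Finset.sum_ite_eq',
      Finset.mem_univ, if_true]
  have expand : ∀ w u : Fin n, (if G.Adj w u then (1:ℤ) else 0)
        * (if Function.update x v b w = true then 1 else 0)
        * (if Function.update x v b u = true then 1 else 0)
      = (if G.Adj w u then (1:ℤ) else 0) * (if x w = true then 1 else 0) * (if x u = true then 1 else 0)
        + ((if G.Adj w u then (1:ℤ) else 0) * (if w = v then d else 0) * (if x u = true then 1 else 0)
        + ((if G.Adj w u then (1:ℤ) else 0) * (if x w = true then 1 else 0) * (if u = v then d else 0)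
        + (if G.Adj w u then (1:ℤ) else 0) * (if w = v then d else 0) * (if u = v then d else 0))) := by
    intro w u; rw [hδ w, hδ u]; ring
  have h2 : ∑ w, ∑ u, (if G.Adj w u then (1:ℤ) else 0)
        * (if Function.update x v b w = true then 1 else 0)
        * (if Function.update x v b u = true then 1 else 0)
      = (∑ w, ∑ u, (if G.Adj w u then (1:ℤ) else 0) * (if x w = true then 1 else 0)
          * (if x u = true then 1 else 0))
        + 2 * (d * ∑ u, (if G.Adj v u then (1:ℤ) else 0) * (if x u = true then 1 else 0)) := by
    simp only [expand, Finset.sum_add_distrib]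
    rw [hb, hc, hd2]
    ring
  unfold pot
  rw [h1, h2]
  ring


lemma step_lemma {n : ℕ} (G : SimpleGraph (Fin n)) (kup kdown : Fin n → ℕ)
    (hΔ : ∀ v : Fin n, (kdown v : ℤ) - (kup v : ℤ) ≤ 1) (x : Fin n → Bool) (v : Fin n) :
    localStep G kup kdown x v = x
      ∨ pot G kdown (localStep G kup kdown x v) + 1 ≤ pot G kdown x := by
  classical
  set m : ℤ := ∑ u, (if G.Adj v u then (1:ℤ) else 0) * (if x u = true then 1 else 0) with hm
  have hσ := sigma_eq G x v
  by_cases hx : x v = true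
  · by_cases hs : sigmaLoc G x v < kdown v
    · right
      have hls : localStep G kup kdown x v = Function.update x v false := by
        unfold localStep; rw [if_pos hx, if_pos hs]
      have hcast : (sigmaLoc G x v : ℤ) < (kdown v : ℤ) := by exact_mod_cast hs
      rw [hσ, hx] at hcast
      simp only [if_true] at hcast
      rw [hls, pot_update]
      have hdval : ((if (false : Bool) = true then (1:ℤ) else 0)
          - (if x v = true then 1 else 0)) = -1 := by simp [hx]
      rw [hdval, ← hm]
      linarith
    · left
      have : localStep G kup kdown x v = Function.update x v (x v) := by
        unfold localStep; rw [if_pos hx, if_neg hs, hx]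
      rw [this, Function.update_eq_self]
  · by_cases hs : kup v ≤ sigmaLoc G x v
    · right
      have hls : localStep G kup kdown x v = Function.update x v true := by
        unfold localStep; rw [if_neg hx, if_pos hs]
      have hxf : x v = false := by simpa using hx
      have hcast : (kup v : ℤ) ≤ (sigmaLoc G x v : ℤ) := by exact_mod_cast hs
      rw [hσ, hxf] at hcast
      simp only [Bool.false_eq_true, if_false, add_zero] at hcast
      rw [hls, pot_update]
      have hdval : ((if (true : Bool) = true then (1:ℤ) else 0)
          - (if x v = true then 1 else 0)) = 1 := by simp [hx]
      rw [hdval, ← hm]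
      have h1 := hΔ v
      linarith
    · left
      have hxf : x v = false := by simpa using hx
      have : localStep G kup kdown x v = Function.update x v (x v) := by
        unfold localStep; rw [if_neg hx, if_neg hs, hxf]
      rw [this, Function.update_eq_self]

lemma fold_le {n : ℕ} (G : SimpleGraph (Fin n)) (kup kdown : Fin n → ℕ)
    (hΔ : ∀ v : Fin n, (kdown v : ℤ) - (kup v : ℤ) ≤ 1) :
    ∀ (l : List (Fin n)) (x : Fin n → Bool),
      pot G kdown (l.foldl (localStep G kup kdown) x) ≤ pot G kdown x
  | [], x => le_refl _
  | a :: t, x => by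
    simp only [List.foldl_cons]
    rcases step_lemma G kup kdown hΔ x a with h | h
    · rw [h]; exact fold_le G kup kdown hΔ t x
    · have ih := fold_le G kup kdown hΔ t (localStep G kup kdown x a)
      linarith

lemma fold_strict {n : ℕ} (G : SimpleGraph (Fin n)) (kup kdown : Fin n → ℕ)
    (hΔ : ∀ v : Fin n, (kdown v : ℤ) - (kup v : ℤ) ≤ 1) :
    ∀ (l : List (Fin n)) (x : Fin n → Bool),
      l.foldl (localStep G kup kdown) x ≠ x →
      pot G kdown (l.foldl (localStep G kup kdown) x) + 1 ≤ pot G kdown x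
  | [], x, h => absurd rfl h
  | a :: t, x, h => by
    simp only [List.foldl_cons] at h ⊢
    rcases step_lemma G kup kdown hΔ x a with he | hlt
    · rw [he] at h ⊢; exact fold_strict G kup kdown hΔ t x h
    · have := fold_le G kup kdown hΔ t (localStep G kup kdown x a)
      linarith

lemma pot_lb {n : ℕ} (G : SimpleGraph (Fin n)) (kdown : Fin n → ℕ) (x : Fin n → Bool) :
    -(3*(n:ℤ) + n*n) ≤ pot G kdown x := by
  unfold pot
  have h1 : (-3:ℤ)*n ≤ ∑ v, (if x v = true then (1:ℤ) else 0) * (2*(kdown v : ℤ) - 3) := by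
    calc (-3:ℤ)*n = ∑ _v : Fin n, (-3:ℤ) := by
          simp [Finset.sum_const, Finset.card_univ, mul_comm]
      _ ≤ _ := by
          refine Finset.sum_le_sum fun v _ => ?_
          by_cases h : x v = true
          · simp only [h, if_true, one_mul]
            have : (0:ℤ) ≤ (kdown v : ℤ) := Int.natCast_nonneg _
            linarith
          · simp [h]
  have h2 : (∑ w, ∑ u, (if G.Adj w u then (1:ℤ) else 0) * (if x w = true then 1 else 0)
        * (if x u = true then 1 else 0)) ≤ (n:ℤ)*n := by
    calc (∑ w, ∑ u : Fin n, (if G.Adj w u then (1:ℤ) else 0) * (if x w = true then 1 else 0)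
          * (if x u = true then 1 else 0)) ≤ ∑ _w : Fin n, ∑ _u : Fin n, (1:ℤ) := by
          refine Finset.sum_le_sum fun w _ => Finset.sum_le_sum fun u _ => ?_
          by_cases h1 : G.Adj w u <;> by_cases h2 : x w = true <;> by_cases h3 : x u = true <;>
            simp [h1, h2, h3]
      _ = (n:ℤ)*n := by simp [Finset.sum_const, Finset.card_univ]
  linarith

/-- for a sequential (permutation) bi-threshold dynamical system whose
thresholds satisfy `kdown v - kup v ≤ 1` at every vertex, every trajectory reaches a fixed
point: for every state `x` there is `s` with `F_π^[s+1] x = F_π^[s] x`, i.e. `F_π` only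
has fixed points as limit sets. -/
theorem bithreshold_sds_fixed_points_of_delta_le_one
    (n : ℕ) (G : SimpleGraph (Fin n)) (kup kdown : Fin n → ℕ)
    (hΔ : ∀ v : Fin n, (kdown v : ℤ) - (kup v : ℤ) ≤ 1)
    (π : Equiv.Perm (Fin n)) :
    ∀ x : Fin n → Bool, ∃ s : ℕ,
      (sdsMap G kup kdown (List.ofFn fun i => π i))^[s + 1] x
        = (sdsMap G kup kdown (List.ofFn fun i => π i))^[s] x := by
  intro x
  by_contra h
  push_neg at h
  set L := (List.ofFn fun i => π i) with hL
  set F := sdsMap G kup kdown L with hF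
  have key : ∀ s : ℕ, pot G kdown (F^[s] x) ≤ pot G kdown x - s := by
    intro s
    induction s with
    | zero => simp
    | succ s ih =>
      have hne : F^[s+1] x ≠ F^[s] x := h s
      rw [Function.iterate_succ_apply'] at hne ⊢
      have hstr := fold_strict G kup kdown hΔ L (F^[s] x)
        (by simpa [hF, sdsMap] using hne)
      have h2 : pot G kdown (F (F^[s] x)) + 1 ≤ pot G kdown (F^[s] x) := by
        simpa [hF, sdsMap] using hstr
      push_cast
      linarith
  have hlb := pot_lb G kdown (F^[(pot G kdown x + (3*n + n*n) + 1).toNat] x)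
  have hk := key (pot G kdown x + (3*n + n*n) + 1).toNat
  have ht : (pot G kdown x + (3*(n:ℤ) + n*n) + 1)
      ≤ ((pot G kdown x + (3*n + n*n) + 1).toNat : ℤ) := Int.self_le_toNat _
  linarith
end

section
/- Let X be a finite undirected simple graph with bi-threshold vertex functions, let v be a vertex, and let x ∈ {0,1}^n with x_v = 0 be such that applying the X-local function F_v changes the state of v from 0 to 1. Then P(F_v(x)) − P(x) ≤ (k↓_v − k↑_v) − 2. -/
/-- The system potential: each vertex `v` contributes `kdown v` if it is in state `1` and
`d(v) + 2 - kup v` if it is in state `0`; each edge contributes `1` if its endpoints are in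
different states and `0` otherwise. -/
noncomputable def potential {n : ℕ} (G : SimpleGraph (Fin n)) (kup kdown : Fin n → ℕ)
    (x : Fin n → Bool) : ℤ :=
  (∑ v : Fin n,
      (if x v = true then (kdown v : ℤ) else ((G.neighborSet v).ncard : ℤ) + 2 - (kup v : ℤ)))
  + ({e : Sym2 (Fin n) | e ∈ G.edgeSet ∧ ∃ u w : Fin n, e = s(u, w) ∧ x u ≠ x w}.ncard : ℤ)

/-- if applying the local function `F_v` changes the state of `v` from `0`
to `1`, then the system potential changes by at most `(kdown v - kup v) - 2`. -/
theorem potential_drop_up_transition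
    (n : ℕ) (G : SimpleGraph (Fin n)) (kup kdown : Fin n → ℕ)
    (v : Fin n) (x : Fin n → Bool)
    (hxv : x v = false)
    (hchange : localStep G kup kdown x v v = true) :
    potential G kup kdown (localStep G kup kdown x v) - potential G kup kdown x
      ≤ ((kdown v : ℤ) - (kup v : ℤ)) - 2 := by
  classical
  -- threshold condition
  have hk : kup v ≤ sigmaLoc G x v := by
    unfold localStep at hchange
    rw [Function.update_self, hxv] at hchange
    by_contra h
    simp [h] at hchange
  have hyeq : localStep G kup kdown x v = Function.update x v true := by
    unfold localStep
    rw [hxv]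
    simp [hk]
  set y := Function.update x v true with hy
  rw [hyeq]
  have hyv : y v = true := Function.update_self v true x
  have hyu : ∀ u, u ≠ v → y u = x u := fun u h => Function.update_of_ne h true x
  set m := {u : Fin n | G.Adj v u ∧ x u = true}.ncard with hm
  set m' := {u : Fin n | G.Adj v u ∧ x u = false}.ncard with hm'
  set d := (G.neighborSet v).ncard with hd
  have hσ : sigmaLoc G x v = m := by unfold sigmaLoc; rw [hxv]; simp; rfl
  rw [hσ] at hk
  -- degree split
  have hdm : d = m + m' := by
    rw [hd, hm, hm']
    rw [← Set.ncard_union_eq ?_ (Set.toFinite _) (Set.toFinite _)]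
    · congr 1
      ext u
      simp only [SimpleGraph.mem_neighborSet, Set.mem_union, Set.mem_setOf_eq]
      rcases Bool.eq_false_or_eq_true (x u) with h | h <;> simp [h]
    · rw [Set.disjoint_left]
      rintro u ⟨_, h1⟩ ⟨_, h2⟩
      rw [h1] at h2; exact Bool.noConfusion h2
  have diff_iff : ∀ (z : Fin n → Bool) (a b : Fin n),
      (∃ u w, s(a,b) = s(u,w) ∧ z u ≠ z w) ↔ z a ≠ z b := by
    intro z a b
    constructor
    · rintro ⟨u, w, he, hne⟩
      rw [Sym2.eq_iff] at he
      rcases he with ⟨rfl, rfl⟩ | ⟨rfl, rfl⟩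
      · exact hne
      · exact hne.symm
    · exact fun h => ⟨a, b, rfl, h⟩
  set S := fun (z : Fin n → Bool) =>
    {e : Sym2 (Fin n) | e ∈ G.edgeSet ∧ ∃ u w : Fin n, e = s(u, w) ∧ z u ≠ z w} with hS
  -- incident edges
  have key : ∀ (z : Fin n → Bool) (c : Bool), z v = c →
      (S z ∩ {e | v ∈ e}) = (fun u => s(v,u)) '' {u | G.Adj v u ∧ z u ≠ c} := by
    intro z c hzv
    ext e
    induction e using Sym2.ind with
    | _ a b =>
      simp only [hS, Set.mem_inter_iff, Set.mem_setOf_eq, Set.mem_image, Sym2.mem_iff]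
      constructor
      · rintro ⟨⟨hedge, hdiff⟩, hv⟩
        rw [diff_iff z a b] at hdiff
        rw [SimpleGraph.mem_edgeSet] at hedge
        rcases hv with rfl | rfl
        · exact ⟨b, ⟨hedge, fun h => hdiff (hzv.trans h.symm)⟩, rfl⟩
        · exact ⟨a, ⟨hedge.symm, fun h => hdiff (h.trans hzv.symm)⟩, Sym2.eq_swap⟩
      · rintro ⟨u, ⟨hadj, hzu⟩, he⟩
        have he : s(v,u) = s(a,b) := he
        refine ⟨⟨?_, ?_⟩, ?_⟩
        · rw [← he, SimpleGraph.mem_edgeSet]; exact hadj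
        · rw [show s(a,b) = s(v,u) from he.symm, diff_iff z v u]
          exact fun h => hzu (h.symm.trans hzv)
        · have : v ∈ s(a,b) := by rw [← he]; exact Sym2.mem_mk_left v u
          rwa [Sym2.mem_iff] at this
  -- non-incident edges coincide
  have hC : S y ∩ {e | v ∉ e} = S x ∩ {e | v ∉ e} := by
    ext e
    induction e using Sym2.ind with
    | _ a b =>
      simp only [hS, Set.mem_inter_iff, Set.mem_setOf_eq, Sym2.mem_iff]
      constructor <;> rintro ⟨⟨hedge, hdiff⟩, hv⟩ <;>
        push_neg at hv <;>
        rw [diff_iff _ a b] at hdiff <;>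
        refine ⟨⟨hedge, ?_⟩, by push_neg; exact hv⟩ <;>
        rw [diff_iff _ a b]
      · rwa [hyu a (Ne.symm hv.1), hyu b (Ne.symm hv.2)] at hdiff
      · rwa [hyu a (Ne.symm hv.1), hyu b (Ne.symm hv.2)]
  -- injectivity of u ↦ s(v,u)
  have hinj : ∀ (A : Set (Fin n)), (∀ u ∈ A, u ≠ v) → Set.InjOn (fun u => s(v,u)) A := by
    intro A hA u hu u' hu' h
    simp only [Sym2.eq_iff] at h
    rcases h with ⟨_, h⟩ | ⟨h1, _⟩
    · exact h
    · exact absurd h1.symm (hA u' hu')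
  have hTx : (S x ∩ {e | v ∈ e}).ncard = m := by
    rw [key x false hxv]
    have hset : {u | G.Adj v u ∧ x u ≠ false} = {u : Fin n | G.Adj v u ∧ x u = true} := by
      ext u; simp [Bool.ne_false_iff]
    rw [hset, Set.ncard_image_of_injOn (hinj _ (fun u hu => (G.ne_of_adj hu.1).symm))]
  have hTy : (S y ∩ {e | v ∈ e}).ncard = m' := by
    rw [key y true hyv]
    have hset : {u | G.Adj v u ∧ y u ≠ true} = {u : Fin n | G.Adj v u ∧ x u = false} := by
      ext u
      simp only [Set.mem_setOf_eq]
      constructor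
      · rintro ⟨hadj, hne⟩
        rw [hyu u (G.ne_of_adj hadj).symm] at hne
        exact ⟨hadj, by revert hne; cases x u <;> simp⟩
      · rintro ⟨hadj, hf⟩
        refine ⟨hadj, ?_⟩
        rw [hyu u (G.ne_of_adj hadj).symm, hf]
        simp
    rw [hset, Set.ncard_image_of_injOn (hinj _ (fun u hu => (G.ne_of_adj hu.1).symm))]
  have split : ∀ z : Fin n → Bool,
      (S z).ncard = (S z ∩ {e | v ∈ e}).ncard + (S z ∩ {e | v ∉ e}).ncard := by
    intro z
    rw [← Set.ncard_union_eq ?_ (Set.toFinite _) (Set.toFinite _)]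
    · congr 1
      ext e
      by_cases h : v ∈ e <;> simp [Set.mem_inter_iff, h]
    · exact Set.disjoint_left.mpr (fun e he he' => he'.2 he.2)
  have hpot : ∀ z : Fin n → Bool, potential G kup kdown z =
      (∑ u : Fin n, (if z u = true then (kdown u : ℤ)
        else ((G.neighborSet u).ncard : ℤ) + 2 - (kup u : ℤ))) + ((S z).ncard : ℤ) := by
    intro z; rfl
  have hsum : (∑ u : Fin n, (if y u = true then (kdown u : ℤ)
        else ((G.neighborSet u).ncard : ℤ) + 2 - (kup u : ℤ)))
      - (∑ u : Fin n, (if x u = true then (kdown u : ℤ)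
        else ((G.neighborSet u).ncard : ℤ) + 2 - (kup u : ℤ)))
      = (kdown v : ℤ) - ((d : ℤ) + 2 - (kup v : ℤ)) := by
    rw [← Finset.sum_sub_distrib]
    rw [Finset.sum_eq_single v]
    · rw [hyv, hxv]; simp [hd]
    · intro u _ hu
      rw [hyu u hu, sub_self]
    · intro h; exact absurd (Finset.mem_univ v) h
  have hedge : ((S y).ncard : ℤ) - ((S x).ncard : ℤ) = (m' : ℤ) - (m : ℤ) := by
    rw [split y, split x, hTx, hTy, hC]
    push_cast
    ring
  have hk' : (kup v : ℤ) ≤ (m : ℤ) := by exact_mod_cast hk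
  have hdm' : (d : ℤ) = (m : ℤ) + (m' : ℤ) := by exact_mod_cast hdm
  rw [hpot y, hpot x]
  linarith [hsum, hedge]
end

section
/- Let X be a finite undirected simple graph with bi-threshold vertex functions, let v be a vertex, and let x ∈ {0,1}^n with x_v = 1 be such that applying the X-local function F_v changes the state of v from 1 to 0. Then P(F_v(x)) − P(x) ≤ (k↓_v − k↑_v) − 2. -/
lemma sym2_pred_iff {n : ℕ} (x : Fin n → Bool) (a b : Fin n) :
    (∃ u w : Fin n, s(a,b) = s(u,w) ∧ x u ≠ x w) ↔ x a ≠ x b := by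
  constructor
  · rintro ⟨u, w, h, hne⟩
    rw [Sym2.eq_iff] at h
    rcases h with ⟨rfl, rfl⟩ | ⟨rfl, rfl⟩
    · exact hne
    · exact hne.symm
  · exact fun h => ⟨a, b, rfl, h⟩

/-- if applying the local function `F_v` changes the state of `v` from `1`
to `0`, then the system potential changes by at most `(kdown v - kup v) - 2`. -/
theorem potential_drop_down_transition
    (n : ℕ) (G : SimpleGraph (Fin n)) (kup kdown : Fin n → ℕ)
    (v : Fin n) (x : Fin n → Bool)
    (hxv : x v = true)
    (hchange : localStep G kup kdown x v v = false) :
    potential G kup kdown (localStep G kup kdown x v) - potential G kup kdown x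
      ≤ ((kdown v : ℤ) - (kup v : ℤ)) - 2 := by
  classical
  have hσ : sigmaLoc G x v < kdown v := by
    by_contra h
    simp [localStep, Function.update_self, hxv, h] at hchange
  have hy : localStep G kup kdown x v = Function.update x v false := by
    simp [localStep, hxv, hσ]
  set y := Function.update x v false with hydef
  rw [hy]
  have hyv : y v = false := Function.update_self v false x
  have hyne : ∀ u : Fin n, u ≠ v → y u = x u := fun u hu => Function.update_of_ne hu false x
  -- counting sets on vertices
  set mF : Finset (Fin n) := Finset.univ.filter (fun u => G.Adj v u ∧ x u = true) with hmF
  set m0 : Finset (Fin n) := Finset.univ.filter (fun u => G.Adj v u ∧ x u = false) with hm0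
  set dF : Finset (Fin n) := Finset.univ.filter (fun u => G.Adj v u) with hdF
  have hsplit : mF.card + m0.card = dF.card := by
    rw [hmF, hm0, hdF]
    have h1 : (Finset.univ.filter (fun u => G.Adj v u ∧ x u = true))
        = (Finset.univ.filter (fun u => G.Adj v u)).filter (fun u => x u = true) := by
      rw [Finset.filter_filter]
    have h2 : (Finset.univ.filter (fun u => G.Adj v u ∧ x u = false))
        = (Finset.univ.filter (fun u => G.Adj v u)).filter (fun u => ¬ (x u = true)) := by
      rw [Finset.filter_filter]
      apply Finset.filter_congr
      intro u _
      simp [Bool.not_eq_true]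
    rw [h1, h2, Finset.card_filter_add_card_filter_not]
  -- sigma
  have hsig : sigmaLoc G x v = mF.card + 1 := by
    rw [sigmaLoc, hxv, if_pos rfl]
    congr 1
    have : {u : Fin n | G.Adj v u ∧ x u = true} = ↑mF := by
      ext u; simp [hmF]
    rw [this, Set.ncard_coe_finset]
  -- degree
  have hdeg : (G.neighborSet v).ncard = dF.card := by
    have : G.neighborSet v = ↑dF := by ext u; simp [hdF, SimpleGraph.neighborSet]
    rw [this, Set.ncard_coe_finset]
  -- edge sets as finsets
  set Ex : Finset (Sym2 (Fin n)) :=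
    G.edgeFinset.filter (fun e => ∃ u w : Fin n, e = s(u,w) ∧ x u ≠ x w) with hEx
  set Ey : Finset (Sym2 (Fin n)) :=
    G.edgeFinset.filter (fun e => ∃ u w : Fin n, e = s(u,w) ∧ y u ≠ y w) with hEy
  have hExcard : {e : Sym2 (Fin n) | e ∈ G.edgeSet ∧ ∃ u w : Fin n, e = s(u, w) ∧ x u ≠ x w}.ncard
      = Ex.card := by
    have : {e : Sym2 (Fin n) | e ∈ G.edgeSet ∧ ∃ u w : Fin n, e = s(u, w) ∧ x u ≠ x w} = ↑Ex := by
      ext e; simp [hEx, SimpleGraph.mem_edgeFinset]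
    rw [this, Set.ncard_coe_finset]
  have hEycard : {e : Sym2 (Fin n) | e ∈ G.edgeSet ∧ ∃ u w : Fin n, e = s(u, w) ∧ y u ≠ y w}.ncard
      = Ey.card := by
    have : {e : Sym2 (Fin n) | e ∈ G.edgeSet ∧ ∃ u w : Fin n, e = s(u, w) ∧ y u ≠ y w} = ↑Ey := by
      ext e; simp [hEy, SimpleGraph.mem_edgeFinset]
    rw [this, Set.ncard_coe_finset]
  -- split edge finsets by incidence at v
  have hExsplit : (Ex.filter (fun e => v ∈ e)).card + (Ex.filter (fun e => ¬ v ∈ e)).card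
      = Ex.card := Finset.card_filter_add_card_filter_not _
  have hEysplit : (Ey.filter (fun e => v ∈ e)).card + (Ey.filter (fun e => ¬ v ∈ e)).card
      = Ey.card := Finset.card_filter_add_card_filter_not _
  -- non-incident parts agree
  have hoff : Ex.filter (fun e => ¬ v ∈ e) = Ey.filter (fun e => ¬ v ∈ e) := by
    ext e
    simp only [hEx, hEy, Finset.mem_filter]
    constructor
    · rintro ⟨⟨he, u, w, rfl, hne⟩, hv⟩
      have hu : u ≠ v := fun h => hv (h ▸ Sym2.mem_mk_left u w)
      have hw : w ≠ v := fun h => hv (h ▸ Sym2.mem_mk_right u w)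
      exact ⟨⟨he, u, w, rfl, by rwa [hyne u hu, hyne w hw]⟩, hv⟩
    · rintro ⟨⟨he, u, w, rfl, hne⟩, hv⟩
      have hu : u ≠ v := fun h => hv (h ▸ Sym2.mem_mk_left u w)
      have hw : w ≠ v := fun h => hv (h ▸ Sym2.mem_mk_right u w)
      exact ⟨⟨he, u, w, rfl, by rwa [hyne u hu, hyne w hw] at hne⟩, hv⟩
  -- incident part for x: neighbors with x u = false
  have hincx : Ex.filter (fun e => v ∈ e) = m0.image (fun u => s(v,u)) := by
    ext e
    simp only [hEx, Finset.mem_filter, SimpleGraph.mem_edgeFinset, Finset.mem_image, hm0]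
    constructor
    · rintro ⟨⟨he, hP⟩, hv⟩
      induction e using Sym2.ind with
      | _ a b =>
        rw [SimpleGraph.mem_edgeSet] at he
        rw [sym2_pred_iff] at hP
        rcases Sym2.mem_iff.mp hv with rfl | rfl
        · refine ⟨b, ?_, rfl⟩
          simp only [Finset.mem_filter, Finset.mem_univ, true_and]
          refine ⟨he, ?_⟩
          rw [hxv] at hP
          simpa using hP.symm
        · refine ⟨a, ?_, Sym2.eq_swap⟩
          simp only [Finset.mem_filter, Finset.mem_univ, true_and]
          refine ⟨he.symm, ?_⟩
          rw [hxv] at hP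
          simpa using hP
    · rintro ⟨u, hu, rfl⟩
      simp only [Finset.mem_filter, Finset.mem_univ, true_and] at hu
      refine ⟨⟨(SimpleGraph.mem_edgeSet G).mpr hu.1, ?_⟩, Sym2.mem_mk_left v u⟩
      rw [sym2_pred_iff, hxv, hu.2]
      simp
  have hincy : Ey.filter (fun e => v ∈ e) = mF.image (fun u => s(v,u)) := by
    ext e
    simp only [hEy, Finset.mem_filter, SimpleGraph.mem_edgeFinset, Finset.mem_image, hmF]
    constructor
    · rintro ⟨⟨he, hP⟩, hv⟩
      induction e using Sym2.ind with
      | _ a b =>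
        rw [SimpleGraph.mem_edgeSet] at he
        rw [sym2_pred_iff] at hP
        rcases Sym2.mem_iff.mp hv with rfl | rfl
        · refine ⟨b, ?_, rfl⟩
          simp only [Finset.mem_filter, Finset.mem_univ, true_and]
          refine ⟨he, ?_⟩
          have hb : b ≠ v := fun h => (G.loopless.irrefl v (h ▸ he)).elim
          rw [hyv, hyne b hb] at hP
          simpa using hP.symm
        · refine ⟨a, ?_, Sym2.eq_swap⟩
          simp only [Finset.mem_filter, Finset.mem_univ, true_and]
          refine ⟨he.symm, ?_⟩
          have ha : a ≠ v := fun h => (G.loopless.irrefl v (h ▸ he.symm)).elim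
          rw [hyv, hyne a ha] at hP
          simpa using hP
    · rintro ⟨u, hu, rfl⟩
      simp only [Finset.mem_filter, Finset.mem_univ, true_and] at hu
      have hune : u ≠ v := fun h => (G.loopless.irrefl v (h ▸ hu.1)).elim
      refine ⟨⟨(SimpleGraph.mem_edgeSet G).mpr hu.1, ?_⟩, Sym2.mem_mk_left v u⟩
      rw [sym2_pred_iff, hyv, hyne u hune, hu.2]
      simp
  -- image injectivity
  have hinjOn : ∀ (s : Finset (Fin n)), (∀ u ∈ s, G.Adj v u) →
      (s.image (fun u => s(v,u))).card = s.card := by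
    intro s hs
    apply Finset.card_image_of_injOn
    intro a ha b hb hab
    rw [Sym2.eq_iff] at hab
    rcases hab with ⟨-, h⟩ | ⟨h1, h2⟩
    · exact h
    · exact absurd h2.symm (G.ne_of_adj (hs a ha))
  have hcx : (Ex.filter (fun e => v ∈ e)).card = m0.card := by
    rw [hincx]
    exact hinjOn m0 (fun u hu => by simp [hm0] at hu; exact hu.1)
  have hcy : (Ey.filter (fun e => v ∈ e)).card = mF.card := by
    rw [hincy]
    exact hinjOn mF (fun u hu => by simp [hmF] at hu; exact hu.1)
  -- vertex sum difference
  have hvsum : (∑ u : Fin n,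
      (if y u = true then (kdown u : ℤ) else ((G.neighborSet u).ncard : ℤ) + 2 - (kup u : ℤ)))
      - (∑ u : Fin n,
      (if x u = true then (kdown u : ℤ) else ((G.neighborSet u).ncard : ℤ) + 2 - (kup u : ℤ)))
      = ((dF.card : ℤ) + 2 - (kup v : ℤ)) - (kdown v : ℤ) := by
    rw [← Finset.sum_sub_distrib, Finset.sum_eq_single v]
    · rw [hyv, hxv, hdeg]
      simp
    · intro u _ hu
      rw [hyne u hu, sub_self]
    · intro h
      exact absurd (Finset.mem_univ v) h
  -- put it together
  have hm : (mF.card : ℤ) + 2 ≤ (kdown v : ℤ) := by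
    rw [hsig] at hσ
    omega
  rw [potential, potential, hExcard, hEycard]
  rw [← hExsplit, ← hEysplit, hoff, hcx, hcy] at *
  have := hvsum
  push_cast
  push_cast at this hm
  omega
end

section
/- Let n ≥ 3, let X = Circ_n be the cycle graph on vertices {1,…,n}, let every vertex have up-threshold k↑ = 1 and down-threshold k↓ = 3, and let π = (1,2,…,n). Then the state x = (0,0,…,0,1,0) (a single 1 in position n−1) is a periodic point of the SDS map F_π of period exactly n−1; in particular F_π has a cycle of length n−1. -/
/-- The cycle graph `Circ_n` on `Fin n` (vertex `i` of the paper corresponds to `i - 1`):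
vertices `v` and `w` are adjacent iff they are (cyclically) consecutive. -/
def circGraph (n : ℕ) : SimpleGraph (Fin n) :=
  SimpleGraph.fromRel (fun v w => (v.val + 1) % n = w.val)

namespace CircAux

/-- The combined bi-threshold update rule on a cycle with `kup = 1`, `kdown = 3`:
given the states `a`, `b`, `c` of the left neighbor, the vertex itself and the right
neighbor, the new state of the vertex. -/
def g (a b c : Bool) : Bool := if b then a && c else a || c

variable {n : ℕ} [NeZero n]

lemma succ_mod (hn : 1 ≤ n) (a : ℕ) (ha : a < n) :
    (a + 1) % n = if a = n - 1 then 0 else a + 1 := by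
  split
  · next h => rw [show a + 1 = n by omega]; exact Nat.mod_self n
  · next h => exact Nat.mod_eq_of_lt (by omega)

lemma pred_mod (hn : 1 ≤ n) (a : ℕ) (ha : a < n) :
    (n - 1 + a) % n = if a = 0 then n - 1 else a - 1 := by
  split
  · next h => subst h; rw [Nat.add_zero]; exact Nat.mod_eq_of_lt (by omega)
  · next h => rw [show n - 1 + a = (a - 1) + n by omega, Nat.add_mod_right]
              exact Nat.mod_eq_of_lt (by omega)

lemma val_one' (hn : 3 ≤ n) : (1 : Fin n).val = 1 := by
  rw [Fin.val_one']; exact Nat.mod_eq_of_lt (by omega)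

lemma val_add_one (hn : 3 ≤ n) (v : Fin n) :
    ((v + 1).val = if v.val = n - 1 then 0 else v.val + 1) := by
  rw [Fin.add_def, val_one' hn]
  exact succ_mod (by omega) v.val v.isLt

lemma val_sub_one (hn : 3 ≤ n) (v : Fin n) :
    ((v - 1).val = if v.val = 0 then n - 1 else v.val - 1) := by
  rw [Fin.sub_def, val_one' hn]
  exact pred_mod (by omega) v.val v.isLt

lemma adj_iff (hn : 3 ≤ n) (v u : Fin n) :
    ((circGraph n).Adj v u ↔ (u = v + 1 ∨ u = v - 1)) := by
  have hu := u.isLt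
  have hv := v.isLt
  rw [show (u = v + 1) ↔ u.val = (v + 1).val from Fin.ext_iff,
      show (u = v - 1) ↔ u.val = (v - 1).val from Fin.ext_iff,
      val_add_one hn, val_sub_one hn]
  simp only [circGraph, SimpleGraph.fromRel_adj, ne_eq, Fin.ext_iff]
  rw [succ_mod (by omega) v.val hv, succ_mod (by omega) u.val hu]
  split_ifs <;> omega

lemma add_one_ne_sub_one (hn : 3 ≤ n) (v : Fin n) :
    ((v + 1 : Fin n) ≠ v - 1) := by
  intro h
  have h2 := congrArg Fin.val h
  rw [val_add_one hn, val_sub_one hn] at h2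
  have hv := v.isLt
  split_ifs at h2 <;> omega

lemma pair_ncard {α : Type*} (a b : α) (hab : a ≠ b) (y : α → Bool) :
    {u | (u = a ∨ u = b) ∧ y u = true}.ncard
      = (if y a = true then 1 else 0) + (if y b = true then 1 else 0) := by
  cases ha : y a <;> cases hb : y b <;> simp only [Bool.false_eq_true, if_false, if_true]
  · rw [show {u | (u = a ∨ u = b) ∧ y u = true} = (∅ : Set α) by
      ext u
      simp only [Set.mem_setOf_eq, Set.mem_empty_iff_false, iff_false, not_and]
      rintro (rfl | rfl) h <;> simp_all]
    simp
  · rw [show {u | (u = a ∨ u = b) ∧ y u = true} = ({b} : Set α) by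
      ext u
      simp only [Set.mem_setOf_eq, Set.mem_singleton_iff]
      constructor
      · rintro ⟨rfl | rfl, h⟩ <;> simp_all
      · rintro rfl; simp_all]
    simp
  · rw [show {u | (u = a ∨ u = b) ∧ y u = true} = ({a} : Set α) by
      ext u
      simp only [Set.mem_setOf_eq, Set.mem_singleton_iff]
      constructor
      · rintro ⟨rfl | rfl, h⟩ <;> simp_all
      · rintro rfl; simp_all]
    simp
  · rw [show {u | (u = a ∨ u = b) ∧ y u = true} = ({a, b} : Set α) by
      ext u
      simp only [Set.mem_setOf_eq, Set.mem_insert_iff, Set.mem_singleton_iff]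
      constructor
      · rintro ⟨h, _⟩; exact h
      · rintro (rfl | rfl) <;> simp_all]
    exact Set.ncard_pair hab

lemma sigma_eq (hn : 3 ≤ n) (y : Fin n → Bool) (v : Fin n) :
    sigmaLoc (circGraph n) y v
      = ((if y (v + 1) = true then 1 else 0) + (if y (v - 1) = true then 1 else 0))
        + (if y v = true then 1 else 0) := by
  unfold sigmaLoc
  congr 1
  rw [show {u : Fin n | (circGraph n).Adj v u ∧ y u = true}
        = {u | (u = v + 1 ∨ u = v - 1) ∧ y u = true} by
    ext u; rw [Set.mem_setOf_eq, Set.mem_setOf_eq, adj_iff hn]]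
  exact pair_ncard _ _ (add_one_ne_sub_one hn v) y

lemma localStep_eq (hn : 3 ≤ n) (y : Fin n → Bool) (v : Fin n) :
    localStep (circGraph n) (fun _ => 1) (fun _ => 3) y v
      = Function.update y v (g (y (v - 1)) (y v) (y (v + 1))) := by
  unfold localStep g
  rw [sigma_eq hn]
  cases h0 : y v <;> cases h1 : y (v - 1) <;> cases h2 : y (v + 1) <;> simp [h0, h1, h2]

lemma g_decide (A B C : Prop) [Decidable A] [Decidable B] [Decidable C] :
    g (decide A) (decide B) (decide C) = decide ((B ∧ A ∧ C) ∨ (¬B ∧ (A ∨ C))) := by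
  by_cases hB : B <;> by_cases hA : A <;> by_cases hC : C <;> simp [g, *]

/-- Computation of one full sweep of the SDS map via the sequence of intermediate states. -/
lemma sweep (hn : 3 ≤ n) (x : Fin n → Bool) (Y : ℕ → Fin n → Bool)
    (h0 : Y 0 = x)
    (hstep : ∀ (j : ℕ) (hj : j < n),
      Function.update (Y j) ⟨j, hj⟩
        (g (Y j (⟨j, hj⟩ - 1)) (Y j ⟨j, hj⟩) (Y j (⟨j, hj⟩ + 1))) = Y (j + 1)) :
    sdsMap (circGraph n) (fun _ => 1) (fun _ => 3) (List.finRange n) x = Y n := by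
  have key : ∀ j, j ≤ n →
      ((List.finRange n).take j).foldl (localStep (circGraph n) (fun _ => 1) (fun _ => 3)) x
        = Y j := by
    intro j
    induction j with
    | zero => intro _; simpa using h0.symm
    | succ j ih =>
      intro hj
      have hjn : j < n := hj
      rw [show (List.finRange n).take (j+1)
            = (List.finRange n).take j ++ [(⟨j, hjn⟩ : Fin n)] by
        rw [List.take_succ]
        congr 1
        rw [List.getElem?_eq_getElem (by simpa using hjn)]
        simp [List.getElem_finRange]]
      rw [List.foldl_append, ih (le_of_lt hjn)]
      simp only [List.foldl_cons, List.foldl_nil]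
      rw [localStep_eq hn, hstep j hjn]
  have h := key n le_rfl
  rwa [List.take_of_length_le (by simp)] at h

/-- One sweep moves a single `1` at position `m` (with `1 ≤ m ≤ n - 2`) to position `m - 1`;
when `m = 1` the vertex `n - 1` also lights up. -/
lemma stepAB (hn : 3 ≤ n) (m : ℕ) (hm1 : 1 ≤ m) (hm2 : m ≤ n - 2) :
    sdsMap (circGraph n) (fun _ => 1) (fun _ => 3) (List.finRange n)
        (fun v => decide (v.val = m))
      = fun v => decide (v.val = m - 1 ∨ (m = 1 ∧ v.val = n - 1)) := by
  have h := sweep hn (fun v => decide (v.val = m))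
    (fun j v => decide ((v.val = m - 1 ∧ m ≤ j) ∨ (v.val = m ∧ j ≤ m)
        ∨ (m = 1 ∧ v.val = n - 1 ∧ n ≤ j)))
    (by funext v; rw [decide_eq_decide]; omega)
    ?hstep
  · rw [h]
    funext v
    rw [decide_eq_decide]
    have := v.isLt
    omega
  case hstep =>
    intro j hj
    funext u
    rcases eq_or_ne u ⟨j, hj⟩ with rfl | hu
    · rw [Function.update_self]
      simp only
      rw [g_decide, decide_eq_decide]
      obtain ⟨n', rfl⟩ : ∃ n', n = n' + 3 := ⟨n - 3, by omega⟩
      obtain ⟨m', rfl⟩ : ∃ m', m = m' + 1 := ⟨m - 1, by omega⟩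
      rw [val_sub_one hn, val_add_one hn]
      simp only [show ∀ a : ℕ, a + 1 - 1 = a from fun a => rfl,
        show n' + 3 - 1 = n' + 2 from rfl, show n' + 3 - 2 = n' + 1 from rfl]
      try simp only [Fin.val_mk]
      split_ifs <;>
        (try simp only [Nat.add_one_ne_zero, Nat.zero_ne_add_one, false_and, and_false,
          false_or, or_false, true_and, and_true, iff_true, true_iff, iff_false, false_iff]) <;>
        omega
    · rw [Function.update_of_ne hu]
      rw [decide_eq_decide]
      have h1 : u.val ≠ j := fun h => hu (Fin.ext h)
      have h2 := u.isLt
      omega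

/-- One sweep maps the state with `1`s exactly at `0` and `n - 1` to the single `1`
at `n - 2`. -/
lemma stepC (hn : 3 ≤ n) :
    sdsMap (circGraph n) (fun _ => 1) (fun _ => 3) (List.finRange n)
        (fun v => decide (v.val = 0 ∨ v.val = n - 1))
      = fun v => decide (v.val = n - 2) := by
  have h := sweep hn (fun v => decide (v.val = 0 ∨ v.val = n - 1))
    (fun j v => decide ((v.val = 0 ∧ j = 0) ∨ (v.val = n - 1 ∧ j ≤ n - 1)
        ∨ (v.val = n - 2 ∧ n - 1 ≤ j)))
    (by funext v; rw [decide_eq_decide]; omega)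
    ?hstep
  · rw [h]
    funext v
    rw [decide_eq_decide]
    have := v.isLt
    omega
  case hstep =>
    intro j hj
    funext u
    rcases eq_or_ne u ⟨j, hj⟩ with rfl | hu
    · rw [Function.update_self]
      simp only
      rw [g_decide, decide_eq_decide]
      obtain ⟨n', rfl⟩ : ∃ n', n = n' + 3 := ⟨n - 3, by omega⟩
      rw [val_sub_one hn, val_add_one hn]
      simp only [show ∀ a : ℕ, a + 1 - 1 = a from fun a => rfl,
        show n' + 3 - 1 = n' + 2 from rfl, show n' + 3 - 2 = n' + 1 from rfl]
      try simp only [Fin.val_mk]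
      split_ifs <;>
        (try simp only [Nat.add_one_ne_zero, Nat.zero_ne_add_one, false_and, and_false,
          false_or, or_false, true_and, and_true, iff_true, true_iff, iff_false, false_iff]) <;>
        omega
    · rw [Function.update_of_ne hu]
      rw [decide_eq_decide]
      have h1 : u.val ≠ j := fun h => hu (Fin.ext h)
      have h2 := u.isLt
      omega

end CircAux

/-- over `Circ_n` (`n ≥ 3`) with thresholds `kup = 1`, `kdown = 3` at every
vertex and update sequence `π = (1, 2, …, n)`, the state `(0, …, 0, 1, 0)` (the single `1`
at the paper's vertex `n-1`, i.e. at index `n-2` of `Fin n`) is a periodic point of the SDS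
map `F_π` of period exactly `n - 1`. -/
theorem circ_bithreshold_cycle_length
    (n : ℕ) (hn : 3 ≤ n) :
    (sdsMap (circGraph n) (fun _ => 1) (fun _ => 3) (List.finRange n))^[n - 1]
        (fun v : Fin n => decide (v.val = n - 2))
      = (fun v : Fin n => decide (v.val = n - 2)) ∧
    ∀ p : ℕ, 0 < p → p < n - 1 →
      (sdsMap (circGraph n) (fun _ => 1) (fun _ => 3) (List.finRange n))^[p]
          (fun v : Fin n => decide (v.val = n - 2))
        ≠ (fun v : Fin n => decide (v.val = n - 2)) := by
  haveI : NeZero n := ⟨by omega⟩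
  have key : ∀ k, k ≤ n - 2 →
      (sdsMap (circGraph n) (fun _ => 1) (fun _ => 3) (List.finRange n))^[k]
          (fun v : Fin n => decide (v.val = n - 2))
        = fun v : Fin n => decide (v.val = n - 2 - k ∨ (n - 2 ≤ k ∧ v.val = n - 1)) := by
    intro k
    induction k with
    | zero =>
      intro _
      rw [Function.iterate_zero_apply]
      funext v
      rw [decide_eq_decide]
      omega
    | succ k ih =>
      intro hk
      rw [Function.iterate_succ_apply', ih (by omega)]
      rw [show (fun v : Fin n => decide (v.val = n - 2 - k ∨ (n - 2 ≤ k ∧ v.val = n - 1)))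
            = (fun v : Fin n => decide (v.val = n - 2 - k)) by
        funext v; rw [decide_eq_decide]; omega]
      rw [CircAux.stepAB hn (n - 2 - k) (by omega) (by omega)]
      funext v
      rw [decide_eq_decide]
      omega
  constructor
  · rw [show n - 1 = (n - 2) + 1 by omega, Function.iterate_succ_apply', key (n - 2) le_rfl]
    rw [show (fun v : Fin n => decide (v.val = n - 2 - (n - 2) ∨ (n - 2 ≤ n - 2 ∧ v.val = n - 1)))
          = (fun v : Fin n => decide (v.val = 0 ∨ v.val = n - 1)) by
      funext v; rw [decide_eq_decide]; omega]
    exact CircAux.stepC hn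
  · intro p hp0 hp1 heq
    rw [key p (by omega)] at heq
    by_cases hpc : p = n - 2
    · have h2 := congrFun heq ⟨n - 1, by omega⟩
      simp only [Fin.val_mk, decide_eq_decide, and_true, true_and, or_true, true_or,
        and_false, false_and, or_false, false_or, iff_true, true_iff] at h2
      omega
    · have h2 := congrFun heq ⟨n - 2 - p, by omega⟩
      simp only [Fin.val_mk, decide_eq_decide, and_true, true_and, or_true, true_or,
        and_false, false_and, or_false, false_or, iff_true, true_iff] at h2
      omega
end

section
/- Let c ≥ 3 be an integer, set β = c−1, n = 3β+1 = 3c−2, and η = β+1. Let Y_n be the Y-tree on vertex set {1,…,n} with edges {i, i+1} for 1 ≤ i ≤ 2η−2, edges {i, i+1} for 2η ≤ i ≤ n−1, and the edge {η, n}. Assign every vertex the thresholds (k↑, k↓) = (1, 3), and let π = (1, 2, …, n). Then the SDS map F_π over Y_n has a periodic orbit of length c. -/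
/-- The Y-tree `Y_n` on `n = 3c - 2` vertices (`c ≥ 3`, `η = c`), 0-indexed: the paper's
vertex `i` corresponds to `i - 1`. Its edges are the path edges `{j, j+1}` (all `j` except
`j = 2η - 2 = 2c - 2`, 0-indexed) together with the edge `{η, n} = {c, 3c - 2}`
(0-indexed: `{c - 1, 3c - 3}`). -/
def yTree (c : ℕ) : SimpleGraph (Fin (3 * c - 2)) :=
  SimpleGraph.fromRel (fun v w =>
    (w.val = v.val + 1 ∧ v.val ≠ 2 * c - 2) ∨ (v.val = c - 1 ∧ w.val = 3 * c - 3))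


namespace YT

/-- The state predicate of the `i`-th configuration on the periodic orbit. -/
def SP (c i a : ℕ) : Prop :=
  if i = 0 then a + 1 = c ∨ a + 4 = 3 * c ∨ a + 3 = 3 * c
  else if i = c - 1 then a ≤ c ∨ a + 3 = 3 * c
  else (c ≤ a + i + 1 ∧ a + i + 1 ≤ 2 * c) ∨ (i + 3 ≤ c ∧ 3 * c ≤ a + i + 4 ∧ a + 3 ≤ 3 * c)

instance (c i a : ℕ) : Decidable (SP c i a) := by unfold SP; infer_instance

/-- The `i`-th configuration on the periodic orbit. -/
def stF (c i : ℕ) : Fin (3 * c - 2) → Bool := fun v => decide (SP c i v.val)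

/-- Value of a boolean configuration at a natural-number index. -/
def MfP {n : ℕ} (m : Fin n → Bool) (a : ℕ) : Prop := ∃ h : a < n, m ⟨a, h⟩ = true

/-- `v` has at least one neighbor (in the Y-tree) whose state satisfies `M`. -/
def OneP (c : ℕ) (M : ℕ → Prop) (k : ℕ) : Prop :=
  (k + 2 ≠ 2 * c ∧ M (k + 1)) ∨ (1 ≤ k ∧ k + 1 ≠ 2 * c ∧ M (k - 1)) ∨
  (k + 1 = c ∧ M (3 * c - 3)) ∨ (k + 3 = 3 * c ∧ M (c - 1))

/-- `v` has at least two neighbors whose states satisfy `M`. -/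
def TwoP (c : ℕ) (M : ℕ → Prop) (k : ℕ) : Prop :=
  ((k + 2 ≠ 2 * c ∧ M (k + 1)) ∧ (1 ≤ k ∧ k + 1 ≠ 2 * c ∧ M (k - 1))) ∨
  ((k + 2 ≠ 2 * c ∧ M (k + 1)) ∧ ((k + 1 = c ∧ M (3 * c - 3)) ∨ (k + 3 = 3 * c ∧ M (c - 1)))) ∨
  ((1 ≤ k ∧ k + 1 ≠ 2 * c ∧ M (k - 1)) ∧ ((k + 1 = c ∧ M (3 * c - 3)) ∨ (k + 3 = 3 * c ∧ M (c - 1))))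

lemma OneP_congr {c : ℕ} {M M' : ℕ → Prop} (h : ∀ a, M a ↔ M' a) (k : ℕ) :
    OneP c M k ↔ OneP c M' k := by unfold OneP; simp only [h]

lemma TwoP_congr {c : ℕ} {M M' : ℕ → Prop} (h : ∀ a, M a ↔ M' a) (k : ℕ) :
    TwoP c M k ↔ TwoP c M' k := by unfold TwoP; simp only [h]

lemma adj_iff {c : ℕ} (hc : 3 ≤ c) (v u : Fin (3 * c - 2)) :
    (yTree c).Adj v u ↔
      (u.val = v.val + 1 ∧ v.val ≠ 2 * c - 2) ∨ (v.val = u.val + 1 ∧ u.val ≠ 2 * c - 2) ∨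
      (v.val = c - 1 ∧ u.val = 3 * c - 3) ∨ (u.val = c - 1 ∧ v.val = 3 * c - 3) := by
  have hv := v.isLt; have hu := u.isLt
  simp only [yTree, SimpleGraph.fromRel_adj, ne_eq, Fin.ext_iff]
  omega

lemma adj_of {c : ℕ} (hc : 3 ≤ c) (v : Fin (3 * c - 2)) (a : ℕ) (h : a < 3 * c - 2)
    (hcond : (a = v.val + 1 ∧ v.val ≠ 2 * c - 2) ∨ (v.val = a + 1 ∧ a ≠ 2 * c - 2) ∨
      (v.val = c - 1 ∧ a = 3 * c - 3) ∨ (a = c - 1 ∧ v.val = 3 * c - 3)) :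
    (yTree c).Adj v ⟨a, h⟩ := (adj_iff hc v ⟨a, h⟩).mpr hcond

lemma MfP_val {n : ℕ} (m : Fin n → Bool) (u : Fin n) (h : m u = true) : MfP m u.val :=
  ⟨u.isLt, by simpa using h⟩

lemma classify {c : ℕ} (hc : 3 ≤ c) {m : Fin (3 * c - 2) → Bool} {v u : Fin (3 * c - 2)}
    (hadj : (yTree c).Adj v u) (hmu : m u = true) :
    (u.val = v.val + 1 ∧ v.val + 2 ≠ 2 * c ∧ MfP m (v.val + 1)) ∨
    (u.val = v.val - 1 ∧ 1 ≤ v.val ∧ v.val + 1 ≠ 2 * c ∧ MfP m (v.val - 1)) ∨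
    (u.val = 3 * c - 3 ∧ v.val + 1 = c ∧ MfP m (3 * c - 3)) ∨
    (u.val = c - 1 ∧ v.val + 3 = 3 * c ∧ MfP m (c - 1)) := by
  have hval := MfP_val m u hmu
  rw [adj_iff hc] at hadj
  have hv := v.isLt; have hu := u.isLt
  rcases hadj with ⟨h1, h2⟩ | ⟨h1, h2⟩ | ⟨h1, h2⟩ | ⟨h1, h2⟩
  · exact Or.inl ⟨h1, by omega, h1 ▸ hval⟩
  · refine Or.inr (Or.inl ⟨by omega, by omega, by omega, ?_⟩)
    have : u.val = v.val - 1 := by omega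
    exact this ▸ hval
  · exact Or.inr (Or.inr (Or.inl ⟨h2, by omega, h2 ▸ hval⟩))
  · exact Or.inr (Or.inr (Or.inr ⟨h1, by omega, h1 ▸ hval⟩))

lemma ex_one {c : ℕ} (hc : 3 ≤ c) (m : Fin (3 * c - 2) → Bool) (v : Fin (3 * c - 2)) :
    (∃ u, (yTree c).Adj v u ∧ m u = true) ↔ OneP c (MfP m) v.val := by
  constructor
  · rintro ⟨u, hadj, hmu⟩
    rcases classify hc hadj hmu with ⟨_, h2, h3⟩ | ⟨_, h2, h3, h4⟩ | ⟨_, h2, h3⟩ | ⟨_, h2, h3⟩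
    · exact Or.inl ⟨h2, h3⟩
    · exact Or.inr (Or.inl ⟨h2, h3, h4⟩)
    · exact Or.inr (Or.inr (Or.inl ⟨h2, h3⟩))
    · exact Or.inr (Or.inr (Or.inr ⟨h2, h3⟩))
  · rintro (⟨h1, hb, hm⟩ | ⟨h1, h2, hb, hm⟩ | ⟨h1, hb, hm⟩ | ⟨h1, hb, hm⟩)
    · exact ⟨⟨v.val + 1, hb⟩, adj_of hc v _ hb (Or.inl ⟨rfl, by omega⟩), hm⟩
    · exact ⟨⟨v.val - 1, hb⟩, adj_of hc v _ hb (Or.inr (Or.inl ⟨by omega, by omega⟩)), hm⟩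
    · exact ⟨⟨3 * c - 3, hb⟩, adj_of hc v _ hb (Or.inr (Or.inr (Or.inl ⟨by omega, rfl⟩))), hm⟩
    · exact ⟨⟨c - 1, hb⟩, adj_of hc v _ hb (Or.inr (Or.inr (Or.inr ⟨rfl, by omega⟩))), hm⟩

lemma ex_two {c : ℕ} (hc : 3 ≤ c) (m : Fin (3 * c - 2) → Bool) (v : Fin (3 * c - 2)) :
    (∃ u w, u ≠ w ∧ (yTree c).Adj v u ∧ m u = true ∧ (yTree c).Adj v w ∧ m w = true) ↔
      TwoP c (MfP m) v.val := by
  constructor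
  · rintro ⟨u, w, hne, hau, hmu, haw, hmw⟩
    have hne' : u.val ≠ w.val := fun h => hne (Fin.ext h)
    have hv := v.isLt
    unfold TwoP
    rcases classify hc hau hmu with ⟨hu1, hu2, hu3⟩ | ⟨hu1, hu2, hu3, hu4⟩ | ⟨hu1, hu2, hu3⟩ | ⟨hu1, hu2, hu3⟩ <;>
      rcases classify hc haw hmw with ⟨hw1, hw2, hw3⟩ | ⟨hw1, hw2, hw3, hw4⟩ | ⟨hw1, hw2, hw3⟩ | ⟨hw1, hw2, hw3⟩ <;>
      first
        | (exfalso; omega)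
        | exact Or.inl ⟨⟨hu2, hu3⟩, hw2, hw3, hw4⟩
        | exact Or.inl ⟨⟨hw2, hw3⟩, hu2, hu3, hu4⟩
        | exact Or.inr (Or.inl ⟨⟨hu2, hu3⟩, Or.inl ⟨hw2, hw3⟩⟩)
        | exact Or.inr (Or.inl ⟨⟨hu2, hu3⟩, Or.inr ⟨hw2, hw3⟩⟩)
        | exact Or.inr (Or.inl ⟨⟨hw2, hw3⟩, Or.inl ⟨hu2, hu3⟩⟩)
        | exact Or.inr (Or.inl ⟨⟨hw2, hw3⟩, Or.inr ⟨hu2, hu3⟩⟩)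
        | exact Or.inr (Or.inr ⟨⟨hu2, hu3, hu4⟩, Or.inl ⟨hw2, hw3⟩⟩)
        | exact Or.inr (Or.inr ⟨⟨hu2, hu3, hu4⟩, Or.inr ⟨hw2, hw3⟩⟩)
        | exact Or.inr (Or.inr ⟨⟨hw2, hw3, hw4⟩, Or.inl ⟨hu2, hu3⟩⟩)
        | exact Or.inr (Or.inr ⟨⟨hw2, hw3, hw4⟩, Or.inr ⟨hu2, hu3⟩⟩)
  · have hv := v.isLt
    rintro (⟨⟨h1, hb1, hm1⟩, h2, h3, hb2, hm2⟩ |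
            ⟨⟨h1, hb1, hm1⟩, (⟨h2, hb2, hm2⟩ | ⟨h2, hb2, hm2⟩)⟩ |
            ⟨⟨h1, h1', hb1, hm1⟩, (⟨h2, hb2, hm2⟩ | ⟨h2, hb2, hm2⟩)⟩)
    · exact ⟨⟨v.val + 1, hb1⟩, ⟨v.val - 1, hb2⟩, Fin.ne_of_val_ne (show v.val + 1 ≠ v.val - 1 by omega),
        adj_of hc v _ hb1 (Or.inl ⟨rfl, by omega⟩), hm1,
        adj_of hc v _ hb2 (Or.inr (Or.inl ⟨by omega, by omega⟩)), hm2⟩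
    · exact ⟨⟨v.val + 1, hb1⟩, ⟨3 * c - 3, hb2⟩, Fin.ne_of_val_ne (show v.val + 1 ≠ 3 * c - 3 by omega),
        adj_of hc v _ hb1 (Or.inl ⟨rfl, by omega⟩), hm1,
        adj_of hc v _ hb2 (Or.inr (Or.inr (Or.inl ⟨by omega, rfl⟩))), hm2⟩
    · exact absurd hb1 (by omega)
    · exact ⟨⟨v.val - 1, hb1⟩, ⟨3 * c - 3, hb2⟩, Fin.ne_of_val_ne (show v.val - 1 ≠ 3 * c - 3 by omega),
        adj_of hc v _ hb1 (Or.inr (Or.inl ⟨by omega, by omega⟩)), hm1,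
        adj_of hc v _ hb2 (Or.inr (Or.inr (Or.inl ⟨by omega, rfl⟩))), hm2⟩
    · exact ⟨⟨v.val - 1, hb1⟩, ⟨c - 1, hb2⟩, Fin.ne_of_val_ne (show v.val - 1 ≠ c - 1 by omega),
        adj_of hc v _ hb1 (Or.inr (Or.inl ⟨by omega, by omega⟩)), hm1,
        adj_of hc v _ hb2 (Or.inr (Or.inr (Or.inr ⟨rfl, by omega⟩))), hm2⟩

lemma localStep_self {N : ℕ} (G : SimpleGraph (Fin N)) (m : Fin N → Bool) (v : Fin N) :
    localStep G (fun _ => 1) (fun _ => 3) m v v =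
      if m v = true then decide (1 < {u | G.Adj v u ∧ m u = true}.ncard)
      else decide (0 < {u | G.Adj v u ∧ m u = true}.ncard) := by
  unfold localStep sigmaLoc
  rw [Function.update_self]
  beta_reduce
  by_cases hm : m v = true
  · rw [if_pos hm, if_pos hm, if_pos hm]
    split_ifs with h
    · have : ¬ 1 < {u | G.Adj v u ∧ m u = true}.ncard := by omega
      simp [this]
    · have : 1 < {u | G.Adj v u ∧ m u = true}.ncard := by omega
      simp [this]
  · rw [if_neg hm, if_neg hm, if_neg hm]
    split_ifs with h
    · have : 0 < {u | G.Adj v u ∧ m u = true}.ncard := by omega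
      simp [this]
    · have : ¬ 0 < {u | G.Adj v u ∧ m u = true}.ncard := by omega
      simp [this]

lemma localStep_true_iff {c : ℕ} (hc : 3 ≤ c) (m : Fin (3 * c - 2) → Bool) (v : Fin (3 * c - 2))
    (hm : m v = true) :
    (localStep (yTree c) (fun _ => 1) (fun _ => 3) m v v = true) ↔ TwoP c (MfP m) v.val := by
  rw [localStep_self, if_pos hm, decide_eq_true_eq,
    Set.one_lt_ncard (Set.toFinite _), ← ex_two hc m v]
  constructor
  · rintro ⟨a, ha, b, hb, hab⟩
    exact ⟨a, b, hab, ha.1, ha.2, hb.1, hb.2⟩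
  · rintro ⟨a, b, hab, h1, h2, h3, h4⟩
    exact ⟨a, ⟨h1, h2⟩, b, ⟨h3, h4⟩, hab⟩

lemma localStep_false_iff {c : ℕ} (hc : 3 ≤ c) (m : Fin (3 * c - 2) → Bool) (v : Fin (3 * c - 2))
    (hm : ¬ m v = true) :
    (localStep (yTree c) (fun _ => 1) (fun _ => 3) m v v = true) ↔ OneP c (MfP m) v.val := by
  rw [localStep_self, if_neg hm, decide_eq_true_eq,
    Set.ncard_pos (Set.toFinite _), ← ex_one hc m v]
  constructor
  · rintro ⟨a, ha⟩; exact ⟨a, ha.1, ha.2⟩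
  · rintro ⟨a, h1, h2⟩; exact ⟨a, h1, h2⟩

lemma sds_eq_of_pointwise {N : ℕ} (G : SimpleGraph (Fin N)) (kup kdown : Fin N → ℕ)
    (x y : Fin N → Bool)
    (h : ∀ v : Fin N, localStep G kup kdown (fun u => if u.val < v.val then y u else x u) v v = y v) :
    sdsMap G kup kdown (List.finRange N) x = y := by
  have main : ∀ k, k ≤ N → ((List.finRange N).take k).foldl (localStep G kup kdown) x
      = fun u => if u.val < k then y u else x u := by
    intro k
    induction k with
    | zero => intro _; funext u; simp
    | succ k ih =>
      intro hk
      have hk' : k < N := hk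
      have hget : (List.finRange N)[k]? = some ⟨k, hk'⟩ := by
        rw [List.getElem?_eq_getElem (by simpa using hk')]
        simp
      rw [List.take_succ, hget, List.foldl_append, ih (by omega)]
      simp only [Option.toList_some, List.foldl_cons, List.foldl_nil]
      funext u
      by_cases hu : u = ⟨k, hk'⟩
      · subst hu
        rw [h ⟨k, hk'⟩]
        simp
      · have hune : u.val ≠ k := fun hh => hu (Fin.ext hh)
        unfold localStep
        rw [Function.update_of_ne hu]
        split_ifs with h1 h2 h2 <;> first | rfl | omega
  have h1 := main N le_rfl
  have h2 : (List.finRange N).take N = List.finRange N := by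
    rw [List.take_of_length_le (by simp)]
  rw [h2] at h1
  unfold sdsMap
  rw [h1]
  funext u
  simp [u.isLt]

lemma step_char {c : ℕ} (hc : 3 ≤ c) (x y : Fin (3 * c - 2) → Bool) (PX PY : ℕ → Prop)
    (hX : ∀ v : Fin (3 * c - 2), x v = true ↔ PX v.val)
    (hY : ∀ v : Fin (3 * c - 2), y v = true ↔ PY v.val)
    (h : ∀ k, k < 3 * c - 2 →
      (PX k → (PY k ↔ TwoP c (fun a => a < 3 * c - 2 ∧ ((a < k ∧ PY a) ∨ (k ≤ a ∧ PX a))) k)) ∧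
      (¬ PX k → (PY k ↔ OneP c (fun a => a < 3 * c - 2 ∧ ((a < k ∧ PY a) ∨ (k ≤ a ∧ PX a))) k))) :
    sdsMap (yTree c) (fun _ => 1) (fun _ => 3) (List.finRange (3 * c - 2)) x = y := by
  apply sds_eq_of_pointwise
  intro v
  set m : Fin (3 * c - 2) → Bool := fun u => if u.val < v.val then y u else x u with hm
  have hM : ∀ a, MfP m a ↔ (a < 3 * c - 2 ∧ ((a < v.val ∧ PY a) ∨ (v.val ≤ a ∧ PX a))) := by
    intro a
    constructor
    · rintro ⟨ha, hv⟩
      refine ⟨ha, ?_⟩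
      have hv' : (if a < v.val then y ⟨a, ha⟩ else x ⟨a, ha⟩) = true := hv
      by_cases hak : a < v.val
      · rw [if_pos hak] at hv'
        exact Or.inl ⟨hak, (hY _).mp hv'⟩
      · rw [if_neg hak] at hv'
        exact Or.inr ⟨by omega, (hX _).mp hv'⟩
    · rintro ⟨ha, (⟨hak, hp⟩ | ⟨hak, hp⟩)⟩
      · refine ⟨ha, ?_⟩
        show (if a < v.val then y ⟨a, ha⟩ else x ⟨a, ha⟩) = true
        rw [if_pos hak]; exact (hY _).mpr hp
      · refine ⟨ha, ?_⟩
        show (if a < v.val then y ⟨a, ha⟩ else x ⟨a, ha⟩) = true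
        rw [if_neg (by omega)]; exact (hX _).mpr hp
  have hmv : m v = x v := by simp [hm]
  by_cases hx : PX v.val
  · have hmt : m v = true := by rw [hmv]; exact (hX v).mpr hx
    have key : (localStep (yTree c) (fun _ => 1) (fun _ => 3) m v v = true) ↔ PY v.val := by
      rw [localStep_true_iff hc m v hmt, TwoP_congr hM]
      exact ((h v.val v.isLt).1 hx).symm
    rw [Bool.eq_iff_iff, key]
    exact (hY v).symm
  · have hmt : ¬ m v = true := by rw [hmv]; exact fun hh => hx ((hX v).mp hh)
    have key : (localStep (yTree c) (fun _ => 1) (fun _ => 3) m v v = true) ↔ PY v.val := by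
      rw [localStep_false_iff hc m v hmt, OneP_congr hM]
      exact ((h v.val v.isLt).2 hx).symm
    rw [Bool.eq_iff_iff, key]
    exact (hY v).symm

lemma stF_iff {c i : ℕ} (v : Fin (3 * c - 2)) : stF c i v = true ↔ SP c i v.val :=
  decide_eq_true_iff

set_option maxHeartbeats 1000000

lemma slotA_simp {c k : ℕ} (PX PY : ℕ → Prop) :
    (k + 2 ≠ 2 * c ∧ (k + 1 < 3 * c - 2 ∧ ((k + 1 < k ∧ PY (k + 1)) ∨ (k ≤ k + 1 ∧ PX (k + 1))))) ↔
      (k + 2 ≠ 2 * c ∧ k + 3 < 3 * c ∧ PX (k + 1)) := by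
  constructor
  · rintro ⟨hg, hb, (⟨hl, _⟩ | ⟨_, hp⟩)⟩
    · exact absurd hl (by omega)
    · exact ⟨hg, by omega, hp⟩
  · rintro ⟨hg, hb, hp⟩
    exact ⟨hg, by omega, Or.inr ⟨by omega, hp⟩⟩

lemma slotB_simp {c k : ℕ} (hk : k < 3 * c - 2) (PX PY : ℕ → Prop) :
    (1 ≤ k ∧ k + 1 ≠ 2 * c ∧ (k - 1 < 3 * c - 2 ∧ ((k - 1 < k ∧ PY (k - 1)) ∨ (k ≤ k - 1 ∧ PX (k - 1))))) ↔
      (1 ≤ k ∧ k + 1 ≠ 2 * c ∧ PY (k - 1)) := by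
  constructor
  · rintro ⟨h1, hg, hb, (⟨_, hp⟩ | ⟨hl, _⟩)⟩
    · exact ⟨h1, hg, hp⟩
    · exact absurd hl (by omega)
  · rintro ⟨h1, hg, hp⟩
    exact ⟨h1, hg, by omega, Or.inl ⟨by omega, hp⟩⟩

lemma slotE1_simp {c k : ℕ} (hc : 3 ≤ c) (PX PY : ℕ → Prop) :
    (k + 1 = c ∧ (3 * c - 3 < 3 * c - 2 ∧ ((3 * c - 3 < k ∧ PY (3 * c - 3)) ∨ (k ≤ 3 * c - 3 ∧ PX (3 * c - 3))))) ↔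
      (k + 1 = c ∧ PX (3 * c - 3)) := by
  constructor
  · rintro ⟨h1, hb, (⟨hl, _⟩ | ⟨_, hp⟩)⟩
    · exact absurd hl (by omega)
    · exact ⟨h1, hp⟩
  · rintro ⟨h1, hp⟩
    exact ⟨h1, by omega, Or.inr ⟨by omega, hp⟩⟩

lemma slotE2_simp {c k : ℕ} (hc : 3 ≤ c) (PX PY : ℕ → Prop) :
    (k + 3 = 3 * c ∧ (c - 1 < 3 * c - 2 ∧ ((c - 1 < k ∧ PY (c - 1)) ∨ (k ≤ c - 1 ∧ PX (c - 1))))) ↔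
      (k + 3 = 3 * c ∧ PY (c - 1)) := by
  constructor
  · rintro ⟨h1, hb, (⟨_, hp⟩ | ⟨hl, _⟩)⟩
    · exact ⟨h1, hp⟩
    · exact absurd hl (by omega)
  · rintro ⟨h1, hp⟩
    exact ⟨h1, by omega, Or.inl ⟨by omega, hp⟩⟩

lemma OneP_simp {c k : ℕ} (hc : 3 ≤ c) (hk : k < 3 * c - 2) (PX PY : ℕ → Prop) :
    OneP c (fun a => a < 3 * c - 2 ∧ ((a < k ∧ PY a) ∨ (k ≤ a ∧ PX a))) k ↔
      ((k + 2 ≠ 2 * c ∧ k + 3 < 3 * c ∧ PX (k + 1)) ∨ (1 ≤ k ∧ k + 1 ≠ 2 * c ∧ PY (k - 1)) ∨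
       (k + 1 = c ∧ PX (3 * c - 3)) ∨ (k + 3 = 3 * c ∧ PY (c - 1))) := by
  simp only [OneP]
  exact or_congr (slotA_simp PX PY) (or_congr (slotB_simp hk PX PY)
    (or_congr (slotE1_simp hc PX PY) (slotE2_simp hc PX PY)))

lemma TwoP_simp {c k : ℕ} (hc : 3 ≤ c) (hk : k < 3 * c - 2) (PX PY : ℕ → Prop) :
    TwoP c (fun a => a < 3 * c - 2 ∧ ((a < k ∧ PY a) ∨ (k ≤ a ∧ PX a))) k ↔
      (((k + 2 ≠ 2 * c ∧ k + 3 < 3 * c ∧ PX (k + 1)) ∧ (1 ≤ k ∧ k + 1 ≠ 2 * c ∧ PY (k - 1))) ∨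
       ((k + 2 ≠ 2 * c ∧ k + 3 < 3 * c ∧ PX (k + 1)) ∧
         ((k + 1 = c ∧ PX (3 * c - 3)) ∨ (k + 3 = 3 * c ∧ PY (c - 1)))) ∨
       ((1 ≤ k ∧ k + 1 ≠ 2 * c ∧ PY (k - 1)) ∧
         ((k + 1 = c ∧ PX (3 * c - 3)) ∨ (k + 3 = 3 * c ∧ PY (c - 1))))) := by
  simp only [TwoP]
  exact or_congr (and_congr (slotA_simp PX PY) (slotB_simp hk PX PY))
    (or_congr (and_congr (slotA_simp PX PY) (or_congr (slotE1_simp hc PX PY) (slotE2_simp hc PX PY)))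
      (and_congr (slotB_simp hk PX PY) (or_congr (slotE1_simp hc PX PY) (slotE2_simp hc PX PY))))

lemma step0 {c : ℕ} (hc : 3 ≤ c) :
    sdsMap (yTree c) (fun _ => 1) (fun _ => 3) (List.finRange (3 * c - 2)) (stF c 0) = stF c 1 := by
  apply step_char hc _ _ (SP c 0) (SP c 1) (fun v => stF_iff v) (fun v => stF_iff v)
  intro k hk
  rw [TwoP_simp hc hk, OneP_simp hc hk]
  have hS0 : ∀ a, SP c 0 a ↔ (a + 1 = c ∨ a + 4 = 3 * c ∨ a + 3 = 3 * c) := fun a => by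
    simp [SP]
  have hS1 : ∀ a, SP c 1 a ↔
      ((c ≤ a + 1 + 1 ∧ a + 1 + 1 ≤ 2 * c) ∨ (1 + 3 ≤ c ∧ 3 * c ≤ a + 1 + 4 ∧ a + 3 ≤ 3 * c)) :=
    fun a => by simp [SP, show (1 : ℕ) ≠ 0 by omega, show ¬(1 = c - 1) by omega]
  simp only [hS0, hS1]
  constructor
  · intro _; omega
  · intro _; omega

lemma stepMid {c : ℕ} (hc : 3 ≤ c) (i : ℕ) (h1 : 1 ≤ i) (h2 : i + 1 ≤ c - 2) :
    sdsMap (yTree c) (fun _ => 1) (fun _ => 3) (List.finRange (3 * c - 2)) (stF c i) =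
      stF c (i + 1) := by
  apply step_char hc _ _ (SP c i) (SP c (i + 1)) (fun v => stF_iff v) (fun v => stF_iff v)
  intro k hk
  rw [TwoP_simp hc hk, OneP_simp hc hk]
  have hSI : ∀ a, SP c i a ↔
      ((c ≤ a + i + 1 ∧ a + i + 1 ≤ 2 * c) ∨ (i + 3 ≤ c ∧ 3 * c ≤ a + i + 4 ∧ a + 3 ≤ 3 * c)) :=
    fun a => by simp [SP, show i ≠ 0 by omega, show ¬(i = c - 1) by omega]
  have hSJ : ∀ a, SP c (i + 1) a ↔
      ((c ≤ a + (i + 1) + 1 ∧ a + (i + 1) + 1 ≤ 2 * c) ∨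
        ((i + 1) + 3 ≤ c ∧ 3 * c ≤ a + (i + 1) + 4 ∧ a + 3 ≤ 3 * c)) :=
    fun a => by simp [SP, show i + 1 ≠ 0 by omega, show ¬(i + 1 = c - 1) by omega]
  simp only [hSI, hSJ]
  constructor
  · intro hpx
    constructor
    · intro hpy
      rcases hpx with hx | hx <;> rcases hpy with hy | hy
      · exact Or.inl ⟨⟨by omega, by omega, Or.inl ⟨by omega, by omega⟩⟩,
          by omega, by omega, Or.inl ⟨by omega, by omega⟩⟩
      · exact absurd hy (by omega)
      · exact absurd hy (by omega)
      · by_cases hk3 : k + 3 = 3 * c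
        · exact Or.inr (Or.inr ⟨⟨by omega, by omega, Or.inr ⟨by omega, by omega, by omega⟩⟩,
            Or.inr ⟨by omega, Or.inl ⟨by omega, by omega⟩⟩⟩)
        · exact Or.inl ⟨⟨by omega, by omega, Or.inr ⟨by omega, by omega, by omega⟩⟩,
            by omega, by omega, Or.inr ⟨by omega, by omega, by omega⟩⟩
    · rintro (⟨hA, hB⟩ | ⟨hA, hE⟩ | ⟨hB, hE⟩) <;> omega
  · intro _; omega

lemma stepPen {c : ℕ} (hc : 3 ≤ c) :
    sdsMap (yTree c) (fun _ => 1) (fun _ => 3) (List.finRange (3 * c - 2)) (stF c (c - 2)) =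
      stF c (c - 1) := by
  apply step_char hc _ _ (SP c (c - 2)) (SP c (c - 1)) (fun v => stF_iff v) (fun v => stF_iff v)
  intro k hk
  rw [TwoP_simp hc hk, OneP_simp hc hk]
  have hSI : ∀ a, SP c (c - 2) a ↔
      ((c ≤ a + (c - 2) + 1 ∧ a + (c - 2) + 1 ≤ 2 * c) ∨
        ((c - 2) + 3 ≤ c ∧ 3 * c ≤ a + (c - 2) + 4 ∧ a + 3 ≤ 3 * c)) :=
    fun a => by simp [SP, show ¬(c - 2 = 0) by omega, show ¬(c - 2 = c - 1) by omega]
  have hSJ : ∀ a, SP c (c - 1) a ↔ (a ≤ c ∨ a + 3 = 3 * c) :=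
    fun a => by simp [SP, show ¬(c - 1 = 0) by omega]
  simp only [hSI, hSJ]
  constructor
  · intro _; omega
  · intro _; omega

lemma stepLast {c : ℕ} (hc : 3 ≤ c) :
    sdsMap (yTree c) (fun _ => 1) (fun _ => 3) (List.finRange (3 * c - 2)) (stF c (c - 1)) =
      stF c 0 := by
  apply step_char hc _ _ (SP c (c - 1)) (SP c 0) (fun v => stF_iff v) (fun v => stF_iff v)
  intro k hk
  rw [TwoP_simp hc hk, OneP_simp hc hk]
  have hSI : ∀ a, SP c (c - 1) a ↔ (a ≤ c ∨ a + 3 = 3 * c) :=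
    fun a => by simp [SP, show ¬(c - 1 = 0) by omega]
  have hSJ : ∀ a, SP c 0 a ↔ (a + 1 = c ∨ a + 4 = 3 * c ∨ a + 3 = 3 * c) := fun a => by
    simp [SP]
  simp only [hSI, hSJ]
  constructor
  · intro _; omega
  · intro _; omega

lemma step_master {c : ℕ} (hc : 3 ≤ c) (i : ℕ) (hi : i < c) :
    sdsMap (yTree c) (fun _ => 1) (fun _ => 3) (List.finRange (3 * c - 2)) (stF c i) =
      stF c (if i + 1 = c then 0 else i + 1) := by
  by_cases hlast : i = c - 1
  · subst hlast
    rw [if_pos (by omega)]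
    exact stepLast hc
  · rw [if_neg (by omega)]
    by_cases hpen : i = c - 2
    · subst hpen
      rw [show c - 2 + 1 = c - 1 by omega]
      exact stepPen hc
    · by_cases h0 : i = 0
      · subst h0
        exact step0 hc
      · exact stepMid hc i (by omega) (by omega)

lemma iter_eq {c : ℕ} (hc : 3 ≤ c) (i : ℕ) (hi : i ≤ c) :
    (sdsMap (yTree c) (fun _ => 1) (fun _ => 3) (List.finRange (3 * c - 2)))^[i] (stF c 0)
      = stF c (if i = c then 0 else i) := by
  induction i with
  | zero => rw [if_neg (by omega)]; rfl
  | succ k ih =>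
    have hk : k < c := by omega
    rw [Function.iterate_succ_apply', ih (by omega), if_neg (by omega), step_master hc k hk]

lemma distinct {c : ℕ} (hc : 3 ≤ c) (p : ℕ) (h1 : 0 < p) (h2 : p < c) : stF c p ≠ stF c 0 := by
  intro heq
  by_cases hp : p = c - 1
  · have h3 : SP c p 0 ↔ SP c 0 0 := by
      have := congrFun heq ⟨0, by omega⟩
      simpa [stF] using this
    simp only [SP] at h3
    split_ifs at h3 <;> omega
  · have h3 : SP c p (c - 1 - p) ↔ SP c 0 (c - 1 - p) := by
      have := congrFun heq ⟨c - 1 - p, by omega⟩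
      simpa [stF] using this
    simp only [SP] at h3
    split_ifs at h3 <;> omega

end YT

/-- for any `c ≥ 3`, the bi-threshold SDS map over the Y-tree on
`n = 3c - 2` vertices with thresholds `(kup, kdown) = (1, 3)` at every vertex and update
sequence `π = (1, 2, …, n)` has a periodic orbit of length `c`. -/
theorem ytree_bithreshold_cycle
    (c : ℕ) (hc : 3 ≤ c) :
    ∃ x : Fin (3 * c - 2) → Bool,
      (sdsMap (yTree c) (fun _ => 1) (fun _ => 3) (List.finRange (3 * c - 2)))^[c] x = x ∧
      ∀ p : ℕ, 0 < p → p < c →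
        (sdsMap (yTree c) (fun _ => 1) (fun _ => 3) (List.finRange (3 * c - 2)))^[p] x ≠ x := by
  refine ⟨YT.stF c 0, ?_, ?_⟩
  · have h := YT.iter_eq hc c le_rfl
    rwa [if_pos rfl] at h
  · intro p hp0 hpc
    have h := YT.iter_eq hc p (by omega)
    rw [if_neg (by omega)] at h
    rw [h]
    exact YT.distinct hc p hp0 hpc
end

section
/- For every integer c ≥ 2 there exists a tree X on n = 4c−3 vertices (namely the spider tree obtained by joining a center vertex of degree 4 to one endpoint of each of four disjoint paths on c−1 vertices) and a permutation π of its vertices such that the SDS map F_π over X, with all vertices assigned thresholds (k↑, k↓) = (1, 3), has a periodic orbit of length c. -/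
namespace SpiderAux

def par (m a : ℕ) : ℕ := if m ∣ (a - 1) then 0 else a - 1
lemma par_le (m a : ℕ) : par m a ≤ a - 1 := by unfold par; split <;> omega
lemma par_lt {m a : ℕ} (h : 0 < a) : par m a < a := by have := par_le m a; omega
def SG (m n : ℕ) : SimpleGraph (Fin n) where
  Adj u v := (0 < u.val ∧ v.val = par m u.val) ∨ (0 < v.val ∧ u.val = par m v.val)
  symm := by constructor; intro u v h; tauto
  loopless := by
    constructor
    intro v h
    rcases h with ⟨h1, h2⟩ | ⟨h1, h2⟩ <;> · have := par_lt (m := m) h1; omega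

lemma adj_center {m n : ℕ} (hm : 1 ≤ m) (hn : n = 4 * m + 1) (z u : Fin n)
    (hz : z.val = 0) :
    (SG m n).Adj z u ↔ (u.val = 1 ∨ u.val = m + 1 ∨ u.val = 2 * m + 1 ∨ u.val = 3 * m + 1) := by
  constructor
  · rintro (⟨h1, h2⟩ | ⟨h1, h2⟩)
    · omega
    · unfold par at h2
      split at h2
      · rename_i hd
        obtain ⟨d, hdval⟩ := hd
        have hub : u.val < n := u.isLt
        have hd3 : d ≤ 3 := by
          by_contra h4
          have : m * 4 ≤ m * d := Nat.mul_le_mul_left m (by omega)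
          omega
        interval_cases d <;> omega
      · omega
  · intro h
    right
    refine ⟨by omega, ?_⟩
    rw [hz]
    unfold par
    rw [if_pos ?_]
    rcases h with h | h | h | h
    · exact ⟨0, by omega⟩
    · exact ⟨1, by omega⟩
    · exact ⟨2, by omega⟩
    · exact ⟨3, by omega⟩


lemma par_arm {m : ℕ} (hm : 1 ≤ m) (i j : ℕ) (hj1 : 1 ≤ j) (hjm : j ≤ m) :
    par m (i * m + j) = if j = 1 then 0 else i * m + j - 1 := by
  unfold par
  have hrw : i * m + j - 1 = i * m + (j - 1) := by omega
  have hdvd : m ∣ (i * m + j - 1) ↔ m ∣ (j - 1) := by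
    rw [hrw]
    exact Nat.dvd_add_right (dvd_mul_left m i)
  by_cases h1 : j = 1
  · rw [if_pos h1, if_pos (hdvd.mpr (by simp [h1]))]
  · rw [if_neg h1, if_neg ?_]
    rw [hdvd]
    intro hd
    have := Nat.eq_zero_of_dvd_of_lt hd (by omega)
    omega

lemma adj_arm {m n : ℕ} (hm : 1 ≤ m) (hn : n = 4 * m + 1) (i j : ℕ) (hi : i < 4)
    (hj1 : 1 ≤ j) (hjm : j ≤ m) (k u : Fin n) (hk : k.val = i * m + j) :
    (SG m n).Adj k u ↔
      (u.val = (if j = 1 then 0 else i * m + j - 1)) ∨ (j < m ∧ u.val = i * m + j + 1) := by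
  have him : i * m ≤ 3 * m := Nat.mul_le_mul_right m (by omega)
  have hdm : m ∣ (i * m + j) ↔ j = m := by
    constructor
    · intro hd
      have : m ∣ j := (Nat.dvd_add_right (dvd_mul_left m i)).mp hd
      have := Nat.le_of_dvd (by omega) this
      omega
    · rintro rfl
      exact ⟨i + 1, by ring⟩
  constructor
  · rintro (⟨h1, h2⟩ | ⟨h1, h2⟩)
    · left; rw [h2, hk, par_arm hm i j hj1 hjm]
    · -- k.val = par m u.val
      unfold par at h2
      split at h2
      · omega
      · rename_i hnd
        right
        have hu : u.val = i * m + j + 1 := by omega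
        refine ⟨?_, hu⟩
        by_contra hjm'
        have hje : j = m := by omega
        exact hnd (by rw [show u.val - 1 = i * m + j by omega]; exact hdm.mpr hje)
  · rintro (h | ⟨hjlt, h⟩)
    · left
      refine ⟨by omega, ?_⟩
      rw [h, hk, par_arm hm i j hj1 hjm]
    · right
      refine ⟨by omega, ?_⟩
      rw [hk, h]
      unfold par
      rw [if_neg ?_]
      · omega
      · rw [show i * m + j + 1 - 1 = i * m + j by omega, hdm]; omega

/-- Canonical representation of a nonzero vertex. -/
lemma rep {m n : ℕ} (hm : 1 ≤ m) (hn : n = 4 * m + 1) (k : Fin n) :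
    k.val = 0 ∨ ∃ i j, i < 4 ∧ 1 ≤ j ∧ j ≤ m ∧ k.val = i * m + j := by
  by_cases h0 : k.val = 0
  · exact Or.inl h0
  right
  have hklt : k.val < n := k.isLt
  refine ⟨(k.val - 1) / m, (k.val - 1) % m + 1, ?_, by omega, ?_, ?_⟩
  · rw [Nat.div_lt_iff_lt_mul (by omega)]; omega
  · have := Nat.mod_lt (k.val - 1) (show 0 < m by omega); omega
  · have h := Nat.div_add_mod (k.val - 1) m
    rw [Nat.mul_comm]
    omega




lemma localStep_apply_self {n : ℕ} (G : SimpleGraph (Fin n)) (ku kd : Fin n → ℕ)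
    (s : Fin n → Bool) (v : Fin n) :
    localStep G ku kd s v v =
      (if s v = true then (if sigmaLoc G s v < kd v then false else true)
       else (if ku v ≤ sigmaLoc G s v then true else false)) := by
  unfold localStep; rw [Function.update_self]

lemma sigma_two {n : ℕ} (G : SimpleGraph (Fin n)) (s : Fin n → Bool) (v a b : Fin n)
    (hab : a ≠ b) (hadj : ∀ u, G.Adj v u ↔ (u = a ∨ u = b)) :
    sigmaLoc G s v = (if s a = true then 1 else 0) + (if s b = true then 1 else 0)
      + (if s v = true then 1 else 0) := by
  unfold sigmaLoc
  congr 1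
  have hset : {u : Fin n | G.Adj v u ∧ s u = true}
      = {u : Fin n | (u = a ∨ u = b) ∧ s u = true} := by
    ext u; rw [Set.mem_setOf_eq, Set.mem_setOf_eq, hadj]
  rw [hset]
  by_cases ha : s a = true <;> by_cases hb : s b = true
  · have : {u : Fin n | (u = a ∨ u = b) ∧ s u = true} = {a, b} := by
      ext u
      simp only [Set.mem_setOf_eq, Set.mem_insert_iff, Set.mem_singleton_iff]
      constructor
      · rintro ⟨h, _⟩; exact h
      · rintro (rfl | rfl) <;> simp [ha, hb]
    rw [this, Set.ncard_pair hab, if_pos ha, if_pos hb]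
  · have : {u : Fin n | (u = a ∨ u = b) ∧ s u = true} = {a} := by
      ext u
      simp only [Set.mem_setOf_eq, Set.mem_singleton_iff]
      constructor
      · rintro ⟨rfl | rfl, h⟩
        · rfl
        · exact absurd h hb
      · rintro rfl; exact ⟨Or.inl rfl, ha⟩
    rw [this, Set.ncard_singleton, if_pos ha, if_neg hb]
  · have : {u : Fin n | (u = a ∨ u = b) ∧ s u = true} = {b} := by
      ext u
      simp only [Set.mem_setOf_eq, Set.mem_singleton_iff]
      constructor
      · rintro ⟨rfl | rfl, h⟩
        · exact absurd h ha
        · rfl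
      · rintro rfl; exact ⟨Or.inr rfl, hb⟩
    rw [this, Set.ncard_singleton, if_neg ha, if_pos hb]
  · have : {u : Fin n | (u = a ∨ u = b) ∧ s u = true} = ∅ := by
      ext u
      simp only [Set.mem_setOf_eq, Set.mem_empty_iff_false, iff_false, not_and]
      rintro (rfl | rfl) <;> simp [ha, hb]
    rw [this, Set.ncard_empty, if_neg ha, if_neg hb]

lemma sigma_one {n : ℕ} (G : SimpleGraph (Fin n)) (s : Fin n → Bool) (v a : Fin n)
    (hadj : ∀ u, G.Adj v u ↔ u = a) :
    sigmaLoc G s v = (if s a = true then 1 else 0) + (if s v = true then 1 else 0) := by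
  unfold sigmaLoc
  congr 1
  have hset : {u : Fin n | G.Adj v u ∧ s u = true}
      = {u : Fin n | u = a ∧ s u = true} := by
    ext u; rw [Set.mem_setOf_eq, Set.mem_setOf_eq, hadj]
  rw [hset]
  by_cases ha : s a = true
  · have : {u : Fin n | u = a ∧ s u = true} = {a} := by
      ext u
      simp only [Set.mem_setOf_eq, Set.mem_singleton_iff]
      constructor
      · rintro ⟨rfl, _⟩; rfl
      · rintro rfl; exact ⟨rfl, ha⟩
    rw [this, Set.ncard_singleton, if_pos ha]
  · have : {u : Fin n | u = a ∧ s u = true} = ∅ := by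
      ext u
      simp only [Set.mem_setOf_eq, Set.mem_empty_iff_false, iff_false, not_and]
      rintro rfl; simp [ha]
    rw [this, Set.ncard_empty, if_neg ha]

lemma arm_mid {n : ℕ} (G : SimpleGraph (Fin n)) (s : Fin n → Bool) (v a b : Fin n)
    (hab : a ≠ b) (hadj : ∀ u, G.Adj v u ↔ (u = a ∨ u = b)) :
    localStep G (fun _ => 1) (fun _ => 3) s v v =
      (if s v = true then (s a && s b) else (s a || s b)) := by
  rw [localStep_apply_self, sigma_two G s v a b hab hadj]
  by_cases hv : s v = true <;> by_cases ha : s a = true <;> by_cases hb : s b = true <;>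
    simp [hv, ha, hb]

lemma arm_end {n : ℕ} (G : SimpleGraph (Fin n)) (s : Fin n → Bool) (v a : Fin n)
    (hadj : ∀ u, G.Adj v u ↔ u = a) :
    localStep G (fun _ => 1) (fun _ => 3) s v v =
      (if s v = true then false else s a) := by
  rw [localStep_apply_self, sigma_one G s v a hadj]
  by_cases hv : s v = true <;> by_cases ha : s a = true <;> simp [hv, ha]

lemma center_stays {n : ℕ} (G : SimpleGraph (Fin n)) (s : Fin n → Bool) (v a b : Fin n)
    (hab : a ≠ b) (ha : G.Adj v a) (hb : G.Adj v b) (hsa : s a = true) (hsb : s b = true)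
    (hsv : s v = true) :
    localStep G (fun _ => 1) (fun _ => 3) s v v = true := by
  rw [localStep_apply_self, if_pos hsv, if_neg ?_, ]
  have hsub : ({a, b} : Set (Fin n)) ⊆ {u : Fin n | G.Adj v u ∧ s u = true} := by
    rintro u (rfl | rfl)
    · exact ⟨ha, hsa⟩
    · exact ⟨hb, hsb⟩
  have h2 : 2 ≤ {u : Fin n | G.Adj v u ∧ s u = true}.ncard := by
    calc 2 = ({a, b} : Set (Fin n)).ncard := (Set.ncard_pair hab).symm
    _ ≤ _ := Set.ncard_le_ncard hsub (Set.toFinite _)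
  unfold sigmaLoc
  rw [if_pos hsv]
  omega

/-- One sweep of the identity schedule. -/
lemma sweep {n : ℕ} (G : SimpleGraph (Fin n)) (ku kd : Fin n → ℕ) (x y : Fin n → Bool)
    (h : ∀ (k : Fin n) (s : Fin n → Bool),
      (∀ v : Fin n, s v = if v.val < k.val then y v else x v) →
      localStep G ku kd s k k = y k) :
    sdsMap G ku kd (List.finRange n) x = y := by
  have main : ∀ j, j ≤ n → ((List.finRange n).take j).foldl (localStep G ku kd) x
      = fun v => if v.val < j then y v else x v := by
    intro j
    induction j with
    | zero => intro _; funext v; simp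
    | succ j ih =>
      intro hj
      have hjn : j < n := by omega
      rw [List.take_succ]
      have hget : (List.finRange n)[j]? = some ⟨j, hjn⟩ := by
        rw [List.getElem?_eq_getElem (by simpa using hjn)]
        simp [List.getElem_finRange, Fin.ext_iff]
      rw [hget, List.foldl_append, ih (by omega)]
      simp only [Option.toList_some, List.foldl_cons, List.foldl_nil]
      funext v
      by_cases hv : v = (⟨j, hjn⟩ : Fin n)
      · subst hv
        rw [h ⟨j, hjn⟩ _ (fun v => rfl)]
        simp
      · have hvval : v.val ≠ j := fun hh => hv (Fin.ext hh)
        unfold localStep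
        rw [Function.update_of_ne hv]
        by_cases hlt : v.val < j
        · rw [if_pos hlt, if_pos (by omega)]
        · rw [if_neg hlt, if_neg (by omega)]
  have hfull : (List.finRange n) = (List.finRange n).take n := by
    rw [List.take_of_length_le (by simp)]
  unfold sdsMap
  rw [hfull, main n le_rfl]
  funext v
  simp [v.isLt]


/-- State with arms 0,1 on up to level `p` and arms 2,3 on up to level `q`. -/
def xst (m p q : ℕ) (v : ℕ) : Bool :=
  if v = 0 then true
  else if v ≤ 2 * m then decide ((v - 1) % m + 1 ≤ p) else decide ((v - 1) % m + 1 ≤ q)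

lemma xst_zero (m p q : ℕ) : xst m p q 0 = true := rfl

lemma xst_arm {m : ℕ} (hm : 1 ≤ m) (p q i j : ℕ) (hi : i < 4) (hj1 : 1 ≤ j) (hjm : j ≤ m) :
    xst m p q (i * m + j) = if i ≤ 1 then decide (j ≤ p) else decide (j ≤ q) := by
  have hmod : (i * m + j - 1) % m + 1 = j := by
    rw [show i * m + j - 1 = (j - 1) + i * m by omega, Nat.add_mul_mod_self_right,
      Nat.mod_eq_of_lt (by omega)]
    omega
  unfold xst
  rw [if_neg (by omega)]
  interval_cases i <;> simp only [hmod] <;> [rw [if_pos (by omega), if_pos (by omega)];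
    rw [if_pos (by omega), if_pos (by omega)];
    rw [if_neg (by omega), if_neg (by omega)];
    rw [if_neg (by omega), if_neg (by omega)]]



lemma arm_master {m n : ℕ} (hm : 1 ≤ m) (hn : n = 4 * m + 1) (px qx py qy : ℕ)
    (k : Fin n) (i j : ℕ) (hi : i < 4) (hj1 : 1 ≤ j) (hjm : j ≤ m) (hk : k.val = i * m + j)
    (s : Fin n → Bool)
    (hs : ∀ v : Fin n, s v = if v.val < k.val then xst m py qy v.val else xst m px qx v.val)
    (hbool_mid : j < m →
      (if (if i ≤ 1 then decide (j ≤ px) else decide (j ≤ qx)) = true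
        then ((if j = 1 then true
                else if i ≤ 1 then decide (j - 1 ≤ py) else decide (j - 1 ≤ qy)) &&
              (if i ≤ 1 then decide (j + 1 ≤ px) else decide (j + 1 ≤ qx)))
        else ((if j = 1 then true
                else if i ≤ 1 then decide (j - 1 ≤ py) else decide (j - 1 ≤ qy)) ||
              (if i ≤ 1 then decide (j + 1 ≤ px) else decide (j + 1 ≤ qx))))
       = (if i ≤ 1 then decide (j ≤ py) else decide (j ≤ qy)))
    (hbool_end : j = m →
      (if (if i ≤ 1 then decide (j ≤ px) else decide (j ≤ qx)) = true then false
        else (if j = 1 then true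
                else if i ≤ 1 then decide (j - 1 ≤ py) else decide (j - 1 ≤ qy)))
       = (if i ≤ 1 then decide (j ≤ py) else decide (j ≤ qy))) :
    localStep (SG m n) (fun _ => 1) (fun _ => 3) s k k = xst m py qy k.val := by
  have hkn : k.val < n := k.isLt
  rw [hk] at hkn
  have him : i * m ≤ 3 * m := Nat.mul_le_mul_right m (by omega)
  have hlftlt : (if j = 1 then 0 else i * m + j - 1) < n := by split <;> omega
  set lft : Fin n := ⟨if j = 1 then 0 else i * m + j - 1, hlftlt⟩ with hlftdef
  have hsk : s k = xst m px qx k.val := by rw [hs k, if_neg (lt_irrefl k.val)]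
  have hsl : s lft = xst m py qy lft.val := by
    rw [hs lft, if_pos]
    show (if j = 1 then 0 else i * m + j - 1) < k.val
    rw [hk]; split <;> omega
  have exk : xst m px qx k.val = (if i ≤ 1 then decide (j ≤ px) else decide (j ≤ qx)) := by
    rw [hk, xst_arm hm px qx i j hi hj1 hjm]
  have eyk : xst m py qy k.val = (if i ≤ 1 then decide (j ≤ py) else decide (j ≤ qy)) := by
    rw [hk, xst_arm hm py qy i j hi hj1 hjm]
  have eyl : xst m py qy lft.val
      = (if j = 1 then true
          else if i ≤ 1 then decide (j - 1 ≤ py) else decide (j - 1 ≤ qy)) := by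
    rcases eq_or_ne j 1 with rfl | hj1'
    · show xst m py qy (if 1 = 1 then 0 else i * m + 1 - 1) = _
      rw [if_pos rfl, if_pos rfl, xst_zero]
    · show xst m py qy (if j = 1 then 0 else i * m + j - 1) = _
      rw [if_neg hj1', if_neg hj1', show i * m + j - 1 = i * m + (j - 1) by omega,
        xst_arm hm py qy i (j - 1) hi (by omega) (by omega)]
  rcases Nat.lt_or_ge j m with hlt | hge
  · -- middle vertex: two neighbours
    have hbound : i * m + j + 1 < n := by omega
    set rgt : Fin n := ⟨i * m + j + 1, hbound⟩ with hrgtdef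
    have hlv : lft.val = if j = 1 then 0 else i * m + j - 1 := rfl
    have hrv : rgt.val = i * m + j + 1 := rfl
    have hne : lft ≠ rgt := Fin.ne_of_val_ne (by rw [hlv, hrv]; split <;> omega)
    have hadj : ∀ u, (SG m n).Adj k u ↔ (u = lft ∨ u = rgt) := by
      intro u
      rw [adj_arm hm hn i j hi hj1 hjm k u hk]
      constructor
      · rintro (h | ⟨_, h⟩)
        · exact Or.inl (Fin.ext h)
        · exact Or.inr (Fin.ext h)
      · rintro (rfl | rfl)
        · exact Or.inl rfl
        · exact Or.inr ⟨hlt, rfl⟩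
    have hsr : s rgt = xst m px qx rgt.val := by
      rw [hs rgt, if_neg]
      show ¬ (i * m + j + 1 < k.val)
      rw [hk]; omega
    have exr : xst m px qx rgt.val
        = (if i ≤ 1 then decide (j + 1 ≤ px) else decide (j + 1 ≤ qx)) := by
      show xst m px qx (i * m + j + 1) = _
      rw [show i * m + j + 1 = i * m + (j + 1) by omega,
        xst_arm hm px qx i (j + 1) hi (by omega) (by omega)]
    rw [arm_mid (SG m n) s k lft rgt hne hadj, hsk, hsl, hsr, exk, exr, eyl, eyk]
    exact hbool_mid hlt
  · -- end vertex: one neighbour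
    have hjm' : j = m := by omega
    have hadj : ∀ u, (SG m n).Adj k u ↔ u = lft := by
      intro u
      rw [adj_arm hm hn i j hi hj1 hjm k u hk]
      constructor
      · rintro (h | ⟨h, _⟩)
        · exact Fin.ext h
        · omega
      · rintro rfl
        exact Or.inl rfl
    rw [arm_end (SG m n) s k lft hadj, hsk, hsl, exk, eyl, eyk]
    exact hbool_end hjm'

lemma xst_one {m : ℕ} (hm : 1 ≤ m) (p q : ℕ) (hp : 1 ≤ p) : xst m p q 1 = true := by
  unfold xst
  rw [if_neg one_ne_zero, if_pos (by omega)]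
  simp only [Nat.sub_self, Nat.zero_mod, Nat.zero_add, decide_eq_true_eq]
  omega

lemma xst_m1 {m : ℕ} (hm : 1 ≤ m) (p q : ℕ) (hp : 1 ≤ p) : xst m p q (m + 1) = true := by
  rw [show m + 1 = 1 * m + 1 by omega, xst_arm hm p q 1 1 (by omega) le_rfl hm]
  simp only [le_refl, if_pos, decide_eq_true_eq]
  omega

lemma xst_2m1 {m : ℕ} (hm : 1 ≤ m) (p q : ℕ) (hq : 1 ≤ q) : xst m p q (2 * m + 1) = true := by
  rw [xst_arm hm p q 2 1 (by omega) le_rfl hm]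
  rw [if_neg (by omega)]
  simp only [decide_eq_true_eq]
  omega

lemma xst_3m1 {m : ℕ} (hm : 1 ≤ m) (p q : ℕ) (hq : 1 ≤ q) : xst m p q (3 * m + 1) = true := by
  rw [xst_arm hm p q 3 1 (by omega) le_rfl hm]
  rw [if_neg (by omega)]
  simp only [decide_eq_true_eq]
  omega

lemma center_case {m n : ℕ} (hm : 1 ≤ m) (hn : n = 4 * m + 1) (k : Fin n) (h0 : k.val = 0)
    (s : Fin n → Bool) (a b : Fin n) (hane : a.val ≠ b.val)
    (haval : a.val = 1 ∨ a.val = m + 1 ∨ a.val = 2 * m + 1 ∨ a.val = 3 * m + 1)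
    (hbval : b.val = 1 ∨ b.val = m + 1 ∨ b.val = 2 * m + 1 ∨ b.val = 3 * m + 1)
    (hsa : s a = true) (hsb : s b = true) (hsk : s k = true) :
    localStep (SG m n) (fun _ => 1) (fun _ => 3) s k k = true :=
  center_stays _ s k a b (Fin.ne_of_val_ne hane) ((adj_center hm hn k a h0).mpr haval)
    ((adj_center hm hn k b h0).mpr hbval) hsa hsb hsk

lemma sweepA {m n : ℕ} (hm : 1 ≤ m) (hn : n = 4 * m + 1) (p : ℕ) (h2 : 2 ≤ p) (hpm : p ≤ m) :
    sdsMap (SG m n) (fun _ => 1) (fun _ => 3) (List.finRange n)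
      (fun v => xst m p (p - 1) v.val) = fun v => xst m (p - 1) (p - 2) v.val := by
  apply sweep
  intro k s hs
  show localStep (SG m n) (fun _ => 1) (fun _ => 3) s k k = xst m (p - 1) (p - 2) k.val
  rcases rep hm hn k with h0 | ⟨i, j, hi, hj1, hjm, hk⟩
  · -- center
    rw [h0, xst_zero]
    have h1n : (1 : ℕ) < n := by omega
    have hmn : m + 1 < n := by omega
    refine center_case hm hn k h0 s ⟨1, h1n⟩ ⟨m + 1, hmn⟩ (show (1 : ℕ) ≠ m + 1 by omega)
      (Or.inl rfl) (Or.inr (Or.inl rfl)) ?_ ?_ ?_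
    · rw [hs ⟨1, h1n⟩, if_neg (by omega)]
      exact xst_one hm p (p - 1) (by omega)
    · rw [hs ⟨m + 1, hmn⟩, if_neg (by omega)]
      exact xst_m1 hm p (p - 1) (by omega)
    · rw [hs k, if_neg (by omega), h0, xst_zero]
  · refine arm_master hm hn p (p - 1) (p - 1) (p - 2) k i j hi hj1 hjm hk s hs ?_ ?_
    · intro hlt
      have e1 : (if j = 1 then true
          else if i ≤ 1 then decide (j - 1 ≤ p - 1) else decide (j - 1 ≤ p - 2))
          = (if i ≤ 1 then decide (j ≤ p) else decide (j ≤ p - 1)) := by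
        rcases eq_or_ne j 1 with rfl | hj'
        · rw [if_pos rfl]
          symm
          split <;> (simp only [decide_eq_true_eq]; omega)
        · rw [if_neg hj']
          split <;> exact decide_eq_decide.mpr (by omega)
      have e2 : (if i ≤ 1 then decide (j + 1 ≤ p) else decide (j + 1 ≤ p - 1))
          = (if i ≤ 1 then decide (j ≤ p - 1) else decide (j ≤ p - 2)) := by
        split <;> exact decide_eq_decide.mpr (by omega)
      rw [e1, e2]
      cases hX : (if i ≤ 1 then decide (j ≤ p) else decide (j ≤ p - 1)) <;> simp [hX]
    · intro hj'
      subst hj'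
      have e1 : (if j = 1 then true
          else if i ≤ 1 then decide (j - 1 ≤ p - 1) else decide (j - 1 ≤ p - 2))
          = (if i ≤ 1 then decide (j ≤ p) else decide (j ≤ p - 1)) := by
        rcases eq_or_ne j 1 with rfl | hj'
        · rw [if_pos rfl]
          symm
          split <;> (simp only [decide_eq_true_eq]; omega)
        · rw [if_neg hj']
          split <;> exact decide_eq_decide.mpr (by omega)
      have e3 : (if i ≤ 1 then decide (j ≤ p - 1) else decide (j ≤ p - 2)) = false := by
        split <;> (simp only [decide_eq_false_iff_not]; omega)
      rw [e1, e3]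
      cases hX : (if i ≤ 1 then decide (j ≤ p) else decide (j ≤ p - 1)) <;> simp [hX]

lemma sweepB {m n : ℕ} (hm : 1 ≤ m) (hn : n = 4 * m + 1) :
    sdsMap (SG m n) (fun _ => 1) (fun _ => 3) (List.finRange n)
      (fun v => xst m 1 0 v.val) = fun v => xst m 0 m v.val := by
  apply sweep
  intro k s hs
  show localStep (SG m n) (fun _ => 1) (fun _ => 3) s k k = xst m 0 m k.val
  rcases rep hm hn k with h0 | ⟨i, j, hi, hj1, hjm, hk⟩
  · rw [h0, xst_zero]
    have h1n : (1 : ℕ) < n := by omega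
    have hmn : m + 1 < n := by omega
    refine center_case hm hn k h0 s ⟨1, h1n⟩ ⟨m + 1, hmn⟩ (show (1 : ℕ) ≠ m + 1 by omega)
      (Or.inl rfl) (Or.inr (Or.inl rfl)) ?_ ?_ ?_
    · rw [hs ⟨1, h1n⟩, if_neg (by omega)]
      exact xst_one hm 1 0 le_rfl
    · rw [hs ⟨m + 1, hmn⟩, if_neg (by omega)]
      exact xst_m1 hm 1 0 le_rfl
    · rw [hs k, if_neg (by omega), h0, xst_zero]
  · refine arm_master hm hn 1 0 0 m k i j hi hj1 hjm hk s hs ?_ ?_ <;>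
    · intro h'
      split_ifs <;>
        (try simp only [decide_eq_true_eq, Bool.not_eq_true, decide_eq_false_iff_not] at *) <;>
        first
          | rfl
          | omega
          | (rw [Bool.eq_iff_iff]; simp; omega)
          | (rw [Bool.eq_iff_iff]; simp)

lemma sweepC {m n : ℕ} (hm : 1 ≤ m) (hn : n = 4 * m + 1) :
    sdsMap (SG m n) (fun _ => 1) (fun _ => 3) (List.finRange n)
      (fun v => xst m 0 m v.val) = fun v => xst m m (m - 1) v.val := by
  apply sweep
  intro k s hs
  show localStep (SG m n) (fun _ => 1) (fun _ => 3) s k k = xst m m (m - 1) k.val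
  rcases rep hm hn k with h0 | ⟨i, j, hi, hj1, hjm, hk⟩
  · rw [h0, xst_zero]
    have h2n : 2 * m + 1 < n := by omega
    have h3n : 3 * m + 1 < n := by omega
    refine center_case hm hn k h0 s ⟨2 * m + 1, h2n⟩ ⟨3 * m + 1, h3n⟩
      (show 2 * m + 1 ≠ 3 * m + 1 by omega)
      (Or.inr (Or.inr (Or.inl rfl))) (Or.inr (Or.inr (Or.inr rfl))) ?_ ?_ ?_
    · rw [hs ⟨2 * m + 1, h2n⟩, if_neg (by omega)]
      exact xst_2m1 hm 0 m hm
    · rw [hs ⟨3 * m + 1, h3n⟩, if_neg (by omega)]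
      exact xst_3m1 hm 0 m hm
    · rw [hs k, if_neg (by omega), h0, xst_zero]
  · refine arm_master hm hn 0 m m (m - 1) k i j hi hj1 hjm hk s hs ?_ ?_ <;>
    · intro h'
      split_ifs <;>
        (try simp only [decide_eq_true_eq, Bool.not_eq_true, decide_eq_false_iff_not] at *) <;>
        first
          | rfl
          | omega
          | (rw [Bool.eq_iff_iff]; simp; omega)
          | (rw [Bool.eq_iff_iff]; simp)

lemma adj_par {m n : ℕ} (v : Fin n) (h0 : v.val ≠ 0) (w : Fin n)
    (hw : w.val = par m v.val) : (SG m n).Adj w v :=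
  Or.inr ⟨Nat.pos_of_ne_zero h0, hw⟩

lemma connected {m n : ℕ} (hm : 1 ≤ m) (hn : n = 4 * m + 1) : (SG m n).Connected := by
  have h0 : 0 < n := by omega
  rw [SimpleGraph.connected_iff]
  refine ⟨?_, ⟨⟨0, h0⟩⟩⟩
  have reach : ∀ a : ℕ, ∀ v : Fin n, v.val = a → (SG m n).Reachable ⟨0, h0⟩ v := by
    intro a
    induction a using Nat.strong_induction_on with
    | _ a ih =>
      intro v hv
      by_cases hz : v.val = 0
      · have : v = ⟨0, h0⟩ := Fin.ext hz
        rw [this]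
      · have hlt : par m v.val < v.val := par_lt (Nat.pos_of_ne_zero hz)
        have hwlt : par m v.val < n := lt_trans hlt v.isLt
        have hadj : (SG m n).Adj ⟨par m v.val, hwlt⟩ v := adj_par v hz _ rfl
        exact (ih (par m v.val) (by omega) ⟨par m v.val, hwlt⟩ rfl).trans hadj.reachable
  intro u v
  exact ((reach u.val u rfl).symm).trans (reach v.val v rfl)

lemma par_iter_le (m : ℕ) : ∀ (k a : ℕ), (par m)^[k] a ≤ a := by
  intro k
  induction k with
  | zero => intro a; simp
  | succ k ihk =>
    intro a
    rw [Function.iterate_succ_apply]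
    have h1 := ihk (par m a)
    have h2 := par_le m a
    omega

lemma walk_uses_edge {m n : ℕ} (v w : Fin n) (hv : 0 < v.val) (hw : w.val = par m v.val)
    (p : (SG m n).Walk v w) : s(v, w) ∈ p.edges := by
  have hvS : v ∈ {u : Fin n | ∃ k, (par m)^[k] u.val = v.val} := ⟨0, rfl⟩
  have hwS : w ∉ {u : Fin n | ∃ k, (par m)^[k] u.val = v.val} := by
    rintro ⟨k, hk⟩
    have h1 := par_iter_le m k w.val
    have h2 := par_le m v.val
    omega
  obtain ⟨d, hd, hdfst, hdsnd⟩ := p.exists_boundary_dart _ hvS hwS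
  have hedge : d.toProd.1 = v ∧ d.toProd.2 = w := by
    rcases d.adj with ⟨h1, h2⟩ | ⟨h1, h2⟩
    · obtain ⟨k, hk⟩ := hdfst
      cases k with
      | zero =>
        simp only [Function.iterate_zero_apply] at hk
        have hfst : d.toProd.1 = v := Fin.ext hk
        refine ⟨hfst, Fin.ext ?_⟩
        rw [h2, hk, ← hw]
      | succ k =>
        exfalso
        apply hdsnd
        refine ⟨k, ?_⟩
        rw [h2]
        rw [Function.iterate_succ_apply] at hk
        exact hk
    · exfalso
      apply hdsnd
      obtain ⟨k, hk⟩ := hdfst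
      refine ⟨k + 1, ?_⟩
      rw [Function.iterate_succ_apply, ← h2]
      exact hk
  have : s(v, w) = d.edge := by
    unfold SimpleGraph.Dart.edge
    rw [← hedge.1, ← hedge.2]
  rw [this]
  exact List.mem_map_of_mem hd

lemma acyclic {m n : ℕ} (hm : 1 ≤ m) (hn : n = 4 * m + 1) : (SG m n).IsAcyclic := by
  rw [SimpleGraph.isAcyclic_iff_forall_adj_isBridge]
  intro v w hadj
  rw [SimpleGraph.isBridge_iff_adj_and_forall_walk_mem_edges]
  intro p
  rcases hadj with ⟨hv, hw⟩ | ⟨hw, hv⟩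
  · exact walk_uses_edge v w hv hw p
  · have := walk_uses_edge w v hw hv p.reverse
    rw [SimpleGraph.Walk.edges_reverse, List.mem_reverse] at this
    rwa [Sym2.eq_swap] at this

lemma isTree {m n : ℕ} (hm : 1 ≤ m) (hn : n = 4 * m + 1) : (SG m n).IsTree :=
  ⟨connected hm hn, acyclic hm hn⟩

lemma xst_two {m : ℕ} (hm : 2 ≤ m) (p q : ℕ) : xst m p q 2 = decide (2 ≤ p) := by
  unfold xst
  rw [if_neg (by omega), if_pos (by omega)]
  rw [show (2 : ℕ) - 1 = 1 from rfl, Nat.mod_eq_of_lt (show 1 < m by omega)]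

lemma xst_2m1' {m : ℕ} (hm : 1 ≤ m) (p q : ℕ) : xst m p q (2 * m + 1) = decide (1 ≤ q) := by
  rw [xst_arm hm p q 2 1 (by omega) le_rfl hm, if_neg (by omega)]

end SpiderAux


/-- for every integer `c ≥ 2` there exist a tree `X` on `n = 4c - 3`
vertices and a permutation `π` of its vertices (given as a duplicate-free list containing
every vertex) such that the bi-threshold SDS map over `X` with thresholds
`(kup, kdown) = (1, 3)` at every vertex and update sequence `π` has a periodic orbit of
length `c`. -/
theorem exists_tree_bithreshold_cycle
    (c : ℕ) (hc : 2 ≤ c) :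
    ∃ (G : SimpleGraph (Fin (4 * c - 3))) (π : List (Fin (4 * c - 3))),
      G.IsTree ∧ π.Nodup ∧ (∀ v, v ∈ π) ∧
      ∃ x : Fin (4 * c - 3) → Bool,
        (sdsMap G (fun _ => 1) (fun _ => 3) π)^[c] x = x ∧
        ∀ p : ℕ, 0 < p → p < c → (sdsMap G (fun _ => 1) (fun _ => 3) π)^[p] x ≠ x := by
  have hm : 1 ≤ c - 1 := by omega
  have hn : 4 * c - 3 = 4 * (c - 1) + 1 := by omega
  refine ⟨SpiderAux.SG (c - 1) (4 * c - 3), List.finRange (4 * c - 3),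
    SpiderAux.isTree hm hn, List.nodup_finRange _, fun v => List.mem_finRange v, ?_⟩
  set F := sdsMap (SpiderAux.SG (c - 1) (4 * c - 3)) (fun _ => 1) (fun _ => 3)
    (List.finRange (4 * c - 3)) with hF
  set x : Fin (4 * c - 3) → Bool := fun v => SpiderAux.xst (c - 1) 1 0 v.val with hx
  have traj : ∀ p, 1 ≤ p → p ≤ c →
      F^[p] x = fun v => SpiderAux.xst (c - 1) (if p = 1 then 0 else c + 1 - p)
        (if p = 1 then c - 1 else c - p) v.val := by
    intro p hp1
    induction p, hp1 using Nat.le_induction with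
    | base =>
      intro _
      rw [Function.iterate_one]
      norm_num
      exact SpiderAux.sweepB hm hn
    | succ p hp ih =>
      intro hpc
      rw [Function.iterate_succ_apply', ih (by omega)]
      rcases eq_or_ne p 1 with rfl | hp1'
      · norm_num
        rw [show c + 1 - (1 + 1) = c - 1 by omega, show c - (1 + 1) = c - 1 - 1 by omega,
          hF, SpiderAux.sweepC hm hn]
      · rw [if_neg hp1', if_neg hp1', if_neg (show ¬ (p + 1 : ℕ) = 1 by omega),
          if_neg (show ¬ (p + 1 : ℕ) = 1 by omega)]
        have hA := SpiderAux.sweepA hm hn (c + 1 - p) (by omega) (by omega)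
        rw [show c - p = c + 1 - p - 1 by omega, show c + 1 - (p + 1) = c + 1 - p - 1 by omega,
          show c - (p + 1) = c + 1 - p - 2 by omega, hF, hA]
  refine ⟨x, ?_, ?_⟩
  · rw [traj c (by omega) le_rfl]
    rw [if_neg (show ¬ c = 1 by omega), if_neg (show ¬ c = 1 by omega),
      show c + 1 - c = 1 by omega, show c - c = 0 by omega]
  · intro p hp0 hpc heq
    rw [traj p (by omega) (by omega)] at heq
    rcases eq_or_ne p 1 with rfl | hp1'
    · norm_num at heq
      have h2n : 2 * (c - 1) + 1 < 4 * c - 3 := by omega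
      have hcf := congrFun heq ⟨2 * (c - 1) + 1, h2n⟩
      simp only [hx, SpiderAux.xst_2m1 hm 0 (c - 1) hm, SpiderAux.xst_2m1' hm 1 0] at hcf
      simp at hcf
    · rw [if_neg hp1', if_neg hp1'] at heq
      have hm2 : 2 ≤ c - 1 := by omega
      have h2n : (2 : ℕ) < 4 * c - 3 := by omega
      have hcf := congrFun heq ⟨2, h2n⟩
      simp only [hx, SpiderAux.xst_two hm2] at hcf
      simp only [decide_eq_decide, decide_eq_true_eq] at hcf
      omega
end

section
/- Let X be a finite tree, fix a root r, and for each vertex v ≠ r let p(v) denote its parent (the unique neighbor of v whose distance to r is one less than that of v). Assign every vertex v the thresholds k↑_v = 1 and k↓_v = d(v)+1, where d(v) is the degree of v. Let π be any permutation of the vertices that lists, for every i ≥ 0, all vertices at distance i+1 from r before all vertices at distance i from r. Then for every state x ∈ {0,1}^n and every vertex v ≠ r, the state x' = F_π(x) satisfies x'_v = x_{p(v)}. -/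
open SimpleGraph

/-- In a tree, a vertex has at most one neighbor strictly closer to `r`. -/
lemma tree_down_unique {V : Type*} {G : SimpleGraph V} (hG : G.IsTree) (r : V) {u v w : V}
    (huv : G.Adj u v) (huw : G.Adj u w)
    (hv : G.dist v r < G.dist u r) (hw : G.dist w r < G.dist u r) : v = w := by
  classical
  have hc : G.Connected := hG.isConnected
  obtain ⟨Qv, hQv⟩ := hc.exists_walk_length_eq_dist v r
  obtain ⟨Qw, hQw⟩ := hc.exists_walk_length_eq_dist w r
  set Pv := Qv.toPath with hPv
  set Pw := Qw.toPath with hPw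
  have hlenv : (Pv : G.Walk v r).length ≤ G.dist v r := by
    calc (Pv : G.Walk v r).length ≤ Qv.length := Walk.length_bypass_le _
    _ = _ := hQv
  have hlenw : (Pw : G.Walk w r).length ≤ G.dist w r := by
    calc (Pw : G.Walk w r).length ≤ Qw.length := Walk.length_bypass_le _
    _ = _ := hQw
  have hnv : u ∉ (Pv : G.Walk v r).support := by
    intro hmem
    have h1 : G.dist u r ≤ ((Pv : G.Walk v r).dropUntil u hmem).length := dist_le _
    have h2 := Walk.length_dropUntil_le (Pv : G.Walk v r) hmem
    omega
  have hnw : u ∉ (Pw : G.Walk w r).support := by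
    intro hmem
    have h1 : G.dist u r ≤ ((Pw : G.Walk w r).dropUntil u hmem).length := dist_le _
    have h2 := Walk.length_dropUntil_le (Pw : G.Walk w r) hmem
    omega
  have hCv : (Walk.cons huv (Pv : G.Walk v r)).IsPath := Pv.2.cons hnv
  have hCw : (Walk.cons huw (Pw : G.Walk w r)).IsPath := Pw.2.cons hnw
  have := hG.IsAcyclic.path_unique ⟨Walk.cons huv (Pv : G.Walk v r), hCv⟩
      ⟨Walk.cons huw (Pw : G.Walk w r), hCw⟩
  have h2 := congrArg (fun q : G.Path u r => (q : G.Walk u r).getVert 1) this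
  simpa [Walk.getVert_cons] using h2

/-- In a tree, adjacent vertices have different distances to `r`. -/
lemma tree_adj_dist_ne {V : Type*} {G : SimpleGraph V} (hG : G.IsTree) (r : V) {u v : V}
    (huv : G.Adj u v) : G.dist u r ≠ G.dist v r := by
  classical
  intro heq
  have hc : G.Connected := hG.isConnected
  obtain ⟨Qv, hQv⟩ := hc.exists_walk_length_eq_dist v r
  obtain ⟨Qu, hQu⟩ := hc.exists_walk_length_eq_dist u r
  set Pv := Qv.toPath with hPv
  have hlenv : (Pv : G.Walk v r).length = G.dist v r := by
    have h1 : (Pv : G.Walk v r).length ≤ Qv.length := Walk.length_bypass_le _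
    have h2 : G.dist v r ≤ (Pv : G.Walk v r).length := dist_le _
    omega
  have hnv : u ∉ (Pv : G.Walk v r).support := by
    intro hmem
    have h1 : G.dist u r ≤ ((Pv : G.Walk v r).dropUntil u hmem).length := dist_le _
    have h3 := congrArg Walk.length ((Pv : G.Walk v r).take_spec hmem)
    rw [Walk.length_append] at h3
    have h4 : ((Pv : G.Walk v r).takeUntil u hmem).length ≠ 0 := by
      intro h0
      exact huv.ne (Walk.eq_of_length_eq_zero h0).symm
    omega
  have hCv : (Walk.cons huv (Pv : G.Walk v r)).IsPath := Pv.2.cons hnv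
  have := hG.IsAcyclic.path_unique ⟨Walk.cons huv (Pv : G.Walk v r), hCv⟩ Qu.toPath
  have hlenu : ((Qu.toPath : G.Path u r) : G.Walk u r).length ≤ G.dist u r := by
    calc _ ≤ Qu.length := Walk.length_bypass_le _
    _ = _ := hQu
  have h2 := congrArg (fun q : G.Path u r => (q : G.Walk u r).length) this
  simp only [Walk.length_cons] at h2
  omega

lemma localStep_ne {n : ℕ} (G : SimpleGraph (Fin n)) (kup kd : Fin n → ℕ)
    (y : Fin n → Bool) (a v : Fin n) (h : v ≠ a) :
    localStep G kup kd y a v = y v := by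
  simp [localStep, Function.update_of_ne h]

lemma sdsMap_not_mem {n : ℕ} (G : SimpleGraph (Fin n)) (kup kd : Fin n → ℕ) :
    ∀ (l : List (Fin n)) (y : Fin n → Bool) (v : Fin n), v ∉ l →
      sdsMap G kup kd l y v = y v := by
  intro l
  induction l with
  | nil => intro y v _; rfl
  | cons a t ih =>
    intro y v hv
    simp only [List.mem_cons, not_or] at hv
    have : sdsMap G kup kd (a :: t) y = sdsMap G kup kd t (localStep G kup kd y a) := rfl
    rw [this, ih _ v hv.2, localStep_ne _ _ _ _ _ _ hv.1]

lemma sdsMap_append {n : ℕ} (G : SimpleGraph (Fin n)) (kup kd : Fin n → ℕ)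
    (l₁ l₂ : List (Fin n)) (y : Fin n → Bool) :
    sdsMap G kup kd (l₁ ++ l₂) y = sdsMap G kup kd l₂ (sdsMap G kup kd l₁ y) :=
  List.foldl_append

lemma indexOf_lt_of_mem_take {α : Type*} [DecidableEq α] :
    ∀ (l : List α) (k : ℕ) (a : α), a ∈ l.take k → l.idxOf a < k := by
  intro l
  induction l with
  | nil => simp
  | cons b t ih =>
    intro k a ha
    cases k with
    | zero => simp at ha
    | succ k =>
      simp only [List.take_succ_cons, List.mem_cons] at ha
      rcases ha with rfl | ha
      · simp
      · by_cases hab : a = b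
        · subst hab; simp
        · rw [List.idxOf_cons_ne _ (Ne.symm hab)]
          exact Nat.succ_lt_succ (ih k a ha)

lemma mem_take_of_indexOf_lt {α : Type*} [DecidableEq α] :
    ∀ (l : List α) (k : ℕ) (a : α), a ∈ l → l.idxOf a < k → a ∈ l.take k := by
  intro l
  induction l with
  | nil => simp
  | cons b t ih =>
    intro k a ha hk
    by_cases hab : a = b
    · subst hab
      cases k with
      | zero => simp at hk
      | succ k => simp
    · rw [List.idxOf_cons_ne _ (Ne.symm hab)] at hk
      cases k with
      | zero => omega
      | succ k =>
        simp only [List.take_succ_cons, List.mem_cons]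
        right
        exact ih k a (by simpa [hab] using ha) (by omega)

/-- Let `X` be a finite tree with root `r`, and `p v` the parent of each
vertex `v ≠ r` (the neighbor of `v` one step closer to `r`). Give each vertex `v` the
thresholds `kup v = 1` and `kdown v = d(v) + 1`. If the update sequence `π` lists all
vertices at distance `i + 1` from `r` before all vertices at distance `i` from `r` (for
every `i`), then for every state `x` and every vertex `v ≠ r`, the updated state
`x' = F_π x` satisfies `x'_v = x_{p(v)}`. -/
theorem tree_sds_parent_copy
    (n : ℕ) (G : SimpleGraph (Fin n)) (hG : G.IsTree)
    (r : Fin n) (p : Fin n → Fin n)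
    (hp : ∀ v : Fin n, v ≠ r → G.Adj v (p v) ∧ G.dist (p v) r + 1 = G.dist v r)
    (π : List (Fin n)) (hnd : π.Nodup) (hall : ∀ v, v ∈ π)
    (horder : ∀ u w : Fin n, G.dist w r < G.dist u r → π.idxOf u < π.idxOf w)
    (x : Fin n → Bool) (v : Fin n) (hv : v ≠ r) :
    sdsMap G (fun _ => 1) (fun u => (G.neighborSet u).ncard + 1) π x v = x (p v) := by
  classical
  set kup : Fin n → ℕ := fun _ => 1 with hkup
  set kd : Fin n → ℕ := fun u => (G.neighborSet u).ncard + 1 with hkd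
  have hc : G.Connected := hG.isConnected
  have key : ∀ j : ℕ, ∀ w : Fin n, w ≠ r → π.idxOf w < j →
      sdsMap G kup kd (π.take j) x w = x (p w) := by
    intro j
    induction j using Nat.strong_induction_on with
    | _ j IH =>
      intro w hw hwj
      set iv := π.idxOf w with hiv
      have hivlen : iv < π.length := List.idxOf_lt_length_iff.mpr (hall w)
      -- w is not in the part of π.take j after position iv+1
      have hwdrop : w ∉ π.drop (iv + 1) := by
        have hmemtake : w ∈ π.take (iv + 1) :=
          mem_take_of_indexOf_lt π (iv + 1) w (hall w) (by omega)
        have hnd2 : (π.take (iv + 1) ++ π.drop (iv + 1)).Nodup := by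
          rw [List.take_append_drop]; exact hnd
        exact fun hmem => ((List.nodup_append.mp hnd2).2.2 w hmemtake w hmem) rfl
      -- split π.take j
      have hsplit1 : π.take j = π.take (iv + 1) ++ (π.take j).drop (iv + 1) := by
        conv_lhs => rw [← List.take_append_drop (iv + 1) (π.take j)]
        rw [List.take_take, min_eq_left (by omega)]
      have step1 : sdsMap G kup kd (π.take j) x w
          = sdsMap G kup kd (π.take (iv + 1)) x w := by
        rw [hsplit1, sdsMap_append]
        refine sdsMap_not_mem G kup kd _ _ w ?_
        intro hmem
        rw [List.drop_take] at hmem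
        exact hwdrop (List.mem_of_mem_take hmem)
      have hsplit2 : π.take (iv + 1) = π.take iv ++ [w] := by
        have hget : π[iv] = w := List.getElem_idxOf hivlen
        rw [List.take_succ, List.getElem?_eq_getElem hivlen, hget]
        rfl
      set y : Fin n → Bool := sdsMap G kup kd (π.take iv) x with hy
      have step2 : sdsMap G kup kd (π.take (iv + 1)) x w = localStep G kup kd y w w := by
        rw [hsplit2, sdsMap_append]; rfl
      -- properties of y
      have hyw : y w = x w := by
        refine sdsMap_not_mem G kup kd _ _ w ?_
        intro hmem
        exact absurd (indexOf_lt_of_mem_take π iv w hmem) (by omega)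
      have hpdist := (hp w hw).2
      have hpadj : G.Adj w (p w) := (hp w hw).1
      have hyp : y (p w) = x (p w) := by
        refine sdsMap_not_mem G kup kd _ _ (p w) ?_
        intro hmem
        have h1 := indexOf_lt_of_mem_take π iv (p w) hmem
        have h2 := horder w (p w) (by omega)
        omega
      have hchild : ∀ u : Fin n, G.Adj w u → u ≠ p w → y u = x w := by
        intro u hadj hne
        have hne1 : G.dist u r ≠ G.dist w r := tree_adj_dist_ne hG r hadj.symm
        have hle : G.dist u r ≤ G.dist w r + 1 := by
          have := hc.dist_triangle (u := u) (v := w) (w := r)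
          have h1 : G.dist u w = 1 := dist_eq_one_iff_adj.mpr hadj.symm
          omega
        have hgt : G.dist u r = G.dist w r + 1 := by
          by_cases hlt : G.dist u r < G.dist w r
          · exact absurd (tree_down_unique hG r hadj hpadj hlt (by omega)) hne
          · omega
        have hur : u ≠ r := by
          intro h0; rw [h0] at hgt
          simp [SimpleGraph.dist_self] at hgt
        have hpu : p u = w :=
          tree_down_unique hG r (hp u hur).1 hadj.symm
            (by have := (hp u hur).2; omega) (by omega)
        have hidx : π.idxOf u < iv := horder u w (by omega)
        have := IH iv hwj u hur hidx
        rw [← hy] at this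
        rw [this, hpu]
      -- compute the local step
      rw [step1, step2]
      have hupd : localStep G kup kd y w w
          = (if y w = true then (if sigmaLoc G y w < kd w then false else true)
             else (if kup w ≤ sigmaLoc G y w then true else false)) := by
        simp [localStep]
      rw [hupd, hyw]
      have hdpos : 0 < (G.neighborSet w).ncard :=
        (Set.ncard_pos (Set.toFinite _)).mpr ⟨p w, hpadj⟩
      have hmem : p w ∈ G.neighborSet w := hpadj
      cases hxw : x w <;> cases hxp : x (p w)
      · -- x w = false, x (p w) = false : S = ∅
        have hS : {u : Fin n | G.Adj w u ∧ y u = true} = ∅ := by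
          ext u
          simp only [Set.mem_setOf_eq, Set.mem_empty_iff_false, iff_false, not_and]
          intro hadj
          by_cases hupw : u = p w
          · rw [hupw, hyp, hxp]; simp
          · rw [hchild u hadj hupw, hxw]; simp
        have hsig : sigmaLoc G y w = 0 := by
          rw [sigmaLoc, hS, hyw, hxw]; simp
        simp [hsig, hkup]
      · -- x w = false, x (p w) = true : S = {p w}
        have hS : {u : Fin n | G.Adj w u ∧ y u = true} = {p w} := by
          ext u
          simp only [Set.mem_setOf_eq, Set.mem_singleton_iff]
          constructor
          · rintro ⟨hadj, hyu⟩
            by_contra hupw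
            rw [hchild u hadj hupw, hxw] at hyu
            exact Bool.false_ne_true hyu
          · rintro rfl
            exact ⟨hpadj, by rw [hyp, hxp]⟩
        have hsig : sigmaLoc G y w = 1 := by
          rw [sigmaLoc, hS, hyw, hxw]; simp
        simp [hsig, hkup]
      · -- x w = true, x (p w) = false : S = N(w) \ {p w}
        have hS : {u : Fin n | G.Adj w u ∧ y u = true} = G.neighborSet w \ {p w} := by
          ext u
          simp only [Set.mem_setOf_eq, Set.mem_diff, SimpleGraph.mem_neighborSet,
            Set.mem_singleton_iff]
          constructor
          · rintro ⟨hadj, hyu⟩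
            refine ⟨hadj, ?_⟩
            rintro rfl
            rw [hyp, hxp] at hyu
            exact Bool.false_ne_true hyu
          · rintro ⟨hadj, hupw⟩
            exact ⟨hadj, by rw [hchild u hadj hupw, hxw]⟩
        have hsig : sigmaLoc G y w = (G.neighborSet w).ncard := by
          rw [sigmaLoc, hS, Set.ncard_diff_singleton_of_mem hmem, hyw, hxw]
          simp
          omega
        have hkdw : kd w = (G.neighborSet w).ncard + 1 := rfl
        rw [if_pos rfl, hsig, hkdw, if_pos (by omega)]
      · -- x w = true, x (p w) = true : S = N(w)
        have hS : {u : Fin n | G.Adj w u ∧ y u = true} = G.neighborSet w := by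
          ext u
          simp only [Set.mem_setOf_eq, SimpleGraph.mem_neighborSet]
          constructor
          · exact fun h => h.1
          · intro hadj
            refine ⟨hadj, ?_⟩
            by_cases hupw : u = p w
            · rw [hupw, hyp, hxp]
            · rw [hchild u hadj hupw, hxw]
        have hsig : sigmaLoc G y w = (G.neighborSet w).ncard + 1 := by
          rw [sigmaLoc, hS, hyw, hxw]; simp
        have hkdw : kd w = (G.neighborSet w).ncard + 1 := rfl
        rw [if_pos rfl, hsig, hkdw, if_neg (by omega)]
  have hfinal := key π.length v hv (List.idxOf_lt_length_iff.mpr (hall v))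
  rwa [List.take_length] at hfinal
end
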